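/- arXiv:1408.3708 — 12 statements merged into one kernel-verified Lean document; each statement's English description precedes it below -/
import Mathlib

section
/- Let N ≥ 1 and r ≥ 1 be integers and let x = x₁ + ⋯ + x_r. Define polynomials A_r^{(N)}(i, x; s) ∈ ℚ[x, s] (for 0 ≤ i ≤ r − 1) by the recurrence A_1^{(N)}(0, x; s) = 1 and, for r ≥ 2, A_r^{(N)}(i, x; s) = ((s − 1)/(r − 1))·A_{r−1}^{(N)}(i, x; s − N) − ((x − (r − 1))/(r − 1))·A_{r−1}^{(N)}(i − 1, x; s − N + 1), where A_r^{(N)}(i, x; s) is defined to be 0 for i ≤ −1 and for i ≥ r. Then for every integer n ≥ r − 1 and all rational numbers x₁, …, x_r, one has ∑_{i₁,…,i_r ≥ 0, i₁+⋯+i_r = n} (n!/(i₁!⋯i_r!)) B_{N,i₁}(x₁) ⋯ B_{N,i_r}(x_r) = (1/N^{r−1}) ∑_{i=0}^{r−1} A_r^{(N)}(i, x; 1 + N(r−1) − n) · (−1)^i · C(n, i) · i! · B_{N,n−i}(x), where x = x₁ + ⋯ + x_r. -/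
open Finset

section HG
open PowerSeries

/-- The polynomials `A_r^{(N)}(i, x; s)` of Theorem 2 (sums of products of hypergeometric
Bernoulli polynomials), realized as functions of `x` and `s`.  They satisfy
`A_1^{(N)}(0,x;s) = 1`, vanish for `i ≤ -1` and `i ≥ r`, and obey the recurrence
`A_r^{(N)}(i,x;s) = ((s-1)/(r-1))·A_{r-1}^{(N)}(i,x;s-N)
  - ((x-(r-1))/(r-1))·A_{r-1}^{(N)}(i-1,x;s-N+1)` for `r ≥ 2`. -/
noncomputable def hgA (N : ℕ) : ℕ → ℤ → ℚ → ℚ → ℚ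
  | 0, _, _, _ => 0
  | 1, i, _, _ => if i = 0 then 1 else 0
  | (r + 2), i, x, s =>
      ((s - 1) / ((r : ℚ) + 1)) * hgA N (r + 1) i x (s - N)
        - ((x - ((r : ℚ) + 1)) / ((r : ℚ) + 1)) * hgA N (r + 1) (i - 1) x (s - N + 1)

lemma hgA_neg (N : ℕ) : ∀ (r : ℕ) (i : ℤ), i < 0 → ∀ x s, hgA N r i x s = 0
  | 0, i, hi, x, s => rfl
  | 1, i, hi, x, s => by simp [hgA, hi.ne]
  | (r + 2), i, hi, x, s => by
      rw [hgA, hgA_neg N (r+1) i hi, hgA_neg N (r+1) (i-1) (by omega)]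
      ring

lemma hgA_ge (N : ℕ) : ∀ (r : ℕ) (i : ℤ), (r : ℤ) ≤ i → ∀ x s, hgA N r i x s = 0
  | 0, i, hi, x, s => rfl
  | 1, i, hi, x, s => by push_cast at hi; rw [hgA, if_neg (by omega)]
  | (r + 2), i, hi, x, s => by
      rw [hgA, hgA_ge N (r+1) i (by push_cast; omega) , hgA_ge N (r+1) (i-1) (by push_cast at hi ⊢; omega)]
      ring

/-- The series `F = e^t - T_{N-1}(t)`. -/
noncomputable def hgE (N : ℕ) : PowerSeries ℚ :=
  PowerSeries.mk fun m => if N ≤ m then ((m.factorial : ℚ))⁻¹ else 0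

/-- The series `∑ B_n(c) t^n/n!`. -/
noncomputable def hgb (B : ℕ → Polynomial ℚ) (c : ℚ) : PowerSeries ℚ :=
  PowerSeries.mk fun n => (B n).eval c / n.factorial

lemma hgE_ne_zero (N : ℕ) : hgE N ≠ 0 := fun h => by
  have := congrArg (coeff N) h
  simp [hgE, Nat.factorial_ne_zero] at this

lemma hgb_mul_hgE (N : ℕ) (B : ℕ → Polynomial ℚ)
    (hB : ∀ m : ℕ, ∑ k ∈ Finset.range (m + 1),
        (if N ≤ m - k then ((k.factorial * (m - k).factorial : ℚ))⁻¹ • B k else 0)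
      = if N ≤ m then ((N.factorial * (m - N).factorial : ℚ))⁻¹ • (Polynomial.X ^ (m - N))
        else 0) (c : ℚ) :
    hgb B c * hgE N = X ^ N * rescale c (exp ℚ) * PowerSeries.C ((N.factorial : ℚ))⁻¹ := by
  ext m
  have h := congrArg (Polynomial.eval c) (hB m)
  simp only [Polynomial.eval_finset_sum, apply_ite (Polynomial.eval c), Polynomial.eval_smul,
    Polynomial.eval_zero, Polynomial.eval_pow, Polynomial.eval_X, smul_eq_mul] at h
  rw [coeff_mul, Nat.sum_antidiagonal_eq_sum_range_succ_mk]
  rw [PowerSeries.coeff_mul_C, coeff_X_pow_mul']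
  calc ∑ k ∈ Finset.range (m+1), coeff k (hgb B c) * coeff (m - k) (hgE N)
      = ∑ k ∈ Finset.range (m + 1),
        (if N ≤ m - k then ((k.factorial * (m - k).factorial : ℚ))⁻¹ * (B k).eval c else 0) := by
        refine Finset.sum_congr rfl fun k _ => ?_
        simp only [hgb, hgE, coeff_mk, mul_ite, mul_zero]
        refine if_congr Iff.rfl ?_ rfl
        rw [mul_inv]; ring
    _ = _ := by
        rw [h]
        split_ifs with hNm
        · rw [coeff_rescale, coeff_exp]
          have := Nat.factorial_ne_zero N
          have := Nat.factorial_ne_zero (m - N)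
          push_cast
          rw [mul_inv]
          field_simp
        · simp
lemma derivative_hgE (ν : ℕ) :
    d⁄dX ℚ (hgE (ν+1)) = hgE (ν+1) + PowerSeries.C ((ν.factorial : ℚ))⁻¹ * X ^ ν := by
  ext n
  rw [coeff_derivative]
  simp only [hgE, coeff_mk, map_add, coeff_C_mul, coeff_X_pow]
  rcases lt_trichotomy n ν with h | h | h
  · rw [if_neg (by omega), if_neg (by omega), if_neg (by omega)]; ring
  · subst h
    rw [if_pos (by omega), if_neg (by omega), if_pos rfl, Nat.factorial_succ]
    have := Nat.factorial_ne_zero n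
    push_cast
    rw [mul_inv]
    field_simp
    simp
  · rw [if_pos (by omega), if_pos (by omega), if_neg (by omega)]
    obtain ⟨j, rfl⟩ : ∃ j, n = j + 1 := ⟨n-1, by omega⟩
    rw [Nat.factorial_succ]
    have := Nat.factorial_ne_zero j
    push_cast
    rw [mul_inv]
    field_simp
    simp

lemma coeff_X_mul_derivative (f : PowerSeries ℚ) (n : ℕ) :
    PowerSeries.coeff n (X * d⁄dX ℚ f) = n * PowerSeries.coeff n f := by
  cases n with
  | zero => simp
  | succ k => rw [PowerSeries.coeff_succ_X_mul, coeff_derivative]; push_cast; ring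

lemma X_mul_derivative_X_pow (k : ℕ) :
    X * d⁄dX ℚ (X ^ k : PowerSeries ℚ) = PowerSeries.C (k : ℚ) * X ^ k := by
  ext n
  rw [coeff_X_mul_derivative, coeff_C_mul, coeff_X_pow]
  rcases eq_or_ne n k with rfl | h
  · simp
  · simp [h]

lemma derivative_rescale_exp (c : ℚ) :
    d⁄dX ℚ (rescale c (exp ℚ)) = PowerSeries.C c * rescale c (exp ℚ) := by
  ext n
  rw [coeff_derivative, coeff_C_mul, coeff_rescale, coeff_rescale, coeff_exp, coeff_exp]
  have h1 := Nat.factorial_ne_zero n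
  rw [Nat.factorial_succ]
  push_cast
  field_simp
  ring
lemma hg_step (ν m : ℕ) (x : ℚ) (P : PowerSeries ℚ)
    (hP : P * (hgE (ν+1))^(m+1)
        = X^((ν+1)*(m+1)) * rescale x (exp ℚ)
            * PowerSeries.C ((((ν+1).factorial : ℚ))⁻¹ ^ (m+1))) :
    (PowerSeries.C (((ν:ℚ)+1) * ((m:ℚ)+1)) * P - X * d⁄dX ℚ P
        + PowerSeries.C (x - ((m:ℚ)+1)) * X * P) * (hgE (ν+1))^(m+2)
      = PowerSeries.C (((m:ℚ)+1) * ((ν:ℚ)+1))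
          * (X^((ν+1)*(m+2)) * rescale x (exp ℚ)
              * PowerSeries.C ((((ν+1).factorial : ℚ))⁻¹ ^ (m+2))) := by
  set E := hgE (ν+1) with hE
  set ex := rescale x (exp ℚ) with hex
  set D := d⁄dX ℚ P with hD
  set dE := d⁄dX ℚ E with hdE'
  set k : ℕ := (ν+1)*(m+1) with hk
  set i : ℚ := (((ν+1).factorial : ℚ))⁻¹ with hi
  -- derivative of the RHS of hP
  have h2 : X * d⁄dX ℚ (X^k * ex * PowerSeries.C (i^(m+1)))
      = PowerSeries.C ((ν:ℚ)+1) * PowerSeries.C ((m:ℚ)+1)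
          * (X^k * ex * PowerSeries.C (i^(m+1)))
        + PowerSeries.C x * X * (X^k * ex * PowerSeries.C (i^(m+1))) := by
    rw [Derivation.leibniz, Derivation.leibniz, derivative_C, derivative_rescale_exp]
    have hck : PowerSeries.C ((k:ℕ) : ℚ)
        = PowerSeries.C ((ν:ℚ)+1) * PowerSeries.C ((m:ℚ)+1) := by
      rw [← map_mul]; congr 1; push_cast [hk]; ring
    have := X_mul_derivative_X_pow k
    rw [hck] at this
    simp only [smul_eq_mul, smul_zero, mul_zero, zero_add]
    linear_combination (ex * PowerSeries.C (i^(m+1))) * this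
  -- differentiate hP
  have dH : d⁄dX ℚ (P * E^(m+1)) = d⁄dX ℚ (X^k * ex * PowerSeries.C (i^(m+1))) :=
    congrArg _ hP
  have hd1 : d⁄dX ℚ (P * E^(m+1))
      = P * (PowerSeries.C ((m:ℚ)+1) * (E^m * dE)) + E^(m+1) * D := by
    rw [Derivation.leibniz, Derivation.leibniz_pow]
    simp only [smul_eq_mul, nsmul_eq_mul, Nat.add_sub_cancel]
    have : ((m+1 : ℕ) : PowerSeries ℚ) = PowerSeries.C ((m:ℚ)+1) := by
      rw [← map_natCast (PowerSeries.C (R := ℚ)) (m+1)]; congr 1; push_cast; ring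
    rw [this]
  rw [hd1] at dH
  have H2 : X * E * (P * (PowerSeries.C ((m:ℚ)+1) * (E^m * dE)) + E^(m+1) * D)
      = E * (PowerSeries.C ((ν:ℚ)+1) * PowerSeries.C ((m:ℚ)+1)
          * (X^k * ex * PowerSeries.C (i^(m+1)))
        + PowerSeries.C x * X * (X^k * ex * PowerSeries.C (i^(m+1)))) := by
    rw [dH]
    linear_combination E * h2
  have H3 : dE = E + PowerSeries.C ((ν.factorial : ℚ))⁻¹ * X ^ ν := derivative_hgE ν
  have hb : PowerSeries.C ((ν.factorial : ℚ))⁻¹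
      = PowerSeries.C ((ν:ℚ)+1) * PowerSeries.C i := by
    rw [← map_mul]; congr 1
    rw [hi, Nat.factorial_succ]
    have := Nat.factorial_ne_zero ν
    push_cast
    rw [mul_inv]
    field_simp
  rw [hb] at H3
  -- massage the goal
  have hgoal1 : (ν+1)*(m+2) = (ν+1) + (ν+1)*(m+1) := by ring
  have hs1 : PowerSeries.C (((ν:ℚ)+1) * ((m:ℚ)+1))
      = PowerSeries.C ((ν:ℚ)+1) * PowerSeries.C ((m:ℚ)+1) := map_mul _ _ _
  have hs2 : PowerSeries.C (((m:ℚ)+1) * ((ν:ℚ)+1))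
      = PowerSeries.C ((m:ℚ)+1) * PowerSeries.C ((ν:ℚ)+1) := map_mul _ _ _
  have hs3 : PowerSeries.C (x - ((m:ℚ)+1))
      = PowerSeries.C x - PowerSeries.C ((m:ℚ)+1) := map_sub _ _ _
  rw [hgoal1, pow_add X (ν+1) k, show i ^ (m+2) = i^(m+1) * i from by ring,
    map_mul (PowerSeries.C) (i^(m+1)) i]
  linear_combination ((PowerSeries.C ((m:ℚ)+1) * PowerSeries.C ((ν:ℚ)+1)
      + PowerSeries.C x * X) * E) * hP
    - H2
    + (PowerSeries.C ((m:ℚ)+1) * X * P * E^(m+1)) * H3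
    + (PowerSeries.C ((m:ℚ)+1) * PowerSeries.C ((ν:ℚ)+1) * PowerSeries.C i * X^(ν+1)) * hP
    + (P * E^(m+2)) * hs1
    + (X * P * E^(m+2)) * hs3
    - (X^(ν+1) * X^k * ex * (PowerSeries.C (i^(m+1)) * PowerSeries.C i)) * hs2
noncomputable def hgS (N : ℕ) (B : ℕ → Polynomial ℚ) (x : ℚ) (r n : ℕ) : ℚ :=
  (1/(N:ℚ)^(r-1)) * ∑ i ∈ Finset.range r,
    hgA N r (i : ℤ) x (1 + (N:ℚ)*((r:ℚ)-1) - (n:ℚ)) * (-1)^i * (n.choose i : ℚ)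
      * (i.factorial : ℚ) * (B (n-i)).eval x

lemma choose_key (n i : ℕ) : n.choose (i+1) * (i+1) = n * (n-1).choose i := by
  cases n with
  | zero => simp
  | succ j => rw [← Nat.add_one_mul_choose_eq]; simp [Nat.succ_eq_add_one, mul_comm]

lemma hgS_rec (N : ℕ) (hN : 1 ≤ N) (B : ℕ → Polynomial ℚ) (x : ℚ) (m n : ℕ) :
    ((m:ℚ)+1) * (N:ℚ) * hgS N B x (m+2) n
      = ((N:ℚ)*((m:ℚ)+1) - (n:ℚ)) * hgS N B x (m+1) n
        + (n:ℚ) * (x - ((m:ℚ)+1)) * hgS N B x (m+1) (n-1) := by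
  have hm : ((m:ℚ)+1) ≠ 0 := by positivity
  have hNq : (N:ℚ) ≠ 0 := by exact_mod_cast (Nat.pos_of_ne_zero (by omega)).ne'
  simp only [hgS, Nat.add_sub_cancel]
  set s : ℚ := 1 + (N:ℚ)*(((m+2:ℕ):ℚ)-1) - (n:ℚ) with hs
  have key : ∀ i : ℤ, hgA N (m+2) i x s
      = ((s-1)/((m:ℚ)+1)) * hgA N (m+1) i x (s - N)
        - ((x-((m:ℚ)+1))/((m:ℚ)+1)) * hgA N (m+1) (i-1) x (s - N + 1) := fun i => by
    rw [hgA]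
  have h1 : ∑ i ∈ Finset.range (m+2),
        hgA N (m+2) (i : ℤ) x s * (-1)^i * (n.choose i : ℚ)
          * (i.factorial : ℚ) * (B (n-i)).eval x
      = ((s-1)/((m:ℚ)+1)) * ∑ i ∈ Finset.range (m+1),
          hgA N (m+1) (i : ℤ) x (s - N) * (-1)^i * (n.choose i : ℚ)
            * (i.factorial : ℚ) * (B (n-i)).eval x
        - ((x-((m:ℚ)+1))/((m:ℚ)+1)) * ∑ i ∈ Finset.range (m+1),
          hgA N (m+1) (i : ℤ) x (s - N + 1) * (-1)^(i+1) * (n.choose (i+1) : ℚ)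
            * ((i+1).factorial : ℚ) * (B (n-(i+1))).eval x := by
    calc ∑ i ∈ Finset.range (m+2),
        hgA N (m+2) (i : ℤ) x s * (-1)^i * (n.choose i : ℚ)
          * (i.factorial : ℚ) * (B (n-i)).eval x
        = ∑ i ∈ Finset.range (m+2),
          (((s-1)/((m:ℚ)+1)) * (hgA N (m+1) (i : ℤ) x (s - N) * (-1)^i * (n.choose i : ℚ)
            * (i.factorial : ℚ) * (B (n-i)).eval x)
          - ((x-((m:ℚ)+1))/((m:ℚ)+1)) * (hgA N (m+1) ((i:ℤ)-1) x (s - N + 1) * (-1)^i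
            * (n.choose i : ℚ) * (i.factorial : ℚ) * (B (n-i)).eval x)) := by
          refine Finset.sum_congr rfl fun i _ => ?_
          rw [key]; ring
      _ = _ := by
          rw [Finset.sum_sub_distrib, Finset.mul_sum, Finset.mul_sum]
          congr 1
          · rw [Finset.sum_range_succ,
              hgA_ge N (m+1) (((m+1:ℕ)) : ℤ) (by push_cast; omega)]
            simp
          · rw [Finset.sum_range_succ',
              hgA_neg N (m+1) (((0:ℕ):ℤ)-1) (by omega)]
            simp only [mul_zero, zero_mul, add_zero]
            refine Finset.sum_congr rfl fun i _ => ?_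
            have hcast : (((i+1:ℕ)):ℤ) - 1 = (i:ℤ) := by push_cast; ring
            rw [hcast]
  have h2 : ∑ i ∈ Finset.range (m+1),
        hgA N (m+1) (i : ℤ) x (s - N + 1) * (-1)^(i+1) * (n.choose (i+1) : ℚ)
          * ((i+1).factorial : ℚ) * (B (n-(i+1))).eval x
      = -((n:ℚ) * ∑ i ∈ Finset.range (m+1),
          hgA N (m+1) (i : ℤ) x (1 + (N:ℚ)*(((m+1:ℕ):ℚ)-1) - ((n-1 : ℕ):ℚ)) * (-1)^i
            * ((n-1).choose i : ℚ) * (i.factorial : ℚ) * (B ((n-1)-i)).eval x) := by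
    cases n with
    | zero => simp
    | succ j =>
        rw [Finset.mul_sum, ← Finset.sum_neg_distrib]
        refine Finset.sum_congr rfl fun i _ => ?_
        have harg : s - N + 1 = 1 + (N:ℚ)*(((m+1:ℕ):ℚ)-1) - (((j+1)-1 : ℕ):ℚ) := by
          rw [hs]; push_cast; ring
        have hsub : (j+1) - (i+1) = ((j+1)-1) - i := by omega
        have hch : ((j+1).choose (i+1) : ℚ) * ((i+1).factorial : ℚ)
            = ((j+1 : ℕ):ℚ) * (((j+1)-1).choose i : ℚ) * (i.factorial : ℚ) := by
          have h := choose_key (j+1) i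
          have h2 : (j+1).choose (i+1) * ((i+1).factorial) = ((j+1) * ((j+1)-1).choose i) * i.factorial := by
            rw [Nat.factorial_succ, ← mul_assoc, h]
          exact_mod_cast h2
        rw [harg, hsub]
        push_cast at hch ⊢
        linear_combination (-(hgA N (m+1) (i:ℤ) x (1 + (N:ℚ)*((m:ℚ)+1-1) - (j:ℚ)) * (-1)^i
          * Polynomial.eval x (B (j-i)))) * hch
  have e1 : (1 : ℚ) + (N:ℚ)*(((m+1:ℕ):ℚ)-1) - (n:ℚ) = s - N := by
    rw [hs]; push_cast; ring
  rw [h1, e1, h2]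
  rw [hs]
  push_cast
  field_simp
  ring
noncomputable def hgR (N : ℕ) (B : ℕ → Polynomial ℚ) (x : ℚ) (r : ℕ) : PowerSeries ℚ :=
  PowerSeries.mk fun n => ((n.factorial : ℚ))⁻¹ * hgS N B x r n

-- series form of the recurrence
lemma hgR_rec (N : ℕ) (hN : 1 ≤ N) (B : ℕ → Polynomial ℚ) (x : ℚ) (m : ℕ) :
    PowerSeries.C (((m:ℚ)+1) * (N:ℚ)) * hgR N B x (m+2)
      = PowerSeries.C ((N:ℚ) * ((m:ℚ)+1)) * hgR N B x (m+1)
        - X * d⁄dX ℚ (hgR N B x (m+1))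
        + PowerSeries.C (x - ((m:ℚ)+1)) * X * hgR N B x (m+1) := by
  set y : ℚ := x - ((m:ℚ)+1) with hy
  ext n
  simp only [map_add, map_sub, coeff_C_mul]
  rw [coeff_X_mul_derivative]
  have hrec := hgS_rec N hN B x m n
  have h0 : ∀ f : PowerSeries ℚ, PowerSeries.coeff 0 (PowerSeries.C y * X * f) = 0 := by
    intro f
    simp [PowerSeries.coeff_zero_eq_constantCoeff]
  cases n with
  | zero =>
      rw [h0]
      simp only [hgR, coeff_mk, Nat.cast_zero, zero_mul, add_zero, mul_zero, sub_zero,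
        Nat.factorial_zero, Nat.cast_one, inv_one, one_mul] at hrec ⊢
      linarith [hrec]
  | succ j =>
      have hX : PowerSeries.coeff (j+1) (PowerSeries.C y * X * hgR N B x (m+1))
          = y * PowerSeries.coeff j (hgR N B x (m+1)) := by
        rw [mul_assoc, coeff_C_mul, PowerSeries.coeff_succ_X_mul]
      rw [hX]
      simp only [hgR, coeff_mk] at hrec ⊢
      have hf : ((j.factorial : ℚ)) ≠ 0 := by exact_mod_cast (Nat.factorial_pos j).ne'
      have hfs : (((j+1).factorial : ℚ)) ≠ 0 := by exact_mod_cast (Nat.factorial_pos (j+1)).ne'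
      have hinv : ((j.factorial : ℚ))⁻¹ = ((j:ℚ)+1) * (((j+1).factorial : ℚ))⁻¹ := by
        rw [Nat.factorial_succ]
        push_cast
        rw [mul_inv]
        field_simp
      have hsub : (j + 1) - 1 = j := by omega
      rw [hsub, ← hy] at hrec
      push_cast at hrec ⊢
      linear_combination ((((j+1).factorial : ℚ))⁻¹) * hrec
        - (y * hgS N B x (m+1) j) * hinv


lemma hgC_ne_zero {q : ℚ} (h : q ≠ 0) : PowerSeries.C q ≠ 0 := fun hC => by
  have := congrArg (PowerSeries.constantCoeff) hC
  simp at this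
  exact h this

lemma hgR_one (N : ℕ) (B : ℕ → Polynomial ℚ) (x : ℚ) : hgR N B x 1 = hgb B x := by
  ext n
  simp only [hgR, hgb, hgS, coeff_mk, Finset.sum_range_one]
  have hA : ∀ s, hgA N 1 ((0:ℕ):ℤ) x s = 1 := fun s => by rw [hgA]; simp
  rw [hA]
  simp [div_eq_mul_inv, mul_comm]

lemma hgR_spec (ν : ℕ) (B : ℕ → Polynomial ℚ)
    (hB : ∀ m : ℕ, ∑ k ∈ Finset.range (m + 1),
        (if (ν+1) ≤ m - k then ((k.factorial * (m - k).factorial : ℚ))⁻¹ • B k else 0)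
      = if (ν+1) ≤ m then (((ν+1).factorial * (m - (ν+1)).factorial : ℚ))⁻¹ • (Polynomial.X ^ (m - (ν+1)))
        else 0) (x : ℚ) : ∀ m : ℕ,
    hgR (ν+1) B x (m+1) * hgE (ν+1) ^ (m+1)
      = X^((ν+1)*(m+1)) * rescale x (exp ℚ) * PowerSeries.C ((((ν+1).factorial : ℚ))⁻¹ ^ (m+1)) := by
  intro m
  induction m with
  | zero =>
      rw [hgR_one]
      simpa using hgb_mul_hgE (ν+1) B hB x
  | succ m ih =>
      have hstep := hg_step ν m x _ ih
      have hrec := hgR_rec (ν+1) (by omega) B x m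
      have hc : ((ν+1:ℕ):ℚ) = (ν:ℚ)+1 := by push_cast; ring
      rw [hc] at hrec
      have hCne : PowerSeries.C (((m:ℚ)+1) * ((ν:ℚ)+1)) ≠ 0 :=
        hgC_ne_zero (by positivity)
      apply mul_left_cancel₀ hCne
      calc PowerSeries.C (((m:ℚ)+1) * ((ν:ℚ)+1)) * (hgR (ν+1) B x (m+2) * hgE (ν+1) ^ (m+2))
          = (PowerSeries.C (((m:ℚ)+1) * ((ν:ℚ)+1)) * hgR (ν+1) B x (m+2)) * hgE (ν+1) ^ (m+2) := by
            ring
        _ = (PowerSeries.C (((ν:ℚ)+1) * ((m:ℚ)+1)) * hgR (ν+1) B x (m+1)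
              - X * d⁄dX ℚ (hgR (ν+1) B x (m+1))
              + PowerSeries.C (x - ((m:ℚ)+1)) * X * hgR (ν+1) B x (m+1)) * hgE (ν+1) ^ (m+2) := by
            rw [hrec]
        _ = _ := hstep

lemma hgprod (ν : ℕ) (B : ℕ → Polynomial ℚ)
    (hB : ∀ m : ℕ, ∑ k ∈ Finset.range (m + 1),
        (if (ν+1) ≤ m - k then ((k.factorial * (m - k).factorial : ℚ))⁻¹ • B k else 0)
      = if (ν+1) ≤ m then (((ν+1).factorial * (m - (ν+1)).factorial : ℚ))⁻¹ • (Polynomial.X ^ (m - (ν+1)))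
        else 0) : ∀ (m : ℕ) (x : Fin (m+1) → ℚ),
    (∏ j, hgb B (x j)) * hgE (ν+1) ^ (m+1)
      = X^((ν+1)*(m+1)) * rescale (∑ j, x j) (exp ℚ)
          * PowerSeries.C ((((ν+1).factorial : ℚ))⁻¹ ^ (m+1)) := by
  intro m
  induction m with
  | zero =>
      intro x
      rw [Fin.prod_univ_one, Fin.sum_univ_one]
      simpa using hgb_mul_hgE (ν+1) B hB (x 0)
  | succ m ih =>
      intro x
      rw [Fin.prod_univ_succ, Fin.sum_univ_succ]
      have ih' := ih (fun j => x j.succ)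
      have hb0 := hgb_mul_hgE (ν+1) B hB (x 0)
      have hxp : (X:PowerSeries ℚ)^(ν+1) * X^((ν+1)*(m+1)) = X^((ν+1)*(m+2)) := by
        rw [← pow_add]; congr 1; ring
      have hC : PowerSeries.C ((((ν+1).factorial : ℚ))⁻¹)
            * PowerSeries.C ((((ν+1).factorial : ℚ))⁻¹ ^ (m+1))
          = PowerSeries.C ((((ν+1).factorial : ℚ))⁻¹ ^ (m+2)) := by
        rw [← map_mul]; congr 1; ring
      have hre := exp_mul_exp_eq_exp_add (x 0) (∑ j : Fin (m+1), x j.succ)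
      calc (hgb B (x 0) * ∏ j : Fin (m+1), hgb B (x j.succ)) * hgE (ν+1) ^ (m+2)
          = (hgb B (x 0) * hgE (ν+1)) * ((∏ j : Fin (m+1), hgb B (x j.succ)) * hgE (ν+1) ^ (m+1)) := by
            ring
        _ = (X^(ν+1) * rescale (x 0) (exp ℚ) * PowerSeries.C ((((ν+1).factorial : ℚ))⁻¹))
              * (X^((ν+1)*(m+1)) * rescale (∑ j : Fin (m+1), x j.succ) (exp ℚ)
                  * PowerSeries.C ((((ν+1).factorial : ℚ))⁻¹ ^ (m+1))) := by
            rw [hb0, ih']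
        _ = _ := by
            rw [← hxp, ← hC, ← hre]
            ring

lemma coeff_prod_hgb (B : ℕ → Polynomial ℚ) (r n : ℕ) (x : Fin r → ℚ) :
    PowerSeries.coeff n (∏ j, hgb B (x j))
      = ∑ iv ∈ Finset.Nat.antidiagonalTuple r n,
          ∏ j, (B (iv j)).eval (x j) / ((iv j).factorial : ℚ) := by
  rw [PowerSeries.coeff_prod]
  refine Finset.sum_nbij' (fun l => (l : Fin r → ℕ))
    (fun iv => Finsupp.equivFunOnFinite.symm iv) ?_ ?_ ?_ ?_ ?_
  · intro l hl
    simp only [Finset.mem_finsuppAntidiag] at hl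
    rw [Finset.Nat.mem_antidiagonalTuple]
    exact hl.1
  · intro iv hiv
    rw [Finset.Nat.mem_antidiagonalTuple] at hiv
    rw [Finset.mem_finsuppAntidiag]
    exact ⟨hiv, Finset.subset_univ _⟩
  · intro l _
    exact Finsupp.equivFunOnFinite.symm_apply_apply l
  · intro iv _
    exact Finsupp.equivFunOnFinite.apply_symm_apply iv
  · intro l _
    exact Finset.prod_congr rfl fun j _ => by simp [hgb]

end HG

/-- Theorem 2: sums of products of hypergeometric Bernoulli polynomials.
Here `B n` is the hypergeometric Bernoulli polynomial `B_{N,n}(x)`, characterized by the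
coefficient relations coming from the generating function
`(t^N e^{xt}/N!)/(e^t - T_{N-1}(t)) = ∑ B_{N,n}(x) t^n/n!`. -/
theorem sum_products_hypergeometric_bernoulli_polynomials
    (N r : ℕ) (hN : 1 ≤ N) (hr : 1 ≤ r) (n : ℕ) (hn : r - 1 ≤ n)
    (x : Fin r → ℚ) (B : ℕ → Polynomial ℚ)
    (hB : ∀ m : ℕ, ∑ k ∈ Finset.range (m + 1),
        (if N ≤ m - k then ((k.factorial * (m - k).factorial : ℚ))⁻¹ • B k else 0)
      = if N ≤ m then ((N.factorial * (m - N).factorial : ℚ))⁻¹ • (Polynomial.X ^ (m - N))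
        else 0) :
    ∑ iv ∈ Finset.Nat.antidiagonalTuple r n,
        ((n.factorial : ℚ) / ∏ j, ((iv j).factorial : ℚ)) * ∏ j, (B (iv j)).eval (x j)
      = (1 / (N : ℚ) ^ (r - 1)) * ∑ i ∈ Finset.range r,
          hgA N r (i : ℤ) (∑ j, x j) (1 + (N : ℚ) * ((r : ℚ) - 1) - (n : ℚ))
            * (-1) ^ i * (n.choose i : ℚ) * (i.factorial : ℚ)
            * (B (n - i)).eval (∑ j, x j) := by
  obtain ⟨ν, rfl⟩ : ∃ ν, N = ν + 1 := ⟨N-1, by omega⟩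
  obtain ⟨m, rfl⟩ : ∃ m, r = m + 1 := ⟨r-1, by omega⟩
  have hser : hgR (ν+1) B (∑ j, x j) (m+1) = ∏ j, hgb B (x j) := by
    have h1 := hgR_spec ν B hB (∑ j, x j) m
    have h2 := hgprod ν B hB m x
    exact mul_right_cancel₀ (pow_ne_zero _ (hgE_ne_zero (ν+1))) (h1.trans h2.symm)
  have hco := congrArg (PowerSeries.coeff n) hser
  rw [coeff_prod_hgb] at hco
  simp only [hgR, PowerSeries.coeff_mk] at hco
  have hL : ∑ iv ∈ Finset.Nat.antidiagonalTuple (m+1) n,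
        ((n.factorial : ℚ) / ∏ j, ((iv j).factorial : ℚ)) * ∏ j, (B (iv j)).eval (x j)
      = (n.factorial : ℚ) * ∑ iv ∈ Finset.Nat.antidiagonalTuple (m+1) n,
          ∏ j, (B (iv j)).eval (x j) / ((iv j).factorial : ℚ) := by
    rw [Finset.mul_sum]
    refine Finset.sum_congr rfl fun iv _ => ?_
    rw [Finset.prod_div_distrib]
    ring
  rw [hL, ← hco, ← mul_assoc,
    mul_inv_cancel₀ (by exact_mod_cast (Nat.factorial_pos n).ne' : (n.factorial : ℚ) ≠ 0),
    one_mul]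
  rfl
end

section
/- Let N ≥ 1 and r ≥ 1 be integers. Define polynomials A_r^{(N)}(i; s) ∈ ℚ[s] (for 0 ≤ i ≤ r − 1) by the recurrence A_1^{(N)}(0; s) = 1 and, for r ≥ 2, A_r^{(N)}(i; s) = ((s − 1)/(r − 1))·A_{r−1}^{(N)}(i; s − N) + A_{r−1}^{(N)}(i − 1; s − N + 1), where A_r^{(N)}(i; s) is defined to be 0 for i ≤ −1 and for i ≥ r. Then for every integer n ≥ r − 1, ∑_{i₁,…,i_r ≥ 0, i₁+⋯+i_r = n} (n!/(i₁!⋯i_r!)) B_{N,i₁} ⋯ B_{N,i_r} = (1/N^{r−1}) ∑_{i=0}^{r−1} A_r^{(N)}(i; 1 + N(r−1) − n) · (−1)^i · C(n, i) · i! · B_{N,n−i}. -/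
open Finset PowerSeries
open scoped PowerSeries

/-- The polynomials `A_r^{(N)}(i; s)` of Kamano's theorem, realized as functions of `s`.
They satisfy `A_1^{(N)}(0;s) = 1`, vanish for `i ≤ -1` and `i ≥ r`, and obey the recurrence
`A_r^{(N)}(i;s) = ((s-1)/(r-1))·A_{r-1}^{(N)}(i;s-N) + A_{r-1}^{(N)}(i-1;s-N+1)` for `r ≥ 2`. -/
noncomputable def kamanoA (N : ℕ) : ℕ → ℤ → ℚ → ℚ
  | 0, _, _ => 0
  | 1, i, _ => if i = 0 then 1 else 0
  | (r + 2), i, s =>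
      ((s - 1) / ((r : ℚ) + 1)) * kamanoA N (r + 1) i (s - N)
        + kamanoA N (r + 1) (i - 1) (s - N + 1)

theorem kamanoA_vanish (N : ℕ) : ∀ (r : ℕ) (i : ℤ) (s : ℚ), i < 0 ∨ (r : ℤ) ≤ i →
    kamanoA N r i s = 0
  | 0, i, s, _ => rfl
  | 1, i, s, h => by
      have : i ≠ 0 := by omega
      simp [kamanoA, this]
  | (r+2), i, s, h => by
      have h1 : i < 0 ∨ ((r+1 : ℕ) : ℤ) ≤ i := by push_cast at h ⊢; omega
      have h2 : i - 1 < 0 ∨ ((r+1 : ℕ) : ℤ) ≤ i - 1 := by push_cast at h ⊢; omega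
      simp only [kamanoA, kamanoA_vanish N (r+1) i _ h1, kamanoA_vanish N (r+1) (i-1) _ h2]
      ring

lemma sum_antidiagonalTuple_succ' {β : Type*} [AddCommMonoid β] (r n : ℕ)
    (f : (Fin (r+1) → ℕ) → β) :
    ∑ x ∈ Finset.Nat.antidiagonalTuple (r+1) n, f x
      = ∑ p ∈ Finset.HasAntidiagonal.antidiagonal n, ∑ x ∈ Finset.Nat.antidiagonalTuple r p.2,
          f (Fin.cons p.1 x) := by
  rw [Finset.sum_sigma']
  refine Finset.sum_bij' (fun y _ => (⟨(y 0, n - y 0), Fin.tail y⟩ :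
      Σ p : ℕ × ℕ, Fin (r) → ℕ)) (fun a _ => Fin.cons a.1.1 a.2) ?_ ?_ ?_ ?_ ?_
  · intro y hy
    simp only [Finset.Nat.mem_antidiagonalTuple] at hy
    have hsum : y 0 + ∑ i, Fin.tail y i = n := by
      rw [← hy, Fin.sum_univ_succ]; rfl
    simp only [Finset.mem_sigma, Finset.HasAntidiagonal.mem_antidiagonal,
      Finset.Nat.mem_antidiagonalTuple]
    exact ⟨by omega, by omega⟩
  · rintro ⟨⟨a, b⟩, x⟩ h
    simp only [Finset.mem_sigma, Finset.HasAntidiagonal.mem_antidiagonal,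
      Finset.Nat.mem_antidiagonalTuple] at h ⊢
    rw [Fin.sum_cons, h.2, h.1]
  · intro y hy
    exact Fin.cons_self_tail y
  · rintro ⟨⟨a, b⟩, x⟩ h
    simp only [Finset.mem_sigma, Finset.HasAntidiagonal.mem_antidiagonal,
      Finset.Nat.mem_antidiagonalTuple] at h
    have h0 : (Fin.cons a x : Fin (r+1) → ℕ) 0 = a := rfl
    refine Sigma.ext ?_ ?_
    · simp only [h0]
      have : n - a = b := by omega
      simp [this]
    · simp [Fin.tail_cons]
  · intro y hy
    have : y = Fin.cons (y 0) (Fin.tail y) := (Fin.cons_self_tail y).symm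
    conv_lhs => rw [this]

lemma coeff_pow_tuple (c : ℕ → ℚ) (r n : ℕ) :
    PowerSeries.coeff n ((PowerSeries.mk c) ^ r)
      = ∑ x ∈ Finset.Nat.antidiagonalTuple r n, ∏ j, c (x j) := by
  induction r generalizing n with
  | zero =>
    cases n with
    | zero => simp
    | succ m => simp
  | succ r ih =>
    rw [pow_succ', PowerSeries.coeff_mul, sum_antidiagonalTuple_succ']
    refine Finset.sum_congr rfl fun p hp => ?_
    rw [PowerSeries.coeff_mk, ih, Finset.mul_sum]
    refine Finset.sum_congr rfl fun x hx => ?_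
    simp [Fin.prod_univ_succ]

/-- The series `e^t - T_M(t)` (tail of the exponential from degree `M+1`). -/
noncomputable def kamanoHs (M : ℕ) : ℚ⟦X⟧ :=
  PowerSeries.mk fun j => if M + 1 ≤ j then ((j.factorial : ℚ))⁻¹ else 0

lemma kamanoHs_deriv (M : ℕ) :
    ((M.factorial : ℚ⟦X⟧)) * (d⁄dX ℚ) (kamanoHs M)
      = (M.factorial : ℚ⟦X⟧) * kamanoHs M + X ^ M := by
  ext n
  rw [← map_natCast (C (R := ℚ)) M.factorial]
  simp only [map_add, coeff_C_mul, coeff_derivative, kamanoHs, coeff_mk, coeff_X_pow]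
  rcases lt_trichotomy n M with h | h | h
  · rw [if_neg (by omega), if_neg (by omega), if_neg (by omega)]
    ring
  · subst h
    rw [if_pos (by omega), if_neg (by omega), if_pos rfl]
    rw [Nat.factorial_succ]
    push_cast
    have h1 : ((n.factorial : ℚ)) ≠ 0 := Nat.cast_ne_zero.mpr n.factorial_ne_zero
    field_simp
    ring
  · rw [if_pos (by omega), if_pos (by omega), if_neg (by omega)]
    rw [Nat.factorial_succ]
    push_cast
    have h1 : ((n.factorial : ℚ)) ≠ 0 := Nat.cast_ne_zero.mpr n.factorial_ne_zero
    field_simp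
    ring

lemma kamano_key_quadratic (M : ℕ) (F : ℚ⟦X⟧)
    (hFH : (((M+1).factorial : ℚ⟦X⟧)) * (F * kamanoHs M) = X ^ (M + 1)) :
    X * (d⁄dX ℚ) F = ((M : ℚ⟦X⟧) + 1) * F - ((M : ℚ⟦X⟧) + 1) * F ^ 2 - X * F := by
  have hC := congrArg (⇑(d⁄dX ℚ)) hFH
  rw [Derivation.leibniz, Derivation.map_natCast, Derivation.leibniz,
    Derivation.leibniz_pow, derivative_X] at hC
  simp only [smul_eq_mul, mul_zero, add_zero, mul_one, Nat.add_sub_cancel,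
    nsmul_eq_mul] at hC
  have hfac : (((M+1).factorial : ℚ⟦X⟧)) = ((M : ℚ⟦X⟧) + 1) * (M.factorial : ℚ⟦X⟧) := by
    push_cast [Nat.factorial_succ]; ring
  rw [hfac] at hC hFH
  have hcast : ((M + 1 : ℕ) : ℚ⟦X⟧) = (M : ℚ⟦X⟧) + 1 := by push_cast; ring
  rw [hcast] at hC
  have hX : (X : ℚ⟦X⟧) ^ M ≠ 0 := pow_ne_zero M X_ne_zero
  have hHd := kamanoHs_deriv M
  apply mul_left_cancel₀ hX
  have hexp : (X : ℚ⟦X⟧) ^ (M + 1) = X ^ M * X := pow_succ X M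
  rw [hexp] at hFH
  linear_combination F * hC - (((M : ℚ⟦X⟧) + 1) * F ^ 2) * hHd
    - ((d⁄dX ℚ) F + F) * hFH

lemma kamano_coeff_rec (M : ℕ) (F : ℚ⟦X⟧)
    (hQ : X * (d⁄dX ℚ) F = ((M : ℚ⟦X⟧) + 1) * F - ((M : ℚ⟦X⟧) + 1) * F ^ 2 - X * F)
    (q m : ℕ) :
    ((m : ℚ) + 1) * PowerSeries.coeff (m+1) (F^(q+1))
      = ((q : ℚ) + 1) * ( ((M : ℚ) + 1) * PowerSeries.coeff (m+1) (F^(q+1))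
          - ((M : ℚ) + 1) * PowerSeries.coeff (m+1) (F^(q+2))
          - PowerSeries.coeff m (F^(q+1)) ) := by
  have hMC : ((M : ℚ⟦X⟧) + 1) = C ((M : ℚ) + 1) := by
    simp [map_add, map_natCast]
  have hser : X * (d⁄dX ℚ) (F^(q+1))
      = C ((q : ℚ) + 1) * (C ((M : ℚ)+1) * F^(q+1)
          - C ((M : ℚ)+1) * F^(q+2) - X * F^(q+1)) := by
    rw [Derivation.leibniz_pow]
    simp only [Nat.add_sub_cancel, smul_eq_mul, nsmul_eq_mul]
    rw [← hMC]
    have hqC : ((q : ℚ⟦X⟧) + 1) = C ((q : ℚ) + 1) := by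
      simp [map_add, map_natCast]
    rw [← hqC]
    push_cast
    linear_combination (((q : ℚ⟦X⟧)+1) * F^q) * hQ
  have h2 := congrArg (⇑(PowerSeries.coeff (m+1))) hser
  rw [coeff_succ_X_mul, coeff_derivative] at h2
  simp only [coeff_C_mul, map_sub, coeff_C_mul, coeff_succ_X_mul] at h2
  linarith [h2]

lemma kamano_main_ind (M : ℕ) (c : ℕ → ℚ) (F : ℚ⟦X⟧) (hF : F = PowerSeries.mk c)
    (hQ : X * (d⁄dX ℚ) F = ((M : ℚ⟦X⟧) + 1) * F - ((M : ℚ⟦X⟧) + 1) * F ^ 2 - X * F) :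
    ∀ r, 1 ≤ r → ∀ n : ℕ, r - 1 ≤ n →
      PowerSeries.coeff n (F ^ r)
        = ((((M+1 : ℕ)) : ℚ) ^ (r-1))⁻¹ * ∑ i ∈ Finset.range r,
            kamanoA (M+1) r (i : ℤ) (1 + ((M+1 : ℕ) : ℚ) * ((r : ℚ) - 1) - (n : ℚ))
              * (-1)^i * c (n - i) := by
  intro r hr
  induction r, hr using Nat.le_induction with
  | base =>
    intro n _
    simp only [pow_one, hF, PowerSeries.coeff_mk, Nat.sub_self, pow_zero, inv_one, one_mul,
      Finset.sum_range_one]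
    have : kamanoA (M+1) 1 ((0:ℕ) : ℤ) (1 + ((M+1 : ℕ) : ℚ) * (((1:ℕ) : ℚ) - 1) - (n : ℚ)) = 1 := by
      simp [kamanoA]
    rw [this]
    simp
  | succ r hr ih =>
    obtain ⟨q, rfl⟩ : ∃ q, r = q + 1 := ⟨r - 1, by omega⟩
    intro n hn
    obtain ⟨m, rfl⟩ : ∃ m, n = m + 1 := ⟨n - 1, by omega⟩
    have hm : q ≤ m := by omega
    have hA1 := ih (m+1) (by omega)
    have hA0 := ih m (by omega)
    have hrec := kamano_coeff_rec M F hQ q m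
    have hNq : ((M+1 : ℕ) : ℚ) ≠ 0 := by positivity
    have hq1 : ((q : ℚ) + 1) ≠ 0 := by positivity
    have hpow : (((M+1 : ℕ)) : ℚ) ^ q ≠ 0 := pow_ne_zero _ hNq
    set s' : ℚ := 1 + ((M+1 : ℕ) : ℚ) * (((q+1+1 : ℕ) : ℚ) - 1) - ((m+1 : ℕ) : ℚ) with hs'
    have harg1 : (1 : ℚ) + ((M+1 : ℕ) : ℚ) * (((q+1 : ℕ) : ℚ) - 1) - ((m+1 : ℕ) : ℚ)
        = s' - ((M+1 : ℕ) : ℚ) := by push_cast [hs']; ring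
    have harg0 : (1 : ℚ) + ((M+1 : ℕ) : ℚ) * (((q+1 : ℕ) : ℚ) - 1) - ((m : ℕ) : ℚ)
        = s' - ((M+1 : ℕ) : ℚ) + 1 := by push_cast [hs']; ring
    rw [harg1, Nat.add_sub_cancel] at hA1
    rw [harg0, Nat.add_sub_cancel] at hA0
    set S1 := ∑ i ∈ Finset.range (q+1),
        kamanoA (M+1) (q+1) (i : ℤ) (s' - ((M+1 : ℕ) : ℚ)) * (-1)^i * c (m+1-i) with hS1
    set S0 := ∑ i ∈ Finset.range (q+1),
        kamanoA (M+1) (q+1) (i : ℤ) (s' - ((M+1 : ℕ) : ℚ) + 1) * (-1)^i * c (m-i) with hS0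
    have hunf : ∀ i : ℤ, kamanoA (M+1) (q+1+1) i s'
        = ((s' - 1)/((q:ℚ)+1)) * kamanoA (M+1) (q+1) i (s' - ((M+1 : ℕ) : ℚ))
          + kamanoA (M+1) (q+1) (i-1) (s' - ((M+1 : ℕ) : ℚ) + 1) := fun i => rfl
    have hsum : ∑ i ∈ Finset.range (q+1+1),
        kamanoA (M+1) (q+1+1) (i : ℤ) s' * (-1)^i * c (m+1-i)
        = ((s' - 1)/((q:ℚ)+1)) * S1 - S0 := by
      have step1 : ∑ i ∈ Finset.range (q+1+1),
          kamanoA (M+1) (q+1+1) (i : ℤ) s' * (-1)^i * c (m+1-i)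
          = ∑ i ∈ Finset.range (q+1+1),
              (((s' - 1)/((q:ℚ)+1)) * (kamanoA (M+1) (q+1) (i : ℤ) (s' - ((M+1 : ℕ) : ℚ))
                  * (-1)^i * c (m+1-i))
                + kamanoA (M+1) (q+1) ((i : ℤ)-1) (s' - ((M+1 : ℕ) : ℚ) + 1)
                  * (-1)^i * c (m+1-i)) :=
        Finset.sum_congr rfl fun i _ => by rw [hunf]; ring
      rw [step1, Finset.sum_add_distrib, ← Finset.mul_sum]
      have part1 : ∑ i ∈ Finset.range (q+1+1),
          kamanoA (M+1) (q+1) (i : ℤ) (s' - ((M+1 : ℕ) : ℚ)) * (-1)^i * c (m+1-i) = S1 := by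
        rw [Finset.sum_range_succ,
          kamanoA_vanish (M+1) (q+1) ((q+1 : ℕ) : ℤ) _ (by push_cast; omega)]
        simp [hS1]
      have part2 : ∑ i ∈ Finset.range (q+1+1),
          kamanoA (M+1) (q+1) ((i : ℤ)-1) (s' - ((M+1 : ℕ) : ℚ) + 1) * (-1)^i * c (m+1-i)
          = - S0 := by
        rw [Finset.sum_range_succ']
        rw [show ((0:ℕ) : ℤ) - 1 = -1 by norm_num,
          kamanoA_vanish (M+1) (q+1) (-1) _ (by omega)]
        simp only [zero_mul, add_zero]
        rw [hS0, ← Finset.sum_neg_distrib]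
        refine Finset.sum_congr rfl fun i _ => ?_
        have e : ((i+1 : ℕ) : ℤ) - 1 = (i : ℤ) := by push_cast; ring
        rw [e, Nat.succ_sub_succ]
        ring
      rw [part1, part2]
      ring
    rw [hsum]
    have hpow' : (((M+1 : ℕ)) : ℚ) ^ (q+1+1-1) = ((M+1:ℕ):ℚ)^q * ((M+1:ℕ):ℚ) := by
      rw [Nat.add_sub_cancel, pow_succ]
    rw [hpow']
    have hs'1 : s' - 1 = ((M+1:ℕ) : ℚ) * ((q:ℚ)+1) - ((m:ℚ)+1) := by
      push_cast [hs']; ring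
    rw [hs'1]
    rw [hA1, hA0] at hrec
    have hM1 : ((M+1 : ℕ) : ℚ) = (M:ℚ)+1 := by push_cast; ring
    rw [hM1] at hrec hpow ⊢
    field_simp at hrec ⊢
    linarith [hrec]

lemma kamano_genfun (M : ℕ) (B : ℕ → Polynomial ℚ)
    (hB : ∀ m : ℕ, ∑ k ∈ Finset.range (m + 1),
        (if M+1 ≤ m - k then ((k.factorial * (m - k).factorial : ℚ))⁻¹ • B k else 0)
      = if M+1 ≤ m then (((M+1).factorial * (m - (M+1)).factorial : ℚ))⁻¹
          • (Polynomial.X ^ (m - (M+1))) else 0)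
    (c : ℕ → ℚ) (hc : c = fun k => (B k).eval 0 / k.factorial) :
    (((M+1).factorial : ℚ⟦X⟧)) * (PowerSeries.mk c * kamanoHs M) = X ^ (M+1) := by
  ext mm
  rw [← map_natCast (C (R := ℚ)), coeff_C_mul, PowerSeries.coeff_mul, coeff_X_pow]
  have hBe := congrArg (Polynomial.eval 0) (hB mm)
  rw [Polynomial.eval_finset_sum, apply_ite (Polynomial.eval (0:ℚ))] at hBe
  simp only [Polynomial.eval_zero, Polynomial.eval_smul, Polynomial.eval_pow,
    Polynomial.eval_X, smul_eq_mul] at hBe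
  rw [Finset.Nat.sum_antidiagonal_eq_sum_range_succ_mk]
  have hterm : ∀ k ∈ Finset.range (mm+1),
      PowerSeries.coeff k (PowerSeries.mk c) *
        PowerSeries.coeff (mm - k) (kamanoHs M)
      = Polynomial.eval 0
          (if M+1 ≤ mm - k then ((k.factorial * (mm - k).factorial : ℚ))⁻¹ • B k else 0) := by
    intro k _
    rw [PowerSeries.coeff_mk, kamanoHs, PowerSeries.coeff_mk, mul_ite, mul_zero,
      apply_ite (Polynomial.eval (0:ℚ)), Polynomial.eval_zero, Polynomial.eval_smul,
      smul_eq_mul]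
    rcases le_or_gt (M+1) (mm-k) with h | h
    · rw [if_pos h, if_pos h, hc]
      have h1 : ((k.factorial : ℚ)) ≠ 0 := Nat.cast_ne_zero.mpr k.factorial_ne_zero
      have h2 : (((mm-k).factorial : ℚ)) ≠ 0 := Nat.cast_ne_zero.mpr (mm-k).factorial_ne_zero
      field_simp
    · rw [if_neg (by omega), if_neg (by omega)]
  rw [Finset.sum_congr rfl hterm, hBe]
  have hfacne : (((M+1).factorial : ℚ)) ≠ 0 := Nat.cast_ne_zero.mpr (M+1).factorial_ne_zero
  rcases lt_trichotomy mm (M+1) with h | h | h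
  · rw [if_neg (by omega), if_neg (by omega)]
    ring
  · subst h
    rw [if_pos le_rfl, if_pos rfl, Nat.sub_self]
    simp only [Nat.factorial_zero, Nat.cast_one, mul_one, pow_zero]
    exact mul_inv_cancel₀ hfacne
  · rw [if_pos (by omega), if_neg (by omega)]
    rw [zero_pow (by omega)]
    ring

/-- Kamano's theorem: sums of products of hypergeometric Bernoulli numbers.
Here `B n` is the hypergeometric Bernoulli polynomial `B_{N,n}(x)` (characterized by the
coefficient relations from its generating function) and the hypergeometric Bernoulli numbers
are `B_{N,n} = B_{N,n}(0)`. -/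
theorem sum_products_hypergeometric_bernoulli_numbers
    (N r : ℕ) (hN : 1 ≤ N) (hr : 1 ≤ r) (n : ℕ) (hn : r - 1 ≤ n)
    (B : ℕ → Polynomial ℚ)
    (hB : ∀ m : ℕ, ∑ k ∈ Finset.range (m + 1),
        (if N ≤ m - k then ((k.factorial * (m - k).factorial : ℚ))⁻¹ • B k else 0)
      = if N ≤ m then ((N.factorial * (m - N).factorial : ℚ))⁻¹ • (Polynomial.X ^ (m - N))
        else 0) :
    ∑ iv ∈ Finset.Nat.antidiagonalTuple r n,
        ((n.factorial : ℚ) / ∏ j, ((iv j).factorial : ℚ)) * ∏ j, (B (iv j)).eval 0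
      = (1 / (N : ℚ) ^ (r - 1)) * ∑ i ∈ Finset.range r,
          kamanoA N r (i : ℤ) (1 + (N : ℚ) * ((r : ℚ) - 1) - (n : ℚ))
            * (-1) ^ i * (n.choose i : ℚ) * (i.factorial : ℚ) * (B (n - i)).eval 0 := by
  obtain ⟨M, rfl⟩ : ∃ M, N = M + 1 := ⟨N - 1, by omega⟩
  set c : ℕ → ℚ := fun k => (B k).eval 0 / k.factorial with hc
  have hco : ∀ k, (B k).eval 0 = c k * k.factorial := by
    intro k
    rw [hc]
    have : ((k.factorial : ℚ)) ≠ 0 := Nat.cast_ne_zero.mpr k.factorial_ne_zero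
    field_simp
  have hFH := kamano_genfun M B hB c hc
  have hQ := kamano_key_quadratic M (PowerSeries.mk c) hFH
  have hcoef := kamano_main_ind M c (PowerSeries.mk c) rfl hQ r hr n hn
  calc ∑ iv ∈ Finset.Nat.antidiagonalTuple r n,
        ((n.factorial : ℚ) / ∏ j, ((iv j).factorial : ℚ)) * ∏ j, (B (iv j)).eval 0
      = (n.factorial : ℚ) * PowerSeries.coeff n ((PowerSeries.mk c) ^ r) := by
        rw [coeff_pow_tuple, Finset.mul_sum]
        refine Finset.sum_congr rfl fun iv hiv => ?_
        have hprod : ∏ j, (B (iv j)).eval 0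
            = (∏ j, c (iv j)) * ∏ j, ((iv j).factorial : ℚ) := by
          rw [← Finset.prod_mul_distrib]
          exact Finset.prod_congr rfl fun j _ => hco (iv j)
        rw [hprod]
        have hne : (∏ j, ((iv j).factorial : ℚ)) ≠ 0 :=
          Finset.prod_ne_zero_iff.mpr fun j _ =>
            Nat.cast_ne_zero.mpr (iv j).factorial_ne_zero
        field_simp
    _ = (1 / ((M+1 : ℕ) : ℚ) ^ (r - 1)) * ∑ i ∈ Finset.range r,
          kamanoA (M+1) r (i : ℤ) (1 + ((M+1 : ℕ) : ℚ) * ((r : ℚ) - 1) - (n : ℚ))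
            * (-1) ^ i * (n.choose i : ℚ) * (i.factorial : ℚ) * (B (n - i)).eval 0 := by
        rw [hcoef]
        have hsums : ∑ i ∈ Finset.range r,
            kamanoA (M+1) r (i : ℤ) (1 + ((M+1 : ℕ) : ℚ) * ((r : ℚ) - 1) - (n : ℚ))
              * (-1) ^ i * (n.choose i : ℚ) * (i.factorial : ℚ) * (B (n - i)).eval 0
            = (n.factorial : ℚ) * ∑ i ∈ Finset.range r,
                kamanoA (M+1) r (i : ℤ) (1 + ((M+1 : ℕ) : ℚ) * ((r : ℚ) - 1) - (n : ℚ))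
                  * (-1)^i * c (n - i) := by
          rw [Finset.mul_sum]
          refine Finset.sum_congr rfl fun i hi => ?_
          have hin : i ≤ n := by
            rw [Finset.mem_range] at hi
            omega
          have hkey : (n.choose i : ℚ) * (i.factorial : ℚ) * ((n-i).factorial : ℚ)
              = (n.factorial : ℚ) := by
            rw [← Nat.cast_mul, ← Nat.cast_mul,
              Nat.choose_mul_factorial_mul_factorial hin]
          rw [hco (n-i)]
          calc kamanoA (M+1) r (i : ℤ) (1 + ((M+1 : ℕ) : ℚ) * ((r : ℚ) - 1) - (n : ℚ))
                * (-1) ^ i * (n.choose i : ℚ) * (i.factorial : ℚ)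
                * (c (n-i) * ((n-i).factorial : ℚ))
              = kamanoA (M+1) r (i : ℤ) (1 + ((M+1 : ℕ) : ℚ) * ((r : ℚ) - 1) - (n : ℚ))
                * (-1) ^ i * c (n-i)
                * ((n.choose i : ℚ) * (i.factorial : ℚ) * ((n-i).factorial : ℚ)) := by ring
            _ = _ := by rw [hkey]; ring
        rw [hsums, one_div]
        ring
end

section
/- Let N ≥ 1 and n ≥ 1 be integers, let x₁, x₂ be rational numbers and set x = x₁ + x₂. Then ∑_{i₁,i₂ ≥ 0, i₁+i₂ = n} (n!/(i₁! i₂!)) B_{N,i₁}(x₁) B_{N,i₂}(x₂) = (1/N)(N − n) B_{N,n}(x) + (n/N)(x − 1) B_{N,n−1}(x). -/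
open Finset

open PowerSeries

private lemma hyperg_conv (N : ℕ) (B : ℕ → Polynomial ℚ)
    (hB : ∀ m : ℕ, ∑ k ∈ Finset.range (m + 1),
        (if N ≤ m - k then ((k.factorial * (m - k).factorial : ℚ))⁻¹ • B k else 0)
      = if N ≤ m then ((N.factorial * (m - N).factorial : ℚ))⁻¹ • (Polynomial.X ^ (m - N))
        else 0) (y : ℚ) :
    (PowerSeries.mk fun k => (B k).eval y * ((k.factorial : ℚ))⁻¹)
        * (PowerSeries.mk fun j => if N ≤ j then ((j.factorial : ℚ))⁻¹ else 0)
      = X ^ N * (C ((N.factorial : ℚ))⁻¹ * rescale y (exp ℚ)) := by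
  ext m
  have h := congrArg (Polynomial.eval y) (hB m)
  rw [Polynomial.eval_finset_sum] at h
  simp only [apply_ite (Polynomial.eval y), Polynomial.eval_smul, Polynomial.eval_zero,
    Polynomial.eval_pow, Polynomial.eval_X, smul_eq_mul] at h
  rw [PowerSeries.coeff_mul, Finset.Nat.sum_antidiagonal_eq_sum_range_succ_mk,
    PowerSeries.coeff_X_pow_mul']
  simp only [coeff_mk, map_mul, PowerSeries.coeff_C_mul, PowerSeries.coeff_rescale,
    PowerSeries.coeff_exp]
  simp only [eq_ratCast, Rat.cast_id]
  refine Eq.trans (Finset.sum_congr rfl ?_) (h.trans ?_)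
  · intro k _
    split_ifs with hk
    · rw [mul_inv]; ring
    · rw [mul_zero]
  · split_ifs with hm
    · rw [mul_inv]; ring
    · rfl


private lemma deriv_Dser (K : ℕ) :
    d⁄dX ℚ (PowerSeries.mk fun j => if K + 1 ≤ j then ((j.factorial : ℚ))⁻¹ else 0)
      = (PowerSeries.mk fun j => if K + 1 ≤ j then ((j.factorial : ℚ))⁻¹ else 0)
        + C ((K : ℚ) + 1) * C ((((K + 1).factorial : ℚ))⁻¹) * X ^ K := by
  ext j
  rw [PowerSeries.coeff_derivative, map_add, mul_assoc, PowerSeries.coeff_C_mul,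
    PowerSeries.coeff_C_mul, PowerSeries.coeff_X_pow]
  simp only [coeff_mk]
  rcases lt_trichotomy j K with h | h | h
  · rw [if_neg (by omega), if_neg (by omega), if_neg (by omega)]
    simp
  · subst h
    rw [if_pos (by omega), if_neg (by omega), if_pos rfl]
    ring
  · rw [if_pos (by omega), if_pos (by omega), if_neg (by omega)]
    have hj : ((j : ℚ) + 1) ≠ 0 := by positivity
    have hf : ((j.factorial : ℚ)) ≠ 0 := Nat.cast_ne_zero.mpr j.factorial_ne_zero
    push_cast [Nat.factorial_succ]
    field_simp
    ring

private lemma deriv_eps (y : ℚ) :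
    d⁄dX ℚ (rescale y (exp ℚ)) = C y * rescale y (exp ℚ) := by
  ext j
  rw [PowerSeries.coeff_derivative]
  simp only [PowerSeries.coeff_C_mul, PowerSeries.coeff_rescale, PowerSeries.coeff_exp,
    eq_ratCast, Rat.cast_id]
  have hj : ((j : ℚ) + 1) ≠ 0 := by positivity
  have hf : ((j.factorial : ℚ)) ≠ 0 := Nat.cast_ne_zero.mpr j.factorial_ne_zero
  push_cast [Nat.factorial_succ, pow_succ]
  field_simp

private lemma deriv_Xpow (K : ℕ) :
    d⁄dX ℚ ((X : ℚ⟦X⟧) ^ (K + 1)) = C ((K : ℚ) + 1) * X ^ K := by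
  have hc : ((K + 1 : ℕ) : ℚ⟦X⟧) = C ((K : ℚ) + 1) := by
    rw [← map_natCast (C (R := ℚ)) (K + 1)]
    push_cast
    rfl
  rw [Derivation.leibniz_pow]
  simp only [Nat.add_sub_cancel, PowerSeries.derivative_X, smul_eq_mul, mul_one, nsmul_eq_mul, hc]

private lemma key_step (K : ℕ) (x : ℚ) (β D ε : ℚ⟦X⟧)
    (hβD : β * D = X ^ (K + 1) * (C ((((K + 1).factorial : ℚ))⁻¹) * ε))
    (hD : d⁄dX ℚ D = D + C ((K : ℚ) + 1) * C ((((K + 1).factorial : ℚ))⁻¹) * X ^ K)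
    (hε : d⁄dX ℚ ε = C x * ε) :
    (C ((K : ℚ) + 1) * β - X * d⁄dX ℚ β + (C x - 1) * (X * β)) * D
      = C ((K : ℚ) + 1) * (X ^ (K + 1) * (C ((((K + 1).factorial : ℚ))⁻¹) * β)) := by
  have heq : β * d⁄dX ℚ D + D * d⁄dX ℚ β
      = C ((K : ℚ) + 1) * (X ^ K * (C ((((K + 1).factorial : ℚ))⁻¹) * ε))
        + C x * (X ^ (K + 1) * (C ((((K + 1).factorial : ℚ))⁻¹) * ε)) := by
    have h2 : d⁄dX ℚ (β * D) = β * d⁄dX ℚ D + D * d⁄dX ℚ β := by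
      rw [Derivation.leibniz, smul_eq_mul, smul_eq_mul]
    rw [← h2, hβD, Derivation.leibniz, Derivation.leibniz, hε, PowerSeries.derivative_C,
      deriv_Xpow]
    simp only [smul_eq_mul]
    ring
  linear_combination (C ((K : ℚ) + 1) + X + (C x - 1) * X) * hβD + (X * β) * hD - X * heq

/-- Sums of products of two hypergeometric Bernoulli polynomials:
`∑_{i₁+i₂=n} (n!/(i₁!i₂!)) B_{N,i₁}(x₁) B_{N,i₂}(x₂)
  = (1/N)(N-n) B_{N,n}(x) + (n/N)(x-1) B_{N,n-1}(x)` with `x = x₁ + x₂` and `n ≥ 1`.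
Here `B n` is the hypergeometric Bernoulli polynomial `B_{N,n}(x)`, characterized by the
coefficient relations coming from its generating function. -/
theorem sum_products_two_hypergeometric_bernoulli_polynomials
    (N n : ℕ) (hN : 1 ≤ N) (hn : 1 ≤ n) (x₁ x₂ : ℚ)
    (B : ℕ → Polynomial ℚ)
    (hB : ∀ m : ℕ, ∑ k ∈ Finset.range (m + 1),
        (if N ≤ m - k then ((k.factorial * (m - k).factorial : ℚ))⁻¹ • B k else 0)
      = if N ≤ m then ((N.factorial * (m - N).factorial : ℚ))⁻¹ • (Polynomial.X ^ (m - N))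
        else 0) :
    ∑ p ∈ Finset.HasAntidiagonal.antidiagonal n,
        ((n.factorial : ℚ) / ((p.1.factorial : ℚ) * (p.2.factorial : ℚ)))
          * (B p.1).eval x₁ * (B p.2).eval x₂
      = (1 / (N : ℚ)) * ((N : ℚ) - (n : ℚ)) * (B n).eval (x₁ + x₂)
        + ((n : ℚ) / (N : ℚ)) * ((x₁ + x₂) - 1) * (B (n - 1)).eval (x₁ + x₂) := by
  obtain ⟨K, rfl⟩ : ∃ K, N = K + 1 := ⟨N - 1, (Nat.succ_pred_eq_of_pos hN).symm⟩
  obtain ⟨m, rfl⟩ : ∃ m, n = m + 1 := ⟨n - 1, (Nat.succ_pred_eq_of_pos hn).symm⟩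
  set x : ℚ := x₁ + x₂ with hxdef
  set Ds : ℚ⟦X⟧ := PowerSeries.mk fun j => if K + 1 ≤ j then ((j.factorial : ℚ))⁻¹ else 0
    with hDs
  set βf : ℚ → ℚ⟦X⟧ := fun y => PowerSeries.mk fun k => (B k).eval y * ((k.factorial : ℚ))⁻¹
    with hβf
  have hc : ∀ y : ℚ, βf y * Ds
      = X ^ (K + 1) * (C ((((K + 1).factorial : ℚ))⁻¹) * rescale y (exp ℚ)) :=
    fun y => hyperg_conv (K + 1) B hB y
  have hkey := key_step K x (βf x) Ds (rescale x (exp ℚ)) (hc x) (deriv_Dser K) (deriv_eps x)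
  have hDne : Ds ≠ 0 := by
    intro h0
    have h1 := congrArg (coeff (K + 1)) h0
    simp only [hDs, coeff_mk, if_pos le_rfl, map_zero] at h1
    exact (inv_ne_zero (Nat.cast_ne_zero.mpr (K + 1).factorial_ne_zero)) h1
  have hmain : C ((K : ℚ) + 1) * (βf x₁ * βf x₂)
      = C ((K : ℚ) + 1) * βf x - X * d⁄dX ℚ (βf x) + (C x - 1) * (X * βf x) := by
    apply mul_right_cancel₀ (mul_ne_zero hDne hDne)
    have hadd : rescale x₁ (exp ℚ) * rescale x₂ (exp ℚ) = rescale x (exp ℚ) :=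
      exp_mul_exp_eq_exp_add x₁ x₂
    linear_combination (C ((K : ℚ) + 1) * (βf x₂ * Ds)) * hc x₁
      + (C ((K : ℚ) + 1)
          * (X ^ (K + 1) * (C ((((K + 1).factorial : ℚ))⁻¹) * rescale x₁ (exp ℚ)))) * hc x₂
      + (C ((K : ℚ) + 1) * (X ^ (K + 1) * X ^ (K + 1))
          * (C ((((K + 1).factorial : ℚ))⁻¹) * C ((((K + 1).factorial : ℚ))⁻¹))) * hadd
      - Ds * hkey
      - (C ((K : ℚ) + 1) * (X ^ (K + 1) * C ((((K + 1).factorial : ℚ))⁻¹))) * hc x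
  have hco : ((K : ℚ) + 1) * ∑ p ∈ Finset.HasAntidiagonal.antidiagonal (m + 1),
        ((B p.1).eval x₁ * ((p.1.factorial : ℚ))⁻¹) * ((B p.2).eval x₂ * ((p.2.factorial : ℚ))⁻¹)
      = ((K : ℚ) + 1) * ((B (m + 1)).eval x * (((m + 1).factorial : ℚ))⁻¹)
        - (B (m + 1)).eval x * (((m + 1).factorial : ℚ))⁻¹ * ((m : ℚ) + 1)
        + (x * ((B m).eval x * ((m.factorial : ℚ))⁻¹)
            - (B m).eval x * ((m.factorial : ℚ))⁻¹) := by
    have h2 := congrArg (coeff (m + 1)) hmain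
    have madd : ∀ f g : ℚ⟦X⟧, (coeff (m + 1)) (f + g)
        = (coeff (m + 1)) f + (coeff (m + 1)) g := fun f g => map_add _ f g
    have msub : ∀ f g : ℚ⟦X⟧, (coeff (m + 1)) (f - g)
        = (coeff (m + 1)) f - (coeff (m + 1)) g := fun f g => map_sub _ f g
    rw [sub_mul, one_mul] at h2
    rw [madd, msub, msub] at h2
    rw [PowerSeries.coeff_C_mul, PowerSeries.coeff_C_mul, PowerSeries.coeff_C_mul,
      PowerSeries.coeff_succ_X_mul, PowerSeries.coeff_succ_X_mul,
      PowerSeries.coeff_derivative, PowerSeries.coeff_mul] at h2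
    simpa only [hβf, coeff_mk] using h2
  have hLHS : ∑ p ∈ Finset.HasAntidiagonal.antidiagonal (m + 1),
        (((m + 1).factorial : ℚ) / ((p.1.factorial : ℚ) * (p.2.factorial : ℚ)))
          * (B p.1).eval x₁ * (B p.2).eval x₂
      = (((m + 1).factorial : ℚ)) * ∑ p ∈ Finset.HasAntidiagonal.antidiagonal (m + 1),
        ((B p.1).eval x₁ * ((p.1.factorial : ℚ))⁻¹)
          * ((B p.2).eval x₂ * ((p.2.factorial : ℚ))⁻¹) := by
    rw [Finset.mul_sum]
    apply Finset.sum_congr rfl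
    intro p _
    rw [div_eq_mul_inv, mul_inv]
    ring
  have hK0 : ((K : ℚ) + 1) ≠ 0 := by positivity
  have hmf : ((m.factorial : ℚ)) ≠ 0 := Nat.cast_ne_zero.mpr m.factorial_ne_zero
  calc ∑ p ∈ Finset.HasAntidiagonal.antidiagonal (m + 1),
        (((m + 1).factorial : ℚ) / ((p.1.factorial : ℚ) * (p.2.factorial : ℚ)))
          * (B p.1).eval x₁ * (B p.2).eval x₂
      = (((m + 1).factorial : ℚ)) * ∑ p ∈ Finset.HasAntidiagonal.antidiagonal (m + 1),
          ((B p.1).eval x₁ * ((p.1.factorial : ℚ))⁻¹)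
            * ((B p.2).eval x₂ * ((p.2.factorial : ℚ))⁻¹) := hLHS
    _ = ((K : ℚ) + 1)⁻¹ * ((((m + 1).factorial : ℚ))
          * (((K : ℚ) + 1) * ∑ p ∈ Finset.HasAntidiagonal.antidiagonal (m + 1),
            ((B p.1).eval x₁ * ((p.1.factorial : ℚ))⁻¹)
              * ((B p.2).eval x₂ * ((p.2.factorial : ℚ))⁻¹))) := by
        field_simp
    _ = ((K : ℚ) + 1)⁻¹ * ((((m + 1).factorial : ℚ))
          * (((K : ℚ) + 1) * ((B (m + 1)).eval x * (((m + 1).factorial : ℚ))⁻¹)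
            - (B (m + 1)).eval x * (((m + 1).factorial : ℚ))⁻¹ * ((m : ℚ) + 1)
            + (x * ((B m).eval x * ((m.factorial : ℚ))⁻¹)
                - (B m).eval x * ((m.factorial : ℚ))⁻¹))) := by rw [hco]
    _ = (1 / ((K + 1 : ℕ) : ℚ)) * (((K + 1 : ℕ) : ℚ) - ((m + 1 : ℕ) : ℚ))
            * (B (m + 1)).eval x
          + (((m + 1 : ℕ) : ℚ) / ((K + 1 : ℕ) : ℚ)) * (x - 1) * (B (m + 1 - 1)).eval x := by
        simp only [Nat.add_sub_cancel]
        push_cast [Nat.factorial_succ]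
        field_simp
end

section
/- Let N ≥ 1 and n ≥ 2 be integers, let x₁, x₂, x₃ be rational numbers and set x = x₁ + x₂ + x₃. Then ∑_{i₁,i₂,i₃ ≥ 0, i₁+i₂+i₃ = n} (n!/(i₁! i₂! i₃!)) B_{N,i₁}(x₁) B_{N,i₂}(x₂) B_{N,i₃}(x₃) = (1/(2N²)) [ (N − n)(2N − n) B_{N,n}(x) + n((2N − n)(x − 1) + (x − 2)(N − n + 1)) B_{N,n−1}(x) + n(n−1)(x − 1)(x − 2) B_{N,n−2}(x) ]. -/
open Finset

namespace HGBAux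

open PowerSeries

noncomputable def bb (B : ℕ → Polynomial ℚ) (y : ℚ) : PowerSeries ℚ :=
  PowerSeries.mk fun k => (B k).eval y * ((k.factorial : ℚ))⁻¹

noncomputable def EE (N : ℕ) : PowerSeries ℚ :=
  PowerSeries.mk fun j => if N ≤ j then ((j.factorial : ℚ))⁻¹ else 0

lemma coeff_bb (B : ℕ → Polynomial ℚ) (y : ℚ) (k : ℕ) :
    PowerSeries.coeff k (bb B y) = (B k).eval y * ((k.factorial : ℚ))⁻¹ :=
  PowerSeries.coeff_mk _ _

lemma EE_ne (N : ℕ) : EE N ≠ 0 := by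
  intro h
  have := congrArg (PowerSeries.coeff N) h
  simp [EE, Nat.factorial_ne_zero] at this

variable {N : ℕ} {B : ℕ → Polynomial ℚ}

/-- The generating-function characterization, as a power series identity. -/
lemma key (hB : ∀ m : ℕ, ∑ k ∈ Finset.range (m + 1),
      (if N ≤ m - k then ((k.factorial * (m - k).factorial : ℚ))⁻¹ • B k else 0)
    = if N ≤ m then ((N.factorial * (m - N).factorial : ℚ))⁻¹ • (Polynomial.X ^ (m - N))
      else 0) (y : ℚ) :
    bb B y * EE N = PowerSeries.C ((N.factorial : ℚ))⁻¹ * (X ^ N * rescale y (exp ℚ)) := by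
  ext m
  have h := congrArg (Polynomial.eval y) (hB m)
  simp only [Polynomial.eval_finset_sum, apply_ite (Polynomial.eval y), Polynomial.eval_smul,
    Polynomial.eval_zero, Polynomial.eval_pow, Polynomial.eval_X, smul_eq_mul] at h
  rw [PowerSeries.coeff_mul, Finset.Nat.sum_antidiagonal_eq_sum_range_succ_mk]
  rw [PowerSeries.coeff_C_mul, PowerSeries.coeff_X_pow_mul']
  simp only [bb, EE, PowerSeries.coeff_mk] at *
  calc ∑ k ∈ Finset.range (m + 1), (B k).eval y * ((k.factorial : ℚ))⁻¹ *
          (if N ≤ m - k then (((m - k).factorial : ℚ))⁻¹ else 0)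
      = ∑ k ∈ Finset.range (m + 1),
          (if N ≤ m - k then ((k.factorial * (m - k).factorial : ℚ))⁻¹ * (B k).eval y else 0) := by
        refine Finset.sum_congr rfl fun k _ => ?_
        split_ifs with hk
        · rw [mul_inv]; ring
        · rw [mul_zero]
    _ = (N.factorial : ℚ)⁻¹ *
          (if N ≤ m then PowerSeries.coeff (m - N) (rescale y (exp ℚ)) else 0) := by
        rw [h]
        split_ifs with hm
        · rw [PowerSeries.coeff_rescale, PowerSeries.coeff_exp, mul_inv]
          simp [div_eq_mul_inv]
          ring
        · rw [mul_zero]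

lemma b0E (hB : ∀ m : ℕ, ∑ k ∈ Finset.range (m + 1),
      (if N ≤ m - k then ((k.factorial * (m - k).factorial : ℚ))⁻¹ • B k else 0)
    = if N ≤ m then ((N.factorial * (m - N).factorial : ℚ))⁻¹ • (Polynomial.X ^ (m - N))
      else 0) :
    bb B 0 * EE N = PowerSeries.C ((N.factorial : ℚ))⁻¹ * X ^ N := by
  have h := key hB 0
  rwa [rescale_zero, RingHom.comp_apply, PowerSeries.constantCoeff_exp, map_one, mul_one] at h

lemma dEE (hN : 1 ≤ N) :
    d⁄dX ℚ (EE N) = EE N + PowerSeries.C (((N - 1).factorial : ℚ))⁻¹ * X ^ (N - 1) := by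
  ext k
  rw [PowerSeries.coeff_derivative]
  simp only [EE, PowerSeries.coeff_mk, map_add, PowerSeries.coeff_C_mul, PowerSeries.coeff_X_pow]
  rcases le_or_gt N k with h | h
  · rw [if_pos (h.trans k.le_succ), if_pos h, if_neg (by omega), mul_zero, add_zero,
      Nat.factorial_succ]
    push_cast
    rw [mul_inv]
    field_simp
  · rcases eq_or_lt_of_le (Nat.succ_le_of_lt h) with h1 | h1
    · rw [if_pos (by omega), if_neg (by omega), if_pos (by omega), mul_one, zero_add]
      have hk : k = N - 1 := by omega
      subst hk
      rw [Nat.factorial_succ]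
      push_cast
      rw [mul_inv]
      field_simp
    · rw [if_neg (by omega), if_neg (by omega), if_neg (by omega), zero_mul, mul_zero, add_zero]

lemma dExp (y : ℚ) : d⁄dX ℚ (rescale y (exp ℚ)) = PowerSeries.C y * rescale y (exp ℚ) := by
  ext k
  rw [PowerSeries.coeff_derivative, PowerSeries.coeff_C_mul, PowerSeries.coeff_rescale,
    PowerSeries.coeff_rescale, PowerSeries.coeff_exp, PowerSeries.coeff_exp]
  simp only [Algebra.algebraMap_self, RingHom.id_apply]
  rw [Nat.factorial_succ]
  push_cast
  field_simp
  ring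

variable (hB : ∀ m : ℕ, ∑ k ∈ Finset.range (m + 1),
      (if N ≤ m - k then ((k.factorial * (m - k).factorial : ℚ))⁻¹ • B k else 0)
    = if N ≤ m then ((N.factorial * (m - N).factorial : ℚ))⁻¹ • (Polynomial.X ^ (m - N))
      else 0)
include hB

lemma star (hN : 1 ≤ N) (y : ℚ) :
    X * (d⁄dX ℚ (bb B y)) + X * bb B y + PowerSeries.C (N : ℚ) * (bb B 0 * bb B y)
      = PowerSeries.C (N : ℚ) * bb B y + PowerSeries.C y * (X * bb B y) := by
  apply mul_right_cancel₀ (EE_ne N)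
  have hd := congrArg (d⁄dX ℚ) (key hB y)
  rw [Derivation.leibniz, Derivation.leibniz, Derivation.leibniz, dEE hN, dExp y,
    Derivation.leibniz_pow, derivative_X, derivative_C] at hd
  simp only [smul_eq_mul, mul_one, smul_zero, add_zero, mul_zero, zero_add, nsmul_eq_mul] at hd
  rw [show ((N : PowerSeries ℚ)) = PowerSeries.C (N : ℚ) from (map_natCast _ _).symm] at hd
  have hc : PowerSeries.C (N : ℚ) * PowerSeries.C ((N.factorial : ℚ))⁻¹
      = PowerSeries.C (((N - 1).factorial : ℚ))⁻¹ := by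
    rw [← map_mul]
    congr 1
    have h1 : (N.factorial : ℚ) = (N : ℚ) * ((N - 1).factorial : ℚ) := by
      rw [← Nat.mul_factorial_pred (by omega : N ≠ 0)]; push_cast; ring
    have h2 : (N : ℚ) ≠ 0 := by positivity
    rw [h1, mul_inv]
    field_simp
  have hXN : (X : PowerSeries ℚ) * X ^ (N - 1) = X ^ N := by
    rw [← pow_succ']
    congr 1
    omega
  have hkey := key hB y
  have hb0 := b0E hB
  linear_combination (exp := 1) X * hd + ((X : PowerSeries ℚ) ^ N * bb B y) * hc
    - (bb B y * PowerSeries.C (((N - 1).factorial : ℚ))⁻¹) * hXN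
    + (PowerSeries.C (N : ℚ) * PowerSeries.C ((N.factorial : ℚ))⁻¹ * rescale y (exp ℚ)) * hXN
    - PowerSeries.C (N : ℚ) * hkey - PowerSeries.C y * X * hkey
    + PowerSeries.C (N : ℚ) * bb B y * hb0

lemma triple (x₁ x₂ x₃ : ℚ) :
    bb B x₁ * bb B x₂ * bb B x₃ = bb B (x₁ + x₂ + x₃) * (bb B 0 * bb B 0) := by
  apply mul_right_cancel₀ (mul_ne_zero (mul_ne_zero (EE_ne N) (EE_ne N)) (EE_ne N))
  have k1 := key hB x₁
  have k2 := key hB x₂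
  have k3 := key hB x₃
  have kx := key hB (x₁ + x₂ + x₃)
  have h12 := exp_mul_exp_eq_exp_add (A := ℚ) x₁ x₂
  have h123 := exp_mul_exp_eq_exp_add (A := ℚ) (x₁ + x₂) x₃
  have hb0 := b0E hB
  set E := EE N with hE
  set c := PowerSeries.C ((N.factorial : ℚ))⁻¹ with hc
  set P : PowerSeries ℚ := X ^ N with hP
  linear_combination (bb B x₂ * bb B x₃ * E * E) * k1
    + (c * P * rescale x₁ (exp ℚ) * bb B x₃ * E) * k2
    + (c * c * P * P * rescale x₁ (exp ℚ) * rescale x₂ (exp ℚ)) * k3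
    + (c^3 * P^3 * rescale x₃ (exp ℚ)) * h12
    + (c^3 * P^3) * h123
    - (c^2 * P^2) * kx
    - (c * P * bb B (x₁ + x₂ + x₃) * E) * hb0
    - (bb B 0 * bb B (x₁ + x₂ + x₃) * E * E) * hb0

lemma starD (hN : 1 ≤ N) (y : ℚ) :
    d⁄dX ℚ (bb B y) + X * (d⁄dX ℚ (d⁄dX ℚ (bb B y))) + bb B y + X * (d⁄dX ℚ (bb B y))
        + PowerSeries.C (N : ℚ) * (bb B 0 * (d⁄dX ℚ (bb B y)) + bb B y * (d⁄dX ℚ (bb B 0)))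
      = PowerSeries.C (N : ℚ) * (d⁄dX ℚ (bb B y))
        + PowerSeries.C y * (bb B y + X * (d⁄dX ℚ (bb B y))) := by
  have h := congrArg (d⁄dX ℚ) (star hB hN y)
  simp only [map_add, Derivation.leibniz, derivative_X, derivative_C, smul_eq_mul, mul_one,
    smul_zero, add_zero, mul_zero, zero_add, zero_mul] at h
  linear_combination h

lemma master (hN : 1 ≤ N) (x : ℚ) :
    2 * PowerSeries.C (N : ℚ) ^ 2 * (bb B x * (bb B 0 * bb B 0))
      = 2 * PowerSeries.C (N : ℚ) ^ 2 * bb B x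
        + (2 * PowerSeries.C (N : ℚ) * (PowerSeries.C x - 1)
            + PowerSeries.C (N : ℚ) * (PowerSeries.C x - 2)
            - (PowerSeries.C x - 1)) * (X * bb B x)
        + (PowerSeries.C x - 1) * (PowerSeries.C x - 2) * (X ^ 2 * bb B x)
        - (3 * PowerSeries.C (N : ℚ) - 1) * (X * (d⁄dX ℚ (bb B x)))
        - (2 * PowerSeries.C x - 3) * (X ^ 2 * (d⁄dX ℚ (bb B x)))
        + X ^ 2 * (d⁄dX ℚ (d⁄dX ℚ (bb B x))) := by
  have R1 := star hB hN x
  have R2 := star hB hN 0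
  have R3 := starD hB hN x
  rw [map_zero] at R2
  linear_combination (PowerSeries.C (N : ℚ) * bb B 0 + (PowerSeries.C x - 2) * X
      + 2 * PowerSeries.C (N : ℚ)) * R1
    + PowerSeries.C (N : ℚ) * bb B x * R2 - X * R3

end HGBAux

lemma hgb_sum_tuple_three {M : Type*} [AddCommMonoid M] (n : ℕ) (F : ℕ → ℕ → ℕ → M) :
    ∑ iv ∈ Finset.Nat.antidiagonalTuple 3 n, F (iv 0) (iv 1) (iv 2)
      = ∑ p ∈ Finset.HasAntidiagonal.antidiagonal n, ∑ q ∈ Finset.HasAntidiagonal.antidiagonal p.2, F p.1 q.1 q.2 := by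
  rw [Finset.sum_sigma']
  refine Finset.sum_nbij' (fun iv => ⟨(iv 0, iv 1 + iv 2), (iv 1, iv 2)⟩)
    (fun p => ![p.1.1, p.2.1, p.2.2]) ?_ ?_ ?_ ?_ ?_
  · intro iv hiv
    rw [Finset.Nat.mem_antidiagonalTuple, Fin.sum_univ_three] at hiv
    simp [Finset.mem_sigma, Finset.HasAntidiagonal.mem_antidiagonal, ← hiv, add_assoc]
  · rintro ⟨⟨a, b⟩, ⟨c, d⟩⟩ hp
    simp only [Finset.mem_sigma, Finset.HasAntidiagonal.mem_antidiagonal] at hp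
    rw [Finset.Nat.mem_antidiagonalTuple, Fin.sum_univ_three]
    simp only [Matrix.cons_val_zero, Matrix.cons_val_one, Matrix.head_cons,
      Matrix.cons_val_two, Matrix.tail_cons]
    omega
  · intro iv hiv
    funext i
    fin_cases i <;> rfl
  · rintro ⟨⟨a, b⟩, ⟨c, d⟩⟩ hp
    simp only [Finset.mem_sigma, Finset.HasAntidiagonal.mem_antidiagonal] at hp
    ext : 1 <;> simp
    omega
  · intro iv hiv
    rfl

/-- Sums of products of three hypergeometric Bernoulli polynomials, for `n ≥ 2` and
`x = x₁ + x₂ + x₃`.  Here `B n` is the hypergeometric Bernoulli polynomial `B_{N,n}(x)`,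
characterized by the coefficient relations coming from its generating function. -/
theorem sum_products_three_hypergeometric_bernoulli_polynomials
    (N n : ℕ) (hN : 1 ≤ N) (hn : 2 ≤ n) (x₁ x₂ x₃ : ℚ)
    (B : ℕ → Polynomial ℚ)
    (hB : ∀ m : ℕ, ∑ k ∈ Finset.range (m + 1),
        (if N ≤ m - k then ((k.factorial * (m - k).factorial : ℚ))⁻¹ • B k else 0)
      = if N ≤ m then ((N.factorial * (m - N).factorial : ℚ))⁻¹ • (Polynomial.X ^ (m - N))
        else 0) :
    ∑ iv ∈ Finset.Nat.antidiagonalTuple 3 n,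
        ((n.factorial : ℚ) / (((iv 0).factorial : ℚ) * ((iv 1).factorial : ℚ)
            * ((iv 2).factorial : ℚ)))
          * (B (iv 0)).eval x₁ * (B (iv 1)).eval x₂ * (B (iv 2)).eval x₃
      = (1 / (2 * (N : ℚ) ^ 2)) *
          (((N : ℚ) - n) * (2 * (N : ℚ) - n) * (B n).eval (x₁ + x₂ + x₃)
            + (n : ℚ) * ((2 * (N : ℚ) - n) * ((x₁ + x₂ + x₃) - 1)
                + ((x₁ + x₂ + x₃) - 2) * ((N : ℚ) - n + 1)) * (B (n - 1)).eval (x₁ + x₂ + x₃)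
            + (n : ℚ) * ((n : ℚ) - 1) * ((x₁ + x₂ + x₃) - 1) * ((x₁ + x₂ + x₃) - 2)
                * (B (n - 2)).eval (x₁ + x₂ + x₃)) := by
  obtain ⟨m, rfl⟩ : ∃ m, n = m + 2 := ⟨n - 2, by omega⟩
  set x : ℚ := x₁ + x₂ + x₃ with hx
  -- Step 1: the LHS is n! times a coefficient of a triple product of power series
  have hLHS : ∑ iv ∈ Finset.Nat.antidiagonalTuple 3 (m + 2),
        (((m + 2).factorial : ℚ) / (((iv 0).factorial : ℚ) * ((iv 1).factorial : ℚ)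
            * ((iv 2).factorial : ℚ)))
          * (B (iv 0)).eval x₁ * (B (iv 1)).eval x₂ * (B (iv 2)).eval x₃
      = ((m + 2).factorial : ℚ) *
          PowerSeries.coeff (m + 2) (HGBAux.bb B x₁ * (HGBAux.bb B x₂ * HGBAux.bb B x₃)) := by
    rw [hgb_sum_tuple_three (m + 2) (fun a c d =>
      (((m + 2).factorial : ℚ) / ((a.factorial : ℚ) * (c.factorial : ℚ) * (d.factorial : ℚ)))
        * (B a).eval x₁ * (B c).eval x₂ * (B d).eval x₃)]
    rw [PowerSeries.coeff_mul, Finset.mul_sum]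
    refine Finset.sum_congr rfl fun p hp => ?_
    rw [PowerSeries.coeff_mul, Finset.mul_sum, Finset.mul_sum]
    refine Finset.sum_congr rfl fun q hq => ?_
    rw [HGBAux.coeff_bb, HGBAux.coeff_bb, HGBAux.coeff_bb]
    have h1 : ((p.1.factorial : ℚ)) ≠ 0 := Nat.cast_ne_zero.mpr p.1.factorial_ne_zero
    have h2 : ((q.1.factorial : ℚ)) ≠ 0 := Nat.cast_ne_zero.mpr q.1.factorial_ne_zero
    have h3 : ((q.2.factorial : ℚ)) ≠ 0 := Nat.cast_ne_zero.mpr q.2.factorial_ne_zero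
    field_simp
  rw [hLHS, ← mul_assoc, HGBAux.triple hB x₁ x₂ x₃, ← hx]
  -- Step 2: extract the coefficient of the master identity
  have hMeq := HGBAux.master hB hN x
  rw [show (1 : PowerSeries ℚ) = PowerSeries.C 1 from (map_one _).symm,
    show (2 : PowerSeries ℚ) = PowerSeries.C 2 from (map_ofNat _ 2).symm,
    show (3 : PowerSeries ℚ) = PowerSeries.C 3 from (map_ofNat _ 3).symm] at hMeq
  simp only [← map_pow, ← map_mul, ← map_sub, ← map_add] at hMeq
  have hM := congrArg (PowerSeries.coeff (m + 2)) hMeq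
  have cX1 : ∀ f : PowerSeries ℚ, PowerSeries.coeff (m + 2) (PowerSeries.X * f)
      = PowerSeries.coeff (m + 1) f := fun f => PowerSeries.coeff_succ_X_mul (m + 1) f
  have cX2 : ∀ f : PowerSeries ℚ, PowerSeries.coeff (m + 2) (PowerSeries.X ^ 2 * f)
      = PowerSeries.coeff m f := fun f => PowerSeries.coeff_X_pow_mul f 2 m
  simp only [add_mul, sub_mul, map_add, map_sub, PowerSeries.coeff_C_mul, cX1, cX2,
    PowerSeries.coeff_derivative, HGBAux.coeff_bb] at hM
  rw [show ((m + 2).factorial : ℚ) = ((m : ℚ) + 2) * (((m : ℚ) + 1) * (m.factorial : ℚ)) by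
      rw [Nat.factorial_succ, Nat.factorial_succ]; push_cast; ring,
    show ((m + 1).factorial : ℚ) = ((m : ℚ) + 1) * (m.factorial : ℚ) by
      rw [Nat.factorial_succ]; push_cast; ring] at hM
  rw [show ((m + 2).factorial : ℚ) = ((m : ℚ) + 2) * (((m : ℚ) + 1) * (m.factorial : ℚ)) by
      rw [Nat.factorial_succ, Nat.factorial_succ]; push_cast; ring]
  simp only [show m + 1 + 1 = m + 2 from rfl] at hM
  have hm0 : ((m.factorial : ℚ)) ≠ 0 := Nat.cast_ne_zero.mpr m.factorial_ne_zero
  have hm1 : ((m : ℚ) + 1) ≠ 0 := by positivity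
  have hm2 : ((m : ℚ) + 2) ≠ 0 := by positivity
  have hN0 : ((N : ℚ)) ≠ 0 := Nat.cast_ne_zero.mpr (by omega)
  have hK : PowerSeries.coeff (m + 2) (HGBAux.bb B x * (HGBAux.bb B 0 * HGBAux.bb B 0))
      = ((B (m + 2)).eval x * (((m : ℚ) + 2) * (((m : ℚ) + 1) * (m.factorial : ℚ)))⁻¹
          * (2 * (N : ℚ) ^ 2)
        + (2 * (N : ℚ) * (x - 1) + (N : ℚ) * (x - 2) - (x - 1))
            * ((B (m + 1)).eval x * (((m : ℚ) + 1) * (m.factorial : ℚ))⁻¹)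
        + (x - 1) * (x - 2) * ((B m).eval x * ((m.factorial : ℚ))⁻¹)
        - (3 * (N : ℚ) - 1) * ((B (m + 2)).eval x
            * (((m : ℚ) + 2) * (((m : ℚ) + 1) * (m.factorial : ℚ)))⁻¹ * ((m : ℚ) + 2))
        - (2 * x - 3) * ((B (m + 1)).eval x * (((m : ℚ) + 1) * (m.factorial : ℚ))⁻¹
            * ((m : ℚ) + 1))
        + (B (m + 2)).eval x * (((m : ℚ) + 2) * (((m : ℚ) + 1) * (m.factorial : ℚ)))⁻¹
            * ((m : ℚ) + 2) * ((m : ℚ) + 1)) / (2 * (N : ℚ) ^ 2) := by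
    rw [eq_div_iff (by positivity)]
    push_cast at hM ⊢
    linear_combination hM
  rw [hK]
  simp only [show m + 2 - 1 = m + 1 from rfl, show m + 2 - 2 = m from rfl]
  push_cast
  field_simp
  ring
end

section
/- Let N ≥ 1, r ≥ 1 and n ≥ 1 be integers and let y = B_{N,n}^{(r)}(x) ∈ ℚ[x] be the n-th higher order hypergeometric Bernoulli polynomial. Then y satisfies the differential equation ∑_{k=2}^{n} (B_{N,k}/k!) · y^{(k)}(x) − (x/(rN) − 1/(N(N+1))) · y′(x) + (n/(rN)) · y(x) = 0, i.e. (B_{N,n}/n!) y^{(n)} + (B_{N,n−1}/(n−1)!) y^{(n−1)} + ⋯ + (B_{N,2}/2!) y″ − (x/(rN) − 1/(N(N+1))) y′ + (n/(rN)) y = 0 as an identity of polynomials in ℚ[x]. -/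
open Finset Polynomial PowerSeries

private lemma hb_deriv_mul {R : Type*} [CommRing R] (f g : R⟦X⟧) :
    (d⁄dX R) (f * g) = f * (d⁄dX R) g + g * (d⁄dX R) f := by
  rw [show ((d⁄dX R) (f*g) : R⟦X⟧) = PowerSeries.derivativeFun (f*g) from rfl,
    PowerSeries.derivativeFun_mul]
  rfl

private lemma hb_deriv_pow {R : Type*} [CommRing R] (f : R⟦X⟧) (k : ℕ) :
    (d⁄dX R) (f ^ (k+1)) = ((k:R⟦X⟧)+1) * f ^ k * (d⁄dX R) f := by
  induction k with
  | zero => simp [pow_one]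
  | succ k ih =>
    rw [pow_succ, hb_deriv_mul, ih]
    push_cast
    ring

private lemma hb_map_deriv {R S : Type*} [CommSemiring R] [CommSemiring S] (f : R →+* S)
    (g : PowerSeries R) :
    PowerSeries.map f ((d⁄dX R) g) = (d⁄dX S) (PowerSeries.map f g) := by
  ext j
  rw [PowerSeries.coeff_map, PowerSeries.coeff_derivative, PowerSeries.coeff_derivative,
    PowerSeries.coeff_map, map_mul]
  simp [map_natCast]

private lemma hb_deriv_Em :
    (d⁄dX (Polynomial ℚ)) (PowerSeries.mk (fun m => ((m.factorial : ℚ))⁻¹ • (Polynomial.X : Polynomial ℚ) ^ m))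
      = PowerSeries.C Polynomial.X
        * PowerSeries.mk (fun m => ((m.factorial : ℚ))⁻¹ • (Polynomial.X : Polynomial ℚ) ^ m) := by
  apply PowerSeries.ext; intro j
  rw [PowerSeries.coeff_derivative, PowerSeries.coeff_C_mul, PowerSeries.coeff_mk,
    PowerSeries.coeff_mk]
  have hsc : ((j:ℚ)+1) * (((j+1).factorial : ℚ))⁻¹ = ((j.factorial : ℚ))⁻¹ := by
    rw [Nat.factorial_succ]; push_cast; rw [mul_inv]
    have h1 : ((j.factorial : ℚ)) ≠ 0 := Nat.cast_ne_zero.mpr (Nat.factorial_ne_zero _)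
    have h2 : ((j:ℚ)+1) ≠ 0 := by positivity
    field_simp
  have hj : ((j:Polynomial ℚ)+1) = Polynomial.C ((j:ℚ)+1) := by
    rw [map_add, map_one, Polynomial.C_eq_natCast]
  rw [Polynomial.smul_eq_C_mul, Polynomial.smul_eq_C_mul, hj, mul_assoc,
    mul_comm (Polynomial.X ^ (j+1)), ← mul_assoc, ← Polynomial.C_mul,
    mul_comm ((((j+1).factorial : ℚ))⁻¹), hsc]
  ring

private lemma hb_star (N : ℕ) (hN : 1 ≤ N) (F : PowerSeries ℚ)
    (hF : F * (PowerSeries.mk fun j => if N ≤ j then ((j.factorial : ℚ))⁻¹ else 0)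
        = PowerSeries.mk fun j => if j = N then ((N.factorial : ℚ))⁻¹ else 0) :
    PowerSeries.X * (d⁄dX ℚ) F + PowerSeries.X * F
      + PowerSeries.C (N : ℚ) * F * F - PowerSeries.C (N : ℚ) * F = 0 := by
  set E : PowerSeries ℚ := PowerSeries.mk fun j => if N ≤ j then ((j.factorial : ℚ))⁻¹ else 0 with hE
  have hEne : E ≠ 0 := by
    intro h
    have h2 := congrArg (PowerSeries.coeff N) h
    simp [hE, PowerSeries.coeff_mk, Nat.factorial_ne_zero] at h2
  have hFm : F * E = PowerSeries.monomial N ((N.factorial : ℚ))⁻¹ := by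
    rw [hF]; ext j; simp [PowerSeries.coeff_mk, PowerSeries.coeff_monomial]
  have hdE : (d⁄dX ℚ) E = E + PowerSeries.monomial (N-1) (((N-1).factorial : ℚ))⁻¹ := by
    ext j
    rw [PowerSeries.coeff_derivative]
    simp only [hE, PowerSeries.coeff_mk, map_add, PowerSeries.coeff_monomial]
    rcases le_or_gt N j with h | h
    · rw [if_pos (le_trans h (Nat.le_succ j)), if_pos h, if_neg (by omega)]
      rw [Nat.factorial_succ, add_zero]
      push_cast
      rw [mul_inv]
      field_simp
    · rcases eq_or_lt_of_le (Nat.succ_le_of_lt h) with h2 | h2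
      · rw [if_pos (by omega), if_neg (by omega), if_pos (by omega), zero_add]
        have hj : j = N - 1 := by omega
        subst hj
        rw [show N - 1 + 1 = N by omega, show N.factorial = N * (N-1).factorial by
          nth_rewrite 1 [show N = (N-1)+1 by omega]; rw [Nat.factorial_succ, show N-1+1 = N by omega]]
        push_cast
        rw [mul_inv]
        field_simp
        exact_mod_cast (show N-1+1 = N by omega)
      · rw [if_neg (by omega), if_neg (by omega), if_neg (by omega), zero_mul, add_zero]
  have hdM : (d⁄dX ℚ) (PowerSeries.monomial N ((N.factorial : ℚ))⁻¹)
      = PowerSeries.monomial (N-1) (((N-1).factorial : ℚ))⁻¹ := by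
    ext j
    rw [PowerSeries.coeff_derivative]
    simp only [PowerSeries.coeff_monomial]
    rcases eq_or_ne j (N-1) with h | h
    · subst h
      rw [if_pos (by omega), if_pos rfl]
      rw [show N.factorial = N * (N-1).factorial by
        nth_rewrite 1 [show N = (N-1)+1 by omega]; rw [Nat.factorial_succ, show N-1+1 = N by omega]]
      have : ((N-1:ℕ):ℚ) + 1 = (N:ℚ) := by push_cast [Nat.cast_sub hN]; ring
      rw [this]
      push_cast
      rw [mul_inv]
      have h1 : ((N-1).factorial : ℚ) ≠ 0 := Nat.cast_ne_zero.mpr (Nat.factorial_ne_zero _)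
      have h2 : (N:ℚ) ≠ 0 := Nat.cast_ne_zero.mpr (by omega)
      field_simp
    · rw [if_neg (by omega), if_neg h, zero_mul]
  have key1 : (d⁄dX ℚ) F * E + F * ((d⁄dX ℚ) E)
      = PowerSeries.monomial (N-1) (((N-1).factorial : ℚ))⁻¹ := by
    have h := congrArg (d⁄dX ℚ) hFm
    rw [Derivation.leibniz, hdM, smul_eq_mul, smul_eq_mul] at h
    linear_combination h
  have key2 : (d⁄dX ℚ) F * E + F * E + F * PowerSeries.monomial (N-1) (((N-1).factorial : ℚ))⁻¹
      = PowerSeries.monomial (N-1) (((N-1).factorial : ℚ))⁻¹ := by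
    rw [hdE] at key1
    linear_combination key1
  have hXmon : (PowerSeries.X : PowerSeries ℚ) * PowerSeries.monomial (N-1) (((N-1).factorial : ℚ))⁻¹
      = PowerSeries.C (N : ℚ) * (F * E) := by
    rw [hFm]
    ext j
    rw [PowerSeries.coeff_C_mul]
    rcases eq_or_ne j N with h | h
    · rw [h, (by omega : (N:ℕ) = (N-1)+1), PowerSeries.coeff_succ_X_mul]
      simp only [PowerSeries.coeff_monomial, if_pos rfl, if_pos (by omega : N-1+1 = N-1+1)]
      rw [show N-1+1 = N by omega, show N.factorial = N * (N-1).factorial by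
        nth_rewrite 1 [show N = (N-1)+1 by omega]; rw [Nat.factorial_succ, show N-1+1 = N by omega]]
      push_cast
      rw [mul_inv]
      have h1 : ((N-1).factorial : ℚ) ≠ 0 := Nat.cast_ne_zero.mpr (Nat.factorial_ne_zero _)
      have h2 : (N:ℚ) ≠ 0 := Nat.cast_ne_zero.mpr (by omega)
      field_simp
      rw [if_pos trivial, mul_one_div_cancel h1]
    · rcases Nat.eq_zero_or_pos j with h0 | h0
      · subst h0
        simp only [PowerSeries.coeff_monomial]
        rw [PowerSeries.coeff_zero_eq_constantCoeff, map_mul, PowerSeries.constantCoeff_X,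
          zero_mul, if_neg (by omega), mul_zero]
      · rw [(by omega : j = (j-1)+1), PowerSeries.coeff_succ_X_mul]
        simp only [PowerSeries.coeff_monomial]
        rw [if_neg (by omega), if_neg (by omega), mul_zero]
  have hmz : ((d⁄dX ℚ) F * PowerSeries.X + PowerSeries.X * F + PowerSeries.C (N : ℚ) * F * F
      - PowerSeries.C (N : ℚ) * F) * E = 0 := by
    linear_combination (PowerSeries.X : PowerSeries ℚ) * key2 + (1 - F) * hXmon
  rcases mul_eq_zero.mp hmz with h | h
  · linear_combination h
  · exact absurd h hEne

/-- Theorem 4: the higher order hypergeometric Bernoulli polynomial `y = B_{N,n}^{(r)}(x)`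
satisfies the differential equation
`(B_{N,n}/n!) y⁽ⁿ⁾ + ⋯ + (B_{N,2}/2!) y'' - (x/(rN) - 1/(N(N+1))) y' + (n/(rN)) y = 0`.
Here `F` is the exponential generating function of the hypergeometric Bernoulli numbers,
i.e. the unique power series with `F·(e^t - T_{N-1}(t)) = t^N/N!`, the numbers `B m = B_{N,m}`
are its scaled coefficients, and `Br m = B_{N,m}^{(r)}(x)` is the family of polynomials whose
exponential generating function is `F^r · e^{xt}`. -/
theorem hypergeometric_bernoulli_differential_equation
    (N r n : ℕ) (hN : 1 ≤ N) (hr : 1 ≤ r) (hn : 1 ≤ n)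
    (F : PowerSeries ℚ)
    (hF : F * (PowerSeries.mk fun j => if N ≤ j then ((j.factorial : ℚ))⁻¹ else 0)
        = PowerSeries.mk fun j => if j = N then ((N.factorial : ℚ))⁻¹ else 0)
    (B : ℕ → ℚ)
    (hB : ∀ m : ℕ, B m = (m.factorial : ℚ) * PowerSeries.coeff m F)
    (Br : ℕ → Polynomial ℚ)
    (hBr : PowerSeries.mk (fun m => ((m.factorial : ℚ))⁻¹ • Br m)
        = (PowerSeries.map (Polynomial.C : ℚ →+* Polynomial ℚ) F) ^ r
            * PowerSeries.mk (fun m => ((m.factorial : ℚ))⁻¹ • (Polynomial.X : Polynomial ℚ) ^ m)) :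
    ∑ k ∈ Finset.Icc 2 n, Polynomial.C (B k / (k.factorial : ℚ))
        * (Polynomial.derivative^[k] (Br n))
      - (Polynomial.C (((r : ℚ) * N)⁻¹) * Polynomial.X
          - Polynomial.C (((N : ℚ) * ((N : ℚ) + 1))⁻¹)) * Polynomial.derivative (Br n)
      + Polynomial.C ((n : ℚ) / ((r : ℚ) * N)) * Br n = 0 := by
  classical
  -- setup
  set Fp : PowerSeries (Polynomial ℚ) := PowerSeries.map (Polynomial.C : ℚ →+* Polynomial ℚ) F with hFp
  set Em : PowerSeries (Polynomial ℚ) :=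
    PowerSeries.mk (fun m => ((m.factorial : ℚ))⁻¹ • (Polynomial.X : Polynomial ℚ) ^ m) with hEm
  set G : PowerSeries (Polynomial ℚ) := Fp ^ r * Em with hG
  set cr : PowerSeries (Polynomial ℚ) := PowerSeries.C (Polynomial.C (r:ℚ)) with hcrdef
  set cN : PowerSeries (Polynomial ℚ) := PowerSeries.C (Polynomial.C (N:ℚ)) with hcNdef
  set cx : PowerSeries (Polynomial ℚ) := PowerSeries.C Polynomial.X with hcxdef
  set u : ℕ → Polynomial ℚ := fun j => ((j.factorial : ℚ))⁻¹ • Br j with hu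
  have hGu : PowerSeries.mk u = G := hBr
  have starP : PowerSeries.X * (d⁄dX (Polynomial ℚ)) Fp + PowerSeries.X * Fp
      + cN * Fp * Fp - cN * Fp = 0 := by
    have h := congrArg (PowerSeries.map (Polynomial.C : ℚ →+* Polynomial ℚ)) (hb_star N hN F hF)
    simpa [map_mul, map_add, map_sub, PowerSeries.map_X, hb_map_deriv,
      PowerSeries.map_C, hFp, hcNdef] using h
  have hcr : (r : PowerSeries (Polynomial ℚ)) = cr := by
    rw [hcrdef, show (Polynomial.C (r:ℚ)) = ((r:ℕ):Polynomial ℚ) from by push_cast; rfl, map_natCast]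
  have hQ : Fp ^ r = Fp ^ (r-1) * Fp := by rw [← pow_succ, Nat.sub_add_cancel hr]
  have hdEm : (d⁄dX (Polynomial ℚ)) Em = cx * Em := by
    rw [hEm, hcxdef]; exact hb_deriv_Em
  have hdG : (d⁄dX (Polynomial ℚ)) G = Fp ^ r * (cx * Em)
      + cr * (Fp ^ (r-1) * ((d⁄dX (Polynomial ℚ)) Fp * Em)) := by
    rw [hG, hb_deriv_mul, hdEm, show Fp ^ r = Fp ^ ((r-1)+1) from by rw [Nat.sub_add_cancel hr],
      hb_deriv_pow]
    rw [show (((r-1:ℕ):PowerSeries (Polynomial ℚ))+1) = cr from by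
      rw [← hcr]; push_cast [Nat.cast_sub hr]; ring]
    ring
  have main : cr * (cN * (Fp * G)) = cx * (PowerSeries.X * G) - cr * (PowerSeries.X * G)
      + cr * (cN * G) - PowerSeries.X * (d⁄dX (Polynomial ℚ)) G := by
    rw [hG] at hdG ⊢
    linear_combination (PowerSeries.X : PowerSeries (Polynomial ℚ)) * hdG
      + cr * Fp^(r-1) * Em * starP
      + (cr*cN*Fp*Em + cr*PowerSeries.X*Em - cr*cN*Em) * hQ
  obtain ⟨m, rfl⟩ : ∃ m, n = m + 1 := ⟨n-1, by omega⟩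
  have hc := congrArg (PowerSeries.coeff (m+1)) main
  rw [hcrdef, hcNdef, hcxdef, ← hGu, hFp] at hc
  simp only [map_sub, map_add, PowerSeries.coeff_C_mul, PowerSeries.coeff_succ_X_mul,
    PowerSeries.coeff_derivative] at hc
  rw [PowerSeries.coeff_mul, Finset.Nat.sum_antidiagonal_eq_sum_range_succ_mk] at hc
  simp only [PowerSeries.coeff_map, PowerSeries.coeff_mk, Nat.succ_eq_add_one] at hc
  -- basic nonvanishing facts
  have hfac : ∀ k : ℕ, ((k.factorial : ℚ)) ≠ 0 := fun k => Nat.cast_ne_zero.mpr (Nat.factorial_ne_zero _)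
  have hNQ : (N:ℚ) ≠ 0 := Nat.cast_ne_zero.mpr (by omega)
  have hrQ : (r:ℚ) ≠ 0 := Nat.cast_ne_zero.mpr (by omega)
  have hN1Q : ((N:ℚ)+1) ≠ 0 := by positivity
  -- the first two coefficients of F
  have hF0 : PowerSeries.coeff 0 F = 1 := by
    have h := congrArg (PowerSeries.coeff N) hF
    rw [PowerSeries.coeff_mul, Finset.Nat.sum_antidiagonal_eq_sum_range_succ_mk] at h
    simp only [PowerSeries.coeff_mk] at h
    rw [Finset.sum_eq_single 0 (by
      intro b hb hb0
      rw [if_neg (by simp at hb; omega), mul_zero]) (by simp)] at h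
    simp only [Nat.sub_zero, le_refl, if_true, if_pos] at h
    have := hfac N
    field_simp at h
    rw [PowerSeries.coeff_zero_eq_constantCoeff]
    simpa [PowerSeries.coeff_zero_eq_constantCoeff] using h
  have hF1 : PowerSeries.coeff 1 F = -((N:ℚ)+1)⁻¹ := by
    have h := congrArg (PowerSeries.coeff (N+1)) hF
    rw [PowerSeries.coeff_mul, Finset.Nat.sum_antidiagonal_eq_sum_range_succ_mk] at h
    simp only [PowerSeries.coeff_mk] at h
    rw [Finset.sum_range_succ', Finset.sum_range_succ'] at h
    rw [Finset.sum_eq_zero (by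
      intro k hk
      rw [if_neg (by simp at hk; omega), mul_zero])] at h
    rw [zero_add] at h
    norm_num at h
    rw [show (PowerSeries.constantCoeff) F = 1 from
      by rw [← PowerSeries.coeff_zero_eq_constantCoeff]; exact hF0] at h
    have h1 := hfac N
    rw [Nat.factorial_succ] at h
    push_cast at h
    field_simp at h
    have hne : (((N:ℚ)+1) * (N.factorial:ℚ)) ≠ 0 := mul_ne_zero hN1Q h1
    apply mul_right_cancel₀ hne
    linear_combination (N.factorial:ℚ) * h + (N.factorial:ℚ) * mul_inv_cancel₀ hN1Q
  -- derivative recurrence for Br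
  have hterm : ∀ s : ℕ, Polynomial.derivative ((((s+1).factorial : ℚ))⁻¹ • (Polynomial.X : Polynomial ℚ) ^ (s+1))
      = ((s.factorial : ℚ))⁻¹ • (Polynomial.X : Polynomial ℚ) ^ s := by
    intro s
    rw [Polynomial.derivative_smul, Polynomial.derivative_X_pow]
    rw [Polynomial.smul_eq_C_mul, Polynomial.smul_eq_C_mul, ← mul_assoc, ← Polynomial.C_mul,
      Nat.add_sub_cancel]
    congr 2
    rw [Nat.factorial_succ]
    push_cast
    rw [mul_inv]
    field_simp
  have hcoeffG : ∀ j : ℕ, ((j.factorial : ℚ))⁻¹ • Br j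
      = ∑ k ∈ Finset.range (j+1), Polynomial.C (PowerSeries.coeff k (F^r))
          * ((((j-k).factorial : ℚ))⁻¹ • (Polynomial.X : Polynomial ℚ) ^ (j-k)) := by
    intro j
    have h := congrArg (PowerSeries.coeff j) hGu
    rw [hG, hFp, hEm,
      show (PowerSeries.map (Polynomial.C : ℚ →+* Polynomial ℚ) F) ^ r
        = PowerSeries.map (Polynomial.C : ℚ →+* Polynomial ℚ) (F ^ r) from (map_pow _ _ _).symm,
      PowerSeries.coeff_mul, Finset.Nat.sum_antidiagonal_eq_sum_range_succ_mk,
      PowerSeries.coeff_mk] at h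
    simp only [PowerSeries.coeff_map, PowerSeries.coeff_mk, hu] at h
    exact h
  have hdu : ∀ j : ℕ, Polynomial.derivative ((((j+1).factorial : ℚ))⁻¹ • Br (j+1))
      = ((j.factorial : ℚ))⁻¹ • Br j := by
    intro j
    rw [hcoeffG (j+1), hcoeffG j, map_sum, Finset.sum_range_succ]
    rw [Nat.sub_self]
    simp only [pow_zero, Nat.factorial_zero, Nat.cast_one, inv_one, one_smul, mul_one,
      Polynomial.derivative_C, add_zero]
    apply Finset.sum_congr rfl
    intro k hk
    have hk' : k ≤ j := by simp at hk; omega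
    rw [Polynomial.derivative_C_mul, show j + 1 - k = (j-k)+1 by omega, hterm]
  have hder : ∀ j : ℕ, Polynomial.derivative (Br (j+1)) = ((j:ℚ)+1) • Br j := by
    intro j
    have h := hdu j
    rw [Polynomial.derivative_smul] at h
    have h2 := congrArg (fun p => (((j+1).factorial : ℚ)) • p) h
    simp only [smul_smul] at h2
    rw [mul_inv_cancel₀ (hfac (j+1)), one_smul, Nat.factorial_succ] at h2
    rw [h2]
    congr 1
    push_cast
    field_simp
  have hiter : ∀ k : ℕ, k ≤ m+1 → Polynomial.derivative^[k] (Br (m+1))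
      = ((((m+1).factorial : ℚ)) * ((((m+1-k).factorial : ℚ))⁻¹)) • Br (m+1-k) := by
    intro k
    induction k with
    | zero =>
      intro _
      simp only [Function.iterate_zero, id_eq, Nat.sub_zero]
      rw [mul_inv_cancel₀ (hfac (m+1)), one_smul]
    | succ k ih =>
      intro hk1
      rw [Function.iterate_succ_apply', ih (by omega), Polynomial.derivative_smul,
        show m+1-k = (m-k)+1 by omega, hder (m-k)]
      rw [smul_smul]
      rw [show m+1-(k+1) = m-k by omega]
      congr 1
      rw [Nat.factorial_succ (m-k)]
      push_cast
      have := hfac (m-k)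
      field_simp
  have hBk : ∀ k : ℕ, B k / (k.factorial : ℚ) = PowerSeries.coeff k F := by
    intro k
    rw [hB k, mul_comm, mul_div_assoc, div_self (hfac k), mul_one]
  -- split the sum in hc
  have hsplit : (∑ k ∈ Finset.range (m+1+1), Polynomial.C (PowerSeries.coeff k F) * u (m+1-k))
      = Polynomial.C (PowerSeries.coeff 0 F) * u (m+1)
        + Polynomial.C (PowerSeries.coeff 1 F) * u m
        + ∑ k ∈ Finset.Icc 2 (m+1), Polynomial.C (PowerSeries.coeff k F) * u (m+1-k) := by
    rw [Finset.range_eq_Ico,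
      ← Finset.sum_Ico_consecutive _ (by omega : (0:ℕ) ≤ 2) (by omega : 2 ≤ m+1+1),
      ← Finset.Ico_add_one_right_eq_Icc 2 (m+1)]
    congr 1
    rw [show Finset.Ico 0 2 = Finset.range 2 from (Finset.range_eq_Ico 2).symm,
      Finset.sum_range_succ, Finset.sum_range_one]
    norm_num
  rw [hsplit, hF0, hF1] at hc
  -- rewrite the goal
  rw [hder m]
  have hsum2 : ∑ k ∈ Finset.Icc 2 (m+1), Polynomial.C (B k / (k.factorial : ℚ))
        * (Polynomial.derivative^[k] (Br (m+1)))
      = (((m+1).factorial : ℚ)) • ∑ k ∈ Finset.Icc 2 (m+1),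
          Polynomial.C (PowerSeries.coeff k F) * u (m+1-k) := by
    rw [Finset.smul_sum]
    apply Finset.sum_congr rfl
    intro k hk
    have hk2 : 2 ≤ k ∧ k ≤ m+1 := by simpa using hk
    rw [hiter k hk2.2, hBk k]
    simp only [hu]
    simp only [← Polynomial.smul_eq_C_mul, smul_mul_assoc, mul_smul_comm, smul_smul]
    match_scalars
    ring
  rw [hsum2]
  -- conclude using hc
  have key := congrArg
    (fun z : Polynomial ℚ => ((((m+1).factorial : ℚ)) * (((r:ℚ)*(N:ℚ))⁻¹)) • z)
    (sub_eq_zero_of_eq hc)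
  simp only [smul_zero] at key
  rw [← key]
  rw [mul_comm (u (m+1)) ((m:Polynomial ℚ)+1)]
  simp only [hu, show ((m:Polynomial ℚ)+1) = Polynomial.C ((m:ℚ)+1) from
      by rw [map_add, map_one, Polynomial.C_eq_natCast],
    map_one, one_mul, sub_mul, mul_sub, add_mul, mul_add,
    ← Polynomial.smul_eq_C_mul, smul_mul_assoc, mul_smul_comm, smul_smul, smul_sub, smul_add]
  have hfs : (((m+1).factorial : ℚ)) = ((m:ℚ)+1) * (m.factorial : ℚ) := by
    rw [Nat.factorial_succ]; push_cast; ring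
  match_scalars <;> (rw [hfs]; push_cast; field_simp <;> ring)
end

section
/- Let r ≥ 1 and n ≥ 1 be integers and let y = B_n^{(r)}(x) ∈ ℚ[x] be the n-th classical higher order Bernoulli polynomial. Then y satisfies the differential equation ∑_{k=2}^{n} (B_k(1)/k!) · y^{(k)}(x) − (x/r − 1/2) · y′(x) + (n/r) · y(x) = 0 as an identity of polynomials in ℚ[x], where B_k(1) denotes the k-th Bernoulli polynomial evaluated at 1. -/
open Finset Polynomial PowerSeries

noncomputable def pd (f : PowerSeries (Polynomial ℚ)) : PowerSeries (Polynomial ℚ) :=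
  PowerSeries.mk fun n => Polynomial.derivative (PowerSeries.coeff n f)

lemma pd_coeff (f : PowerSeries (Polynomial ℚ)) (n : ℕ) :
    PowerSeries.coeff n (pd f) = Polynomial.derivative (PowerSeries.coeff n f) := by
  simp [pd]

lemma pd_mul (f g : PowerSeries (Polynomial ℚ)) : pd (f * g) = pd f * g + f * pd g := by
  ext n
  simp only [pd_coeff, map_add, PowerSeries.coeff_mul, map_sum, derivative_mul]
  rw [Finset.sum_add_distrib]

lemma pd_one : pd 1 = 0 := by
  ext n
  simp only [pd_coeff, PowerSeries.coeff_one]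
  split <;> simp

lemma pd_pow_eq_zero {f : PowerSeries (Polynomial ℚ)} (h : pd f = 0) (k : ℕ) :
    pd (f ^ k) = 0 := by
  induction k with
  | zero => simpa using pd_one
  | succ k ih => rw [pow_succ, pd_mul, ih, h, mul_zero, zero_mul, add_zero]

lemma derivativeFun_pow {R : Type*} [CommRing R] (f : PowerSeries R) (k : ℕ) :
    PowerSeries.derivativeFun (f ^ k)
      = k • (f ^ (k - 1) * PowerSeries.derivativeFun f) := by
  induction k with
  | zero => simpa using PowerSeries.derivativeFun_one
  | succ k ih =>
    rw [pow_succ, PowerSeries.derivativeFun_mul, ih]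
    cases k with
    | zero => simp
    | succ k =>
      simp only [smul_eq_mul, Nat.succ_sub_one, nsmul_eq_mul]
      push_cast
      ring

/-- Lu's theorem: the classical higher order Bernoulli polynomial `y = B_n^{(r)}(x)` satisfies
the differential equation
`(B_n(1)/n!) y⁽ⁿ⁾ + ⋯ + (B_2(1)/2!) y'' - (x/r - 1/2) y' + (n/r) y = 0`,
where `B_k(1)` is the `k`-th Bernoulli polynomial evaluated at `1`.
Here `Br m = B_m^{(r)}(x)` is the family of polynomials whose exponential generating function
`G(t)` satisfies `G(t)·(e^t - 1)^r = t^r · e^{xt}` in `ℚ[x]⟦t⟧`. -/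
theorem higher_order_bernoulli_differential_equation
    (r n : ℕ) (hr : 1 ≤ r) (hn : 1 ≤ n)
    (Br : ℕ → Polynomial ℚ)
    (hBr : PowerSeries.mk (fun m => ((m.factorial : ℚ))⁻¹ • Br m)
          * (PowerSeries.mk (fun j => if j = 0 then 0
              else Polynomial.C ((j.factorial : ℚ))⁻¹)) ^ r
        = (PowerSeries.X : PowerSeries (Polynomial ℚ)) ^ r
            * PowerSeries.mk (fun m => ((m.factorial : ℚ))⁻¹ • (Polynomial.X : Polynomial ℚ) ^ m)) :
    ∑ k ∈ Finset.Icc 2 n, Polynomial.C ((Polynomial.bernoulli k).eval 1 / (k.factorial : ℚ))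
        * (Polynomial.derivative^[k] (Br n))
      - (Polynomial.C ((r : ℚ))⁻¹ * Polynomial.X - Polynomial.C ((1 : ℚ) / 2))
          * Polynomial.derivative (Br n)
      + Polynomial.C ((n : ℚ) / (r : ℚ)) * Br n = 0 := by
  obtain ⟨r', rfl⟩ : ∃ r', r = r' + 1 := ⟨r - 1, by omega⟩
  obtain ⟨m, rfl⟩ : ∃ m, n = m + 1 := ⟨n - 1, by omega⟩
  set G : PowerSeries (Polynomial ℚ) := PowerSeries.mk (fun m => ((m.factorial : ℚ))⁻¹ • Br m) with hG
  set E : PowerSeries (Polynomial ℚ) := PowerSeries.mk (fun j => if j = 0 then 0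
      else Polynomial.C ((j.factorial : ℚ))⁻¹) with hEdef
  set F : PowerSeries (Polynomial ℚ) :=
    PowerSeries.mk (fun m => ((m.factorial : ℚ))⁻¹ • (Polynomial.X : Polynomial ℚ) ^ m) with hFdef
  -- E is nonzero
  have hEne : E ≠ 0 := by
    intro h
    have := congrArg (PowerSeries.coeff 1) h
    simp [hEdef] at this
  have hEpne : E ^ (r' + 1) ≠ 0 := pow_ne_zero _ hEne
  -- Step 1: x-derivative of G is X * G
  have hpdE : pd E = 0 := by
    ext j
    simp only [pd_coeff, hEdef, PowerSeries.coeff_mk, map_zero]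
    split <;> simp
  have hpdG : pd G = PowerSeries.X * G := by
    have h1 : pd (G * E ^ (r' + 1)) = pd G * E ^ (r' + 1) := by
      rw [pd_mul, pd_pow_eq_zero hpdE, mul_zero, add_zero]
    have h2 : pd (PowerSeries.X ^ (r' + 1) * F) = (PowerSeries.X * G) * E ^ (r' + 1) := by
      rw [pd_mul, pd_pow_eq_zero (f := (PowerSeries.X : PowerSeries (Polynomial ℚ))) ?_ (r' + 1),
        zero_mul, zero_add]
      · have hpdF : pd F = PowerSeries.X * F := by
          ext j
          cases j with
          | zero => simp [pd_coeff, hFdef]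
          | succ j =>
            rw [pd_coeff, PowerSeries.coeff_succ_X_mul]
            simp only [hFdef, PowerSeries.coeff_mk, derivative_smul, Polynomial.derivative_X_pow]
            rw [Polynomial.C_mul', smul_smul]
            simp only [Nat.add_sub_cancel]
            have h1 : ((j.factorial :ℚ)) ≠ 0 := Nat.cast_ne_zero.mpr j.factorial_ne_zero
            have h2 : ((j:ℚ) + 1) ≠ 0 := by positivity
            have h3 : (((j+1).factorial:ℚ))⁻¹ * (((j+1):ℕ):ℚ) = ((j.factorial:ℚ))⁻¹ := by
              rw [Nat.factorial_succ]; push_cast; field_simp; try ring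
            rw [h3]
        rw [hpdF, mul_left_comm, ← hBr]
        ring
      · ext j
        simp only [pd_coeff, PowerSeries.coeff_X, map_zero]
        split <;> simp
    rw [← hBr] at h2
    exact mul_right_cancel₀ hEpne (h1.symm.trans h2)
  -- derivative of Br
  have hD : ∀ m : ℕ, Polynomial.derivative (Br (m + 1)) = Polynomial.C ((m : ℚ) + 1) * Br m := by
    intro m
    have h0 := congrArg (PowerSeries.coeff (m + 1)) hpdG
    rw [pd_coeff, PowerSeries.coeff_succ_X_mul] at h0
    simp only [hG, PowerSeries.coeff_mk, derivative_smul] at h0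
    have hfac : ((m + 1).factorial : ℚ) ≠ 0 := Nat.cast_ne_zero.mpr (m+1).factorial_ne_zero
    have hfac' : ((m.factorial) : ℚ) ≠ 0 := Nat.cast_ne_zero.mpr m.factorial_ne_zero
    have h2 := congrArg (fun p => (((m+1).factorial : ℚ)) • p) h0
    simp only [smul_smul, mul_inv_cancel₀ hfac, one_smul] at h2
    rw [h2, Polynomial.C_mul']
    congr 1
    have h2 : ((m:ℚ) + 1) ≠ 0 := by positivity
    push_cast [Nat.factorial_succ]
    field_simp
    try ring
  -- iterated derivative
  have hDk : ∀ k : ℕ, k ≤ m + 1 →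
      Polynomial.derivative^[k] (Br (m + 1))
        = Polynomial.C (((m+1).factorial : ℚ) / (((m + 1 - k).factorial : ℚ))) * Br (m + 1 - k) := by
    intro k
    induction k with
    | zero =>
      intro _
      simp [div_self (Nat.cast_ne_zero.mpr (m+1).factorial_ne_zero : ((m+1).factorial:ℚ) ≠ 0)]
    | succ k ih =>
      intro hk
      have hk' : k ≤ m + 1 := by omega
      rw [Function.iterate_succ_apply', ih hk', derivative_C_mul]
      rw [show m + 1 - k = (m - k) + 1 from by omega, hD (m - k)]
      rw [show m + 1 - (k + 1) = m - k from by omega, ← mul_assoc, ← Polynomial.C_mul]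
      congr 2
      generalize (m - k : ℕ) = j
      have h2 : ((j.factorial : ℚ)) ≠ 0 := Nat.cast_ne_zero.mpr j.factorial_ne_zero
      have hb2 : (((j+1).factorial : ℚ)) ≠ 0 := Nat.cast_ne_zero.mpr (j+1).factorial_ne_zero
      have h4 : (((j+1).factorial:ℚ)) = ((j:ℚ)+1) * ((j.factorial:ℚ)) := by
        rw [Nat.factorial_succ]; push_cast; ring
      rw [div_mul_eq_mul_div, div_eq_div_iff hb2 h2, h4]
      ring
  -- t-derivative facts
  have hEexp : E = PowerSeries.map (Polynomial.C : ℚ →+* Polynomial ℚ) (PowerSeries.exp ℚ) - 1 := by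
    ext j
    cases j with
    | zero => simp [hEdef, PowerSeries.coeff_exp]
    | succ j => simp [hEdef, PowerSeries.coeff_exp, one_div]
  set Bp : PowerSeries (Polynomial ℚ) :=
    PowerSeries.map (Polynomial.C : ℚ →+* Polynomial ℚ) (bernoulli'PowerSeries ℚ) with hBpdef
  have hBpE : Bp * E = PowerSeries.X * (E + 1) := by
    have h := congrArg (PowerSeries.map (Polynomial.C : ℚ →+* Polynomial ℚ))
      (bernoulli'PowerSeries_mul_exp_sub_one ℚ)
    rw [map_mul, map_mul, map_sub, map_one, PowerSeries.map_X] at h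
    rw [hEexp, sub_add_cancel]
    exact h
  have hDtE : PowerSeries.derivativeFun E = E + 1 := by
    ext j : 1
    erw [PowerSeries.coeff_derivative]
    cases j with
    | zero => simp [hEdef]
    | succ j =>
      simp only [hEdef, PowerSeries.coeff_mk, map_add, PowerSeries.coeff_one,
        if_neg (Nat.succ_ne_zero _), if_neg (Nat.succ_ne_zero _), add_zero]
      rw [← Polynomial.C_eq_natCast, ← Polynomial.C_1 (R := ℚ), ← Polynomial.C_add,
        ← Polynomial.C_mul]
      congr 1
      have hc : ((((j+1):ℕ):ℚ) + 1) ≠ 0 := by positivity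
      have h4 : (((j+1+1).factorial:ℚ)) = ((((j+1):ℕ):ℚ) + 1) * (((j+1).factorial:ℚ)) := by
        rw [Nat.factorial_succ (j+1)]; push_cast; ring
      rw [h4, mul_inv, mul_right_comm, inv_mul_cancel₀ hc, one_mul]
  have hDtF : PowerSeries.derivativeFun F = (PowerSeries.C (R := Polynomial ℚ)) Polynomial.X * F := by
    ext j : 1
    erw [PowerSeries.coeff_derivative]; rw [PowerSeries.coeff_C_mul]
    simp only [hFdef, PowerSeries.coeff_mk]
    have hcast : ((j : ℚ[X]) + 1) = Polynomial.C ((j:ℚ) + 1) := by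
      rw [map_add, Polynomial.C_eq_natCast, map_one]
    have h2 : ((j.factorial : ℚ)) ≠ 0 := Nat.cast_ne_zero.mpr j.factorial_ne_zero
    have h3 : ((j:ℚ) + 1) ≠ 0 := by positivity
    have h4 : (((j+1).factorial:ℚ))⁻¹ * ((j:ℚ) + 1) = ((j.factorial:ℚ))⁻¹ := by
      rw [Nat.factorial_succ]; push_cast; field_simp; try ring
    rw [hcast, smul_mul_assoc, mul_comm (Polynomial.X ^ (j+1)) (Polynomial.C _),
      Polynomial.C_mul', smul_smul, h4, mul_smul_comm]
    congr 1
    ring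
  -- differentiate the generating relation in t
  have hdX : (PowerSeries.X : PowerSeries (Polynomial ℚ)).derivativeFun = 1 := by
    ext j : 1
    erw [PowerSeries.coeff_derivative]
    cases j with
    | zero => simp
    | succ j => simp [PowerSeries.coeff_X, PowerSeries.coeff_one]
  have hder := congrArg PowerSeries.derivativeFun hBr
  rw [PowerSeries.derivativeFun_mul, PowerSeries.derivativeFun_mul, derivativeFun_pow,
    derivativeFun_pow, hDtE, hDtF, hdX] at hder
  simp only [smul_eq_mul, Nat.add_sub_cancel, mul_one] at hder
  set DG := PowerSeries.derivativeFun G with hDGdef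
  have hc1 : ((r'+1) • (PowerSeries.X * G * (E + 1)) + PowerSeries.X * E * DG) * E ^ (r'+1)
      = (((PowerSeries.C (R := Polynomial ℚ)) Polynomial.X * PowerSeries.X * G
          + (r'+1) • G) * E) * E ^ (r'+1) := by
    have h5 := congrArg (fun s => PowerSeries.X * E * s) hder
    calc ((r'+1) • (PowerSeries.X * G * (E+1)) + PowerSeries.X * E * DG) * E ^ (r'+1)
        = PowerSeries.X * E * (G * ((r'+1) • (E ^ r' * (E + 1))) + E ^ (r'+1) * DG) := by ring
      _ = PowerSeries.X * E * (PowerSeries.X ^ (r'+1) * ((PowerSeries.C (R := Polynomial ℚ)) Polynomial.X * F)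
            + F * ((r'+1) • PowerSeries.X ^ r')) := h5
      _ = (PowerSeries.C (R := Polynomial ℚ)) Polynomial.X * PowerSeries.X * E * (PowerSeries.X ^ (r'+1) * F)
            + (r'+1) • (PowerSeries.X ^ (r'+1) * F * E) := by ring
      _ = (PowerSeries.C (R := Polynomial ℚ)) Polynomial.X * PowerSeries.X * E * (G * E ^ (r'+1))
            + (r'+1) • (G * E ^ (r'+1) * E) := by rw [← hBr]
      _ = _ := by ring
  have hc2 := mul_right_cancel₀ hEpne hc1
  have hmain : PowerSeries.X * DG + (r'+1) • (Bp * G)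
      = (PowerSeries.C (R := Polynomial ℚ)) Polynomial.X * (PowerSeries.X * G) + (r'+1) • G := by
    rw [← mul_assoc]
    apply mul_right_cancel₀ hEne
    calc (PowerSeries.X * DG + (r'+1) • (Bp * G)) * E
        = (r'+1) • (G * (Bp * E)) + PowerSeries.X * E * DG := by ring
      _ = (r'+1) • (G * (PowerSeries.X * (E+1))) + PowerSeries.X * E * DG := by rw [hBpE]
      _ = (r'+1) • (PowerSeries.X * G * (E+1)) + PowerSeries.X * E * DG := by ring
      _ = _ := hc2
  -- extract coefficient m+1
  have hco := congrArg (PowerSeries.coeff (m+1)) hmain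
  rw [map_add, map_add, map_nsmul, map_nsmul, PowerSeries.coeff_succ_X_mul,
    PowerSeries.coeff_C_mul, PowerSeries.coeff_succ_X_mul,
    PowerSeries.coeff_mul, Finset.Nat.sum_antidiagonal_eq_sum_range_succ_mk] at hco
  erw [PowerSeries.coeff_derivative] at hco
  simp only [hBpdef, PowerSeries.coeff_map, bernoulli'PowerSeries, PowerSeries.coeff_mk,
    Algebra.algebraMap_self, RingHom.id_apply, hG] at hco
  -- split off the k = 0 and k = 1 terms
  have hrange : range ((m+1).succ) = insert 0 (insert 1 (Finset.Icc 2 (m+1))) := by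
    ext x; simp only [Finset.mem_range, Finset.mem_insert, Finset.mem_Icc]; omega
  rw [hrange, Finset.sum_insert (by simp), Finset.sum_insert (by simp)] at hco
  simp only [bernoulli'_zero, bernoulli'_one, Nat.factorial_zero, Nat.factorial_one,
    Nat.sub_zero, Nat.cast_one, div_one, Nat.add_sub_cancel, map_one, one_mul] at hco
  -- rewrite the goal's sum
  have ha : (((m+1).factorial : ℚ)) ≠ 0 := Nat.cast_ne_zero.mpr (m+1).factorial_ne_zero
  have hb : ((m.factorial : ℚ)) ≠ 0 := Nat.cast_ne_zero.mpr m.factorial_ne_zero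
  have hrne : ((r':ℚ) + 1) ≠ 0 := by positivity
  have haf : (((m+1).factorial : ℚ)) = ((m:ℚ) + 1) * ((m.factorial : ℚ)) := by
    rw [Nat.factorial_succ]; push_cast; ring
  have hsum : ∑ k ∈ Finset.Icc 2 (m+1),
        Polynomial.C (Polynomial.eval 1 (Polynomial.bernoulli k) / (k.factorial : ℚ))
          * (Polynomial.derivative^[k] (Br (m+1)))
      = (((m+1).factorial : ℚ)) • ∑ x ∈ Finset.Icc 2 (m+1),
          Polynomial.C (bernoulli' x / (x.factorial : ℚ))
            * ((((m+1-x).factorial : ℚ))⁻¹ • Br (m+1-x)) := by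
    rw [Finset.smul_sum]
    refine Finset.sum_congr rfl fun k hk => ?_
    rw [Polynomial.bernoulli_eval_one, hDk k (Finset.mem_Icc.mp hk).2]
    simp only [Polynomial.C_mul', smul_smul]
    refine congrArg (· • Br (m + 1 - k)) ?_
    ring
  rw [hsum, hD m]
  -- normalize hco and goal into ℚ-scalar combinations of atoms
  have hcast : ((m : ℚ[X]) + 1) = Polynomial.C ((m:ℚ) + 1) := by
    rw [map_add, Polynomial.C_eq_natCast, map_one]
  rw [hcast, mul_comm ((((m+1).factorial : ℚ))⁻¹ • Br (m+1)) (Polynomial.C ((m:ℚ)+1))] at hco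
  simp only [Polynomial.C_mul', smul_smul, mul_smul_comm, smul_mul_assoc, sub_mul,
    ← Nat.cast_smul_eq_nsmul ℚ] at hco ⊢
  push_cast at hco
  linear_combination (norm := match_scalars <;> (push_cast [Nat.factorial_succ]; field_simp [haf]; try ring))
    ((((m+1).factorial : ℚ)) * ((r':ℚ)+1)⁻¹) • hco
end

section
/- Let n ≥ 1 be an integer and let y = B_n(x) ∈ ℚ[x] be the n-th Bernoulli polynomial. Then y satisfies the differential equation ∑_{k=2}^{n} (B_k/k!) · y^{(k)}(x) − (x − 1/2) · y′(x) + n · y(x) = 0, i.e. (B_n/n!) y^{(n)} + (B_{n−1}/(n−1)!) y^{(n−1)} + ⋯ + (B_2/2!) y″ − (x − 1/2) y′ + n y = 0 as an identity of polynomials in ℚ[x], where B_k denotes the k-th Bernoulli number. -/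
open Finset Polynomial

noncomputable def antid (p : ℚ[X]) : ℚ[X] :=
  p.sum fun n a => C (a / (n + 1)) * X ^ (n + 1)

lemma antid_zero : antid 0 = 0 := by simp [antid]

lemma antid_add (p q : ℚ[X]) : antid (p + q) = antid p + antid q := by
  apply Polynomial.sum_add_index
  · intro i; simp
  · intro i b c; rw [add_div, map_add, add_mul]

lemma derivative_antid (p : ℚ[X]) : derivative (antid p) = p := by
  conv_rhs => rw [← Polynomial.sum_C_mul_X_pow_eq p]
  unfold antid
  rw [Polynomial.sum_def, Polynomial.sum_def, map_sum]
  refine Finset.sum_congr rfl fun n _ => ?_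
  have h : ((n : ℚ) + 1) ≠ 0 := by positivity
  rw [derivative_C_mul, derivative_X_pow]
  push_cast
  rw [← mul_assoc, ← map_mul, div_mul_cancel₀ _ h]

lemma antid_coeff_zero (p : ℚ[X]) : (antid p).coeff 0 = 0 := by
  unfold antid
  rw [Polynomial.sum_def, finset_sum_coeff]
  refine Finset.sum_eq_zero fun n _ => ?_
  simp [coeff_C_mul, coeff_X_pow]

noncomputable def Ih : ℚ[X] →+ ℚ where
  toFun p := (antid p).eval 1
  map_zero' := by simp [antid_zero]
  map_add' p q := by rw [antid_add, eval_add]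

lemma Ih_C (c : ℚ) : Ih (C c) = c := by
  simp only [Ih, AddMonoidHom.coe_mk, ZeroHom.coe_mk]
  unfold antid
  rw [Polynomial.sum_C_index (by simp)]
  simp

lemma Ih_derivative (q : ℚ[X]) : Ih (derivative q) = q.eval 1 - q.eval 0 := by
  have h0 : derivative (antid (derivative q) - q) = 0 := by
    rw [map_sub, derivative_antid, sub_self]
  have h1 := eq_C_of_derivative_eq_zero h0
  rw [coeff_sub, antid_coeff_zero, zero_sub, map_neg] at h1
  have h2 : antid (derivative q) = q - C (q.coeff 0) := by
    linear_combination h1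
  simp only [Ih, AddMonoidHom.coe_mk, ZeroHom.coe_mk]
  rw [h2, eval_sub, eval_C, coeff_zero_eq_eval_zero]

lemma Ih_C_mul (a : ℚ) (p : ℚ[X]) : Ih (C a * p) = a * Ih p := by
  have h : antid (C a * p) = C a * antid p := by
    rw [← smul_eq_C_mul]
    unfold antid
    rw [Polynomial.sum_smul_index _ _ _ (fun i => by simp)]
    rw [Polynomial.sum_def, Polynomial.sum_def, Finset.mul_sum]
    refine Finset.sum_congr rfl fun n _ => by rw [mul_div_assoc, map_mul, mul_assoc]
  simp only [Ih, AddMonoidHom.coe_mk, ZeroHom.coe_mk]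
  rw [h, eval_mul, eval_C]

lemma eval_one_sub_eval_zero (m : ℕ) :
    (Polynomial.bernoulli m).eval 1 - (Polynomial.bernoulli m).eval 0
      = if m = 1 then 1 else 0 := by
  rw [Polynomial.bernoulli_eval_one, Polynomial.bernoulli_eval_zero]
  split_ifs with h
  · subst h; rw [bernoulli'_one, _root_.bernoulli_one]; norm_num
  · rw [← bernoulli_eq_bernoulli'_of_ne_one h, sub_self]

lemma Ih_bernoulli (m : ℕ) (h : 1 ≤ m) : Ih (Polynomial.bernoulli m) = 0 := by
  have key : Polynomial.bernoulli m
      = C (1 / ((m : ℚ) + 1)) * derivative (Polynomial.bernoulli (m + 1)) := by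
    rw [Polynomial.derivative_bernoulli_add_one, ← mul_assoc]
    have hm : ((m : ℚ) + 1) ≠ 0 := by positivity
    have h2 : ((m : ℚ[X]) + 1) = C ((m : ℚ) + 1) := by
      simp [C_eq_natCast]
    rw [h2, ← map_mul, one_div, inv_mul_cancel₀ hm, map_one, one_mul]
  rw [key, Ih_C_mul, Ih_derivative, eval_one_sub_eval_zero]
  have : m + 1 ≠ 1 := by omega
  simp [this]
  exact fun h0 => absurd h0 (by omega)

lemma iterate_derivative_bernoulli' (n k : ℕ) :
    derivative^[k] (Polynomial.bernoulli n)
      = C ((n.descFactorial k : ℚ)) * Polynomial.bernoulli (n - k) := by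
  induction k with
  | zero => simp
  | succ k ih =>
    rw [Function.iterate_succ_apply', ih, derivative_C_mul,
      Polynomial.derivative_bernoulli, Nat.sub_sub, Nat.descFactorial_succ]
    simp only [map_mul, map_natCast]
    rw [Nat.cast_mul]
    ring

/-- He–Ricci: the Bernoulli polynomial `y = B_n(x)` satisfies the differential equation
`(B_n/n!) y⁽ⁿ⁾ + (B_{n-1}/(n-1)!) y⁽ⁿ⁻¹⁾ + ⋯ + (B_2/2!) y'' - (x - 1/2) y' + n y = 0`,
where `B_k` is the `k`-th Bernoulli number. -/
theorem bernoulli_polynomial_differential_equation (n : ℕ) (hn : 1 ≤ n) :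
    ∑ k ∈ Finset.Icc 2 n, Polynomial.C (_root_.bernoulli k / (k.factorial : ℚ))
        * (Polynomial.derivative^[k] (Polynomial.bernoulli n))
      - (Polynomial.X - Polynomial.C ((1 : ℚ) / 2))
          * Polynomial.derivative (Polynomial.bernoulli n)
      + Polynomial.C (n : ℚ) * Polynomial.bernoulli n = 0 := by
  induction n, hn using Nat.le_induction with
  | base =>
    rw [Finset.Icc_eq_empty (by norm_num), Finset.sum_empty]
    have h1 : Polynomial.bernoulli 1 = X - C ((1:ℚ)/2) := by
      simp [Polynomial.bernoulli, Finset.sum_range_succ, _root_.bernoulli_one,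
        _root_.bernoulli_zero, Polynomial.monomial_one_one_eq_X]
      rw [show (-1/2 : ℚ) = -(1/2) by norm_num, map_neg, sub_eq_add_neg]
      norm_num
    rw [Polynomial.derivative_bernoulli, h1]
    push_cast
    simp
  | succ n hn ih =>
    have hfac : ((n + 1).factorial : ℚ) ≠ 0 := by positivity
    have hdb : derivative (Polynomial.bernoulli (n + 1))
        = C ((n : ℚ) + 1) * Polynomial.bernoulli n := by
      rw [Polynomial.derivative_bernoulli_add_one]
      congr 1
      simp [C_eq_natCast]
    have hIcc : Finset.Icc 2 (n + 1) = insert (n + 1) (Finset.Icc 2 n) := by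
      ext x; simp; omega
    have hnotmem : n + 1 ∉ Finset.Icc 2 n := by simp
    set E := ∑ k ∈ Finset.Icc 2 (n + 1),
          Polynomial.C (_root_.bernoulli k / (k.factorial : ℚ))
            * (Polynomial.derivative^[k] (Polynomial.bernoulli (n + 1)))
        - (Polynomial.X - Polynomial.C ((1 : ℚ) / 2))
            * Polynomial.derivative (Polynomial.bernoulli (n + 1))
        + Polynomial.C (((n + 1 : ℕ)) : ℚ) * Polynomial.bernoulli (n + 1) with hE
    -- step 1 : derivative E = 0
    have hit : ∀ k : ℕ, derivative (derivative^[k] (Polynomial.bernoulli (n + 1)))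
        = C ((n : ℚ) + 1) * derivative^[k] (Polynomial.bernoulli n) := by
      intro k
      have h1 := Function.iterate_succ_apply' (⇑derivative) k (Polynomial.bernoulli (n + 1))
      have h2 := Function.iterate_succ_apply (⇑derivative) k (Polynomial.bernoulli (n + 1))
      rw [← h1, h2, hdb, Polynomial.iterate_derivative_C_mul]
    have htop : derivative^[n + 1] (Polynomial.bernoulli n) = 0 := by
      rw [iterate_derivative_bernoulli',
        Nat.descFactorial_eq_zero_iff_lt.mpr (by omega)]
      simp
    have hsum : ∑ k ∈ Finset.Icc 2 n,
          C (_root_.bernoulli k / (k.factorial : ℚ))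
            * ((C ((n : ℚ)) + 1) * derivative^[k] (Polynomial.bernoulli n))
        = (C ((n : ℚ)) + 1) * ∑ k ∈ Finset.Icc 2 n,
            C (_root_.bernoulli k / (k.factorial : ℚ))
              * derivative^[k] (Polynomial.bernoulli n) := by
      rw [Finset.mul_sum]
      exact Finset.sum_congr rfl fun k _ => by ring
    have hder : derivative E = 0 := by
      rw [hE, derivative_add, derivative_sub, map_sum]
      simp only [derivative_C_mul, derivative_mul, derivative_sub, derivative_X,
        derivative_C, hit, hdb, zero_mul, mul_zero, add_zero, zero_add, sub_zero,
        one_mul]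
      rw [hIcc, Finset.sum_insert hnotmem, htop]
      simp only [Nat.cast_add, Nat.cast_one, map_add, map_one, mul_zero, zero_add]
      rw [hsum]
      linear_combination (C ((n : ℚ)) + 1) * ih
    -- step 2 : integral of E is zero
    have hIhE : Ih E = 0 := by
      rw [hE, map_add, map_sub, map_sum]
      have hterm : ∀ k ∈ Finset.Icc 2 (n + 1),
          Ih (C (_root_.bernoulli k / (k.factorial : ℚ))
            * derivative^[k] (Polynomial.bernoulli (n + 1)))
          = if k = n + 1 then _root_.bernoulli (n + 1) else 0 := by
        intro k hk
        rw [Finset.mem_Icc] at hk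
        rw [Ih_C_mul, iterate_derivative_bernoulli', Ih_C_mul]
        split_ifs with h
        · subst h
          rw [Nat.sub_self, Polynomial.bernoulli_zero, ← C_1, Ih_C,
            Nat.descFactorial_self]
          rw [mul_one, div_mul_cancel₀ _ hfac]
        · rw [Ih_bernoulli _ (by omega), mul_zero, mul_zero]
      rw [Finset.sum_congr rfl hterm, Finset.sum_ite_eq' _ (n + 1) _]
      have hmem : n + 1 ∈ Finset.Icc 2 (n + 1) := by
        rw [Finset.mem_Icc]; omega
      rw [if_pos hmem]
      have hM : (X - C ((1 : ℚ) / 2)) * derivative (Polynomial.bernoulli (n + 1))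
          = derivative ((X - C ((1 : ℚ) / 2)) * Polynomial.bernoulli (n + 1))
            - Polynomial.bernoulli (n + 1) := by
        rw [derivative_mul, derivative_sub, derivative_X, derivative_C]
        ring
      rw [hM, map_sub, Ih_derivative, Ih_bernoulli _ (by omega), Ih_C_mul,
        Ih_bernoulli _ (by omega)]
      rw [eval_mul, eval_mul, eval_sub, eval_sub, eval_X, eval_C, eval_X, eval_C,
        Polynomial.bernoulli_eval_one, Polynomial.bernoulli_eval_zero,
        ← bernoulli_eq_bernoulli'_of_ne_one (by omega)]
      ring
    -- conclude
    have hE0 : E = C (E.coeff 0) := eq_C_of_derivative_eq_zero hder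
    have h3 : E.coeff 0 = 0 := by
      conv_lhs => rw [← Ih_C (E.coeff 0)]
      rw [← hE0, hIhE]
    rw [hE0, h3, map_zero]
end

section
/- Let N ≥ 1, r ≥ 1 and n ≥ 1 be integers. Then the higher order hypergeometric Bernoulli polynomials satisfy the recurrence B_{N,n+1}^{(r)}(x) = (x − r/(N+1)) · B_{N,n}^{(r)}(x) − rN · ∑_{k=0}^{n−1} C(n, k) · (B_{N,n−k+1}/(n−k+1)) · B_{N,k}^{(r)}(x) as an identity of polynomials in ℚ[x]. -/
open Finset Polynomial PowerSeries

lemma fact_inv (m : ℕ) : (((m+1).factorial : ℚ))⁻¹ * ((m : ℚ)+1) = ((m.factorial : ℚ))⁻¹ := by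
  rw [Nat.factorial_succ]
  push_cast
  have h1 : ((m:ℚ)+1) ≠ 0 := by positivity
  have h2 : ((m.factorial : ℚ)) ≠ 0 := by exact_mod_cast m.factorial_ne_zero
  field_simp

lemma hgb_ode (N : ℕ) (hN : 1 ≤ N) (F : PowerSeries ℚ)
    (hF : F * (PowerSeries.mk fun j => if N ≤ j then ((j.factorial : ℚ))⁻¹ else 0)
        = PowerSeries.mk fun j => if j = N then ((N.factorial : ℚ))⁻¹ else 0) :
    PowerSeries.X * (d⁄dX ℚ F) + PowerSeries.X * F
      + PowerSeries.C (R := ℚ) (N : ℚ) * F ^ 2 = PowerSeries.C (R := ℚ) (N : ℚ) * F := by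
  obtain ⟨N, rfl⟩ : ∃ m, N = m + 1 := ⟨N - 1, by omega⟩
  set E : PowerSeries ℚ := PowerSeries.mk fun j => if N + 1 ≤ j then ((j.factorial : ℚ))⁻¹ else 0 with hE
  set M0 : PowerSeries ℚ := PowerSeries.C (R := ℚ) ((N.factorial : ℚ))⁻¹ * PowerSeries.X ^ N with hM0
  set M1 : PowerSeries ℚ := PowerSeries.C (R := ℚ) (((N+1).factorial : ℚ))⁻¹ * PowerSeries.X ^ (N+1) with hM1
  have h1 : F * E = M1 := by
    rw [hF, hM1]
    ext m
    simp only [PowerSeries.coeff_mk, PowerSeries.coeff_C_mul, PowerSeries.coeff_X_pow]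
    by_cases h : m = N + 1 <;> simp [h]
  have hdE : d⁄dX ℚ E = E + M0 := by
    ext m
    simp only [PowerSeries.coeff_derivative, PowerSeries.coeff_mk, map_add,
      PowerSeries.coeff_C_mul, PowerSeries.coeff_X_pow, hE, hM0]
    rcases lt_trichotomy m N with h | h | h
    · rw [if_neg (by omega), if_neg (by omega), if_neg (by omega)]
      simp
    · subst h
      rw [if_pos (by omega), if_neg (by omega), if_pos rfl]
      simpa using fact_inv m
    · rw [if_pos (by omega), if_pos (by omega), if_neg (by omega)]
      have := fact_inv m
      push_cast
      simp only [mul_zero, add_zero]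
      exact_mod_cast this
  have hdM1 : d⁄dX ℚ M1 = M0 := by
    ext m
    simp only [PowerSeries.coeff_derivative, hM0, hM1, PowerSeries.coeff_C_mul,
      PowerSeries.coeff_X_pow]
    by_cases h : m = N
    · subst h
      rw [if_pos (by omega), if_pos rfl]
      simpa [mul_comm] using fact_inv m
    · rw [if_neg (by omega), if_neg h]
      simp
  have h2 : F * (E + M0) + E * (d⁄dX ℚ F) = M0 := by
    have h := congrArg (d⁄dX ℚ) h1
    rwa [Derivation.leibniz, smul_eq_mul, smul_eq_mul, hdE, hdM1] at h
  have h3 : PowerSeries.X * M0 = PowerSeries.C (R := ℚ) ((N:ℚ)+1) * M1 := by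
    rw [hM0, hM1]
    have hc : ((N.factorial : ℚ))⁻¹ = ((N:ℚ)+1) * (((N+1).factorial : ℚ))⁻¹ := by
      rw [mul_comm]; exact (fact_inv N).symm
    rw [hc, map_mul]
    ring
  have hM0ne : M0 ≠ 0 := by
    intro h
    have := congrArg (PowerSeries.coeff (R := ℚ) N) h
    simp only [hM0, PowerSeries.coeff_C_mul, PowerSeries.coeff_X_pow, if_pos rfl, mul_one,
      map_zero, if_true] at this
    norm_num at this
    exact N.factorial_ne_zero this
  apply mul_right_cancel₀ hM0ne
  push_cast
  linear_combination (d⁄dX ℚ F + F) * h3 + PowerSeries.C (R := ℚ) ((N:ℚ)+1) * F * h2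
    - (PowerSeries.C (R := ℚ) ((N:ℚ)+1) * (d⁄dX ℚ F) + PowerSeries.C (R := ℚ) ((N:ℚ)+1) * F) * h1

lemma hgb_F0 (N : ℕ) (hN : 1 ≤ N) (F : PowerSeries ℚ)
    (hF : F * (PowerSeries.mk fun j => if N ≤ j then ((j.factorial : ℚ))⁻¹ else 0)
        = PowerSeries.mk fun j => if j = N then ((N.factorial : ℚ))⁻¹ else 0) :
    PowerSeries.coeff (R := ℚ) 0 F = 1 := by
  have h := congrArg (PowerSeries.coeff (R := ℚ) N) hF
  rw [PowerSeries.coeff_mul, Finset.Nat.sum_antidiagonal_eq_sum_range_succ_mk,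
    PowerSeries.coeff_mk, if_pos rfl] at h
  rw [Finset.sum_eq_single 0 (fun i hi hne => by
        rw [PowerSeries.coeff_mk, if_neg (by simp at hi; omega), mul_zero])
      (by simp)] at h
  rw [PowerSeries.coeff_mk, if_pos (by omega), Nat.sub_zero] at h
  have hne : ((N.factorial : ℚ))⁻¹ ≠ 0 := inv_ne_zero (Nat.cast_ne_zero.mpr N.factorial_ne_zero)
  field_simp at h
  rw [PowerSeries.coeff_zero_eq_constantCoeff]
  simpa using h

lemma hgb_F1 (N : ℕ) (hN : 1 ≤ N) (F : PowerSeries ℚ)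
    (hF : F * (PowerSeries.mk fun j => if N ≤ j then ((j.factorial : ℚ))⁻¹ else 0)
        = PowerSeries.mk fun j => if j = N then ((N.factorial : ℚ))⁻¹ else 0) :
    PowerSeries.coeff (R := ℚ) 1 F = -((N : ℚ)+1)⁻¹ := by
  have h := congrArg (PowerSeries.coeff (R := ℚ) (N+1)) hF
  rw [PowerSeries.coeff_mul, Finset.Nat.sum_antidiagonal_eq_sum_range_succ_mk,
    PowerSeries.coeff_mk, if_neg (by omega)] at h
  rw [Nat.succ_eq_add_one, Finset.sum_range_succ', Finset.sum_range_succ'] at h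
  rw [Finset.sum_eq_zero (fun i hi => by
        rw [PowerSeries.coeff_mk, if_neg (by omega), mul_zero])] at h
  rw [PowerSeries.coeff_mk, if_pos (by omega), PowerSeries.coeff_mk, if_pos (by omega),
    Nat.sub_zero, hgb_F0 N hN F hF] at h
  have h1 : N + 1 - 1 = N := by omega
  rw [h1] at h
  have h2 : ((N.factorial : ℚ)) ≠ 0 := Nat.cast_ne_zero.mpr N.factorial_ne_zero
  have h3 : (((N+1).factorial : ℚ)) ≠ 0 := Nat.cast_ne_zero.mpr (N+1).factorial_ne_zero
  have h4 : ((N:ℚ)+1) ≠ 0 := by positivity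
  have h5 : (((N+1).factorial : ℚ)) = ((N:ℚ)+1) * (N.factorial : ℚ) := by
    rw [Nat.factorial_succ]; push_cast; ring
  rw [h5] at h
  field_simp at h
  have h6 : ((PowerSeries.coeff (R := ℚ) 1) F * ((N:ℚ)+1) + 1) * (N.factorial:ℚ) = 0 := by
    linear_combination (N.factorial:ℚ) * h
  have h7 := (mul_eq_zero.mp h6).resolve_right h2
  have : (PowerSeries.coeff (R := ℚ) 1) F * ((N:ℚ)+1) = -1 := by linarith
  field_simp
  linarith

lemma hgb_derivative_map (F : PowerSeries ℚ) :
    d⁄dX (Polynomial ℚ) (PowerSeries.map (Polynomial.C : ℚ →+* Polynomial ℚ) F)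
      = PowerSeries.map (Polynomial.C : ℚ →+* Polynomial ℚ) (d⁄dX ℚ F) := by
  ext m
  simp only [PowerSeries.coeff_derivative, PowerSeries.coeff_map, map_mul, map_natCast, map_add, map_one]

/-- Theorem 5: recurrence for the higher order hypergeometric Bernoulli polynomials:
`B_{N,n+1}^{(r)}(x) = (x - r/(N+1))·B_{N,n}^{(r)}(x)
  - rN·∑_{k=0}^{n-1} C(n,k)·(B_{N,n-k+1}/(n-k+1))·B_{N,k}^{(r)}(x)`.
Here `F` is the exponential generating function of the hypergeometric Bernoulli numbers,
i.e. the unique power series with `F·(e^t - T_{N-1}(t)) = t^N/N!`, the numbers `B m = B_{N,m}`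
are its scaled coefficients, and `Br m = B_{N,m}^{(r)}(x)` is the family of polynomials whose
exponential generating function is `F^r · e^{xt}`. -/
theorem hypergeometric_bernoulli_recurrence
    (N r n : ℕ) (hN : 1 ≤ N) (hr : 1 ≤ r) (hn : 1 ≤ n)
    (F : PowerSeries ℚ)
    (hF : F * (PowerSeries.mk fun j => if N ≤ j then ((j.factorial : ℚ))⁻¹ else 0)
        = PowerSeries.mk fun j => if j = N then ((N.factorial : ℚ))⁻¹ else 0)
    (B : ℕ → ℚ)
    (hB : ∀ m : ℕ, B m = (m.factorial : ℚ) * PowerSeries.coeff (R := ℚ) m F)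
    (Br : ℕ → Polynomial ℚ)
    (hBr : PowerSeries.mk (fun m => ((m.factorial : ℚ))⁻¹ • Br m)
        = (PowerSeries.map (Polynomial.C : ℚ →+* Polynomial ℚ) F) ^ r
            * PowerSeries.mk (fun m => ((m.factorial : ℚ))⁻¹ • (Polynomial.X : Polynomial ℚ) ^ m)) :
    Br (n + 1)
      = (Polynomial.X - Polynomial.C ((r : ℚ) / ((N : ℚ) + 1))) * Br n
        - Polynomial.C ((r : ℚ) * (N : ℚ)) *
            ∑ k ∈ Finset.range n,
              Polynomial.C ((n.choose k : ℚ) * (B (n - k + 1) / ((n : ℚ) - (k : ℚ) + 1)))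
                * Br k := by
  obtain ⟨r, rfl⟩ : ∃ m, r = m + 1 := ⟨r - 1, by omega⟩
  set Fh := PowerSeries.map (Polynomial.C : ℚ →+* Polynomial ℚ) F with hFh
  set Ex : PowerSeries (Polynomial ℚ) :=
    PowerSeries.mk (fun m => ((m.factorial : ℚ))⁻¹ • (Polynomial.X : Polynomial ℚ) ^ m) with hEx
  set G := Fh ^ (r+1) * Ex with hGdef
  have hGc : ∀ m, PowerSeries.coeff m G = ((m.factorial : ℚ))⁻¹ • Br m := by
    intro m
    rw [← hBr, PowerSeries.coeff_mk]
  -- mapped ODE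
  have hodeP : PowerSeries.X * (d⁄dX (Polynomial ℚ) Fh) + PowerSeries.X * Fh
      + ((N : ℕ) : (Polynomial ℚ)⟦X⟧) * Fh ^ 2 = ((N : ℕ) : (Polynomial ℚ)⟦X⟧) * Fh := by
    have h := congrArg (PowerSeries.map (Polynomial.C : ℚ →+* Polynomial ℚ)) (hgb_ode N hN F hF)
    simp only [map_add, map_mul, map_pow, PowerSeries.map_X, PowerSeries.map_C,
      ← hgb_derivative_map, map_natCast] at h
    exact h
  -- derivative of Ex
  have Dmul : ∀ f g : (Polynomial ℚ)⟦X⟧, d⁄dX (Polynomial ℚ) (f * g)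
      = f * d⁄dX (Polynomial ℚ) g + g * d⁄dX (Polynomial ℚ) f := by
    intro f g
    have h := PowerSeries.derivativeFun_mul f g
    simpa [smul_eq_mul] using h
  have Dpow : ∀ (k : ℕ) (f : (Polynomial ℚ)⟦X⟧),
      d⁄dX (Polynomial ℚ) (f ^ (k+1)) = (k+1) • (f ^ k * d⁄dX (Polynomial ℚ) f) := by
    intro k f
    induction k with
    | zero => simp
    | succ k ih =>
      rw [pow_succ, Dmul, ih]
      ring
  have hdEx : d⁄dX (Polynomial ℚ) Ex = PowerSeries.C (R := Polynomial ℚ) Polynomial.X * Ex := by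
    refine PowerSeries.ext fun m => ?_
    rw [PowerSeries.coeff_derivative, PowerSeries.coeff_C_mul, hEx, PowerSeries.coeff_mk,
      PowerSeries.coeff_mk, Polynomial.smul_eq_C_mul, Polynomial.smul_eq_C_mul]
    have hc' : Polynomial.C (((m+1).factorial : ℚ)⁻¹) * ((m+1 : ℕ) : Polynomial ℚ)
        = Polynomial.C ((m.factorial : ℚ)⁻¹) := by
      rw [← Polynomial.C_eq_natCast, ← map_mul]
      congr 1
      push_cast
      exact fact_inv m
    linear_combination (norm := (push_cast; ring1)) (Polynomial.X : Polynomial ℚ) ^ (m+1) * hc'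
  -- derivative of G
  have hDG : d⁄dX (Polynomial ℚ) G
      = ((r+1) • (Fh ^ r * d⁄dX (Polynomial ℚ) Fh)) * Ex + Fh ^ (r+1) * (d⁄dX (Polynomial ℚ) Ex) := by
    rw [hGdef, Dmul, Dpow]
    ring
  -- master identity
  have hmaster : PowerSeries.X * d⁄dX (Polynomial ℚ) G
      = PowerSeries.C (R := Polynomial ℚ) (Polynomial.C (((r:ℚ)+1) * (N:ℚ))) * (G - Fh * G)
        + PowerSeries.C (R := Polynomial ℚ) (Polynomial.X - Polynomial.C ((r:ℚ)+1))
            * (PowerSeries.X * G) := by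
    rw [hDG, hdEx, hGdef, pow_succ]
    simp only [map_sub, map_add, map_mul, map_one, map_natCast]
    linear_combination (((r:(Polynomial ℚ)⟦X⟧)+1) * Fh ^ r * Ex) * hodeP
  -- coefficient of Fh * G
  have hFhG : PowerSeries.coeff (R := Polynomial ℚ) (n+1) (Fh * G)
      = ∑ i ∈ Finset.range (n+2),
          Polynomial.C (PowerSeries.coeff (R := ℚ) i F) * (((n+1-i).factorial : ℚ)⁻¹ • Br (n+1-i)) := by
    rw [PowerSeries.coeff_mul, Finset.Nat.sum_antidiagonal_eq_sum_range_succ_mk]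
    refine Finset.sum_congr rfl fun i _ => ?_
    rw [hFh, PowerSeries.coeff_map, hGc]
  -- extract coefficient n+1 of the master identity
  have hkey := congrArg (PowerSeries.coeff (R := Polynomial ℚ) (n+1)) hmaster
  rw [PowerSeries.coeff_succ_X_mul, PowerSeries.coeff_derivative, map_add,
    PowerSeries.coeff_C_mul, PowerSeries.coeff_C_mul, map_sub, PowerSeries.coeff_succ_X_mul,
    hFhG, hGc, hGc, Finset.sum_range_succ', Finset.sum_range_succ'] at hkey
  simp only [zero_add, Nat.add_sub_cancel, Nat.sub_zero] at hkey
  rw [hgb_F0 N hN F hF, hgb_F1 N hN F hF, map_one, one_mul] at hkey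
  -- rewrite the remaining sum
  have hSum : (∑ i ∈ Finset.range n, Polynomial.C (PowerSeries.coeff (R := ℚ) (i+1+1) F)
        * (((n+1-(i+1+1)).factorial : ℚ)⁻¹ • Br (n+1-(i+1+1))))
      = (n.factorial : ℚ)⁻¹ • ∑ k ∈ Finset.range n,
          Polynomial.C ((n.choose k : ℚ) * (B (n-k+1) / ((n:ℚ)-(k:ℚ)+1))) * Br k := by
    rw [Finset.smul_sum]
    rw [← Finset.sum_range_reflect (fun k => (n.factorial : ℚ)⁻¹ •
        (Polynomial.C ((n.choose k : ℚ) * (B (n-k+1) / ((n:ℚ)-(k:ℚ)+1))) * Br k)) n]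
    refine Finset.sum_congr rfl fun i hi => ?_
    simp only [Finset.mem_range] at hi
    have e1 : n + 1 - (i+1+1) = n - 1 - i := by omega
    have hk2 : n - 1 - i ≤ n := by omega
    have e2 : n - (n-1-i) + 1 = i + 1 + 1 := by omega
    have e5 : ((n-1-i : ℕ) : ℚ) = (n:ℚ) - 1 - (i:ℚ) := by
      have h' : n - 1 - i = n - (i+1) := by omega
      rw [h', Nat.cast_sub (by omega)]
      push_cast
      ring
    have e3 : ((n:ℚ) - ((n-1-i : ℕ):ℚ) + 1) = (i:ℚ) + 2 := by rw [e5]; ring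
    rw [e1, e2, e3, hB]
    rw [Polynomial.smul_eq_C_mul, Polynomial.smul_eq_C_mul, ← mul_assoc, ← mul_assoc,
      ← map_mul, ← map_mul]
    congr 2
    have hfact := Nat.choose_mul_factorial_mul_factorial hk2
    have e4 : n - (n - 1 - i) = i + 1 := by omega
    rw [e4] at hfact
    have hfq : ((n.choose (n-1-i)) : ℚ) * ((n-1-i).factorial : ℚ) * ((i+1).factorial : ℚ)
        = (n.factorial : ℚ) := by exact_mod_cast congrArg (fun t : ℕ => (t:ℚ)) hfact
    have hz1 : (((n-1-i).factorial : ℚ)) ≠ 0 := Nat.cast_ne_zero.mpr (n-1-i).factorial_ne_zero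
    have hz2 : ((n.factorial : ℚ)) ≠ 0 := Nat.cast_ne_zero.mpr n.factorial_ne_zero
    have hz3 : (((i+1).factorial : ℚ)) ≠ 0 := Nat.cast_ne_zero.mpr (i+1).factorial_ne_zero
    have hz4 : ((i:ℚ) + 2) ≠ 0 := by positivity
    have e6 : (((i+1+1).factorial : ℚ)) = ((i:ℚ)+2) * ((i+1).factorial : ℚ) := by
      rw [Nat.factorial_succ]
      push_cast
      ring
    rw [e6]
    field_simp
    linear_combination (-((PowerSeries.coeff (R := ℚ) (i+1+1)) F)) * hfq
  rw [hSum] at hkey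
  -- convert everything to scalar form and finish
  have e : ((n:Polynomial ℚ)+1) = Polynomial.C ((n:ℚ)+1) := by
    simp [Polynomial.C_eq_natCast]
  rw [mul_comm ((((n+1).factorial : ℚ))⁻¹ • Br (n+1)), e] at hkey
  simp only [sub_mul, mul_smul_comm, ← Polynomial.smul_eq_C_mul, smul_smul] at hkey
  simp only [sub_mul, ← Polynomial.smul_eq_C_mul]
  have hne1 : ((n.factorial : ℚ)) ≠ 0 := Nat.cast_ne_zero.mpr n.factorial_ne_zero
  have hne2 : (((n+1).factorial : ℚ)) ≠ 0 := Nat.cast_ne_zero.mpr (n+1).factorial_ne_zero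
  have hne3 : ((N:ℚ)+1) ≠ 0 := by positivity
  have hfe : (((n+1).factorial : ℚ)) = ((n:ℚ)+1) * (n.factorial : ℚ) := by
    rw [Nat.factorial_succ]
    push_cast
    ring
  linear_combination (norm := (match_scalars <;> (push_cast [hfe]; field_simp; try ring1)))
    (n.factorial : ℚ) • hkey
end

section
/- Let r ≥ 1 and n ≥ 1 be integers. Then the classical higher order Bernoulli polynomials satisfy the recurrence B_{n+1}^{(r)}(x) = (x − r/2) · B_n^{(r)}(x) − r · ∑_{k=0}^{n−1} C(n, k) · (B_{n−k+1}(1)/(n−k+1)) · B_k^{(r)}(x) as an identity of polynomials in ℚ[x], where B_m(1) denotes the m-th Bernoulli polynomial evaluated at 1. -/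
open Finset Polynomial PowerSeries

private noncomputable def Eser : PowerSeries (Polynomial ℚ) :=
  PowerSeries.mk (fun j => if j = 0 then 0 else Polynomial.C ((j.factorial : ℚ))⁻¹)

private noncomputable def Pser : PowerSeries (Polynomial ℚ) :=
  PowerSeries.mk (fun m => ((m.factorial : ℚ))⁻¹ • (Polynomial.X : Polynomial ℚ) ^ m)

private noncomputable def Bser : PowerSeries (Polynomial ℚ) :=
  PowerSeries.map (Polynomial.C : ℚ →+* Polynomial ℚ) (bernoulli'PowerSeries ℚ)

private lemma Eser_add_one :
    Eser + 1 = PowerSeries.map (Polynomial.C : ℚ →+* Polynomial ℚ) (PowerSeries.exp ℚ) := by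
  apply PowerSeries.ext; intro n
  simp only [Eser, map_add, coeff_mk, PowerSeries.coeff_map, exp, one_div]
  cases n with
  | zero => simp
  | succ m => simp [PowerSeries.coeff_one]

private lemma coeff_dF {R : Type*} [CommSemiring R] (f : PowerSeries R) (n : ℕ) :
    PowerSeries.coeff n f.derivativeFun = PowerSeries.coeff (n + 1) f * (n + 1) :=
  PowerSeries.coeff_derivative f n

private lemma dF_coe {R : Type*} [CommSemiring R] (f : R[X]) :
    PowerSeries.derivativeFun (f : PowerSeries R) = Polynomial.derivative f :=
  PowerSeries.derivative_coe f

private lemma fac_inv_succ (n : ℕ) :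
    (((n+1).factorial : ℚ))⁻¹ * ((n:ℚ)+1) = ((n.factorial : ℚ))⁻¹ := by
  rw [Nat.factorial_succ]
  push_cast
  rw [mul_inv]
  field_simp

private lemma deriv_Eser : PowerSeries.derivativeFun Eser = Eser + 1 := by
  apply PowerSeries.ext; intro n
  rw [coeff_dF]
  simp only [Eser, map_add, coeff_mk, PowerSeries.coeff_one]
  cases n with
  | zero => simp
  | succ m =>
    simp only [Nat.succ_ne_zero, if_neg, if_false, add_zero]
    simp only [← Polynomial.C_1, ← Polynomial.C_eq_natCast, ← map_add, ← map_mul]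
    congr 1
    have h := fac_inv_succ (m+1)
    push_cast at h ⊢
    exact h

private lemma deriv_Pser :
    PowerSeries.derivativeFun Pser = PowerSeries.C Polynomial.X * Pser := by
  apply PowerSeries.ext; intro n
  rw [coeff_dF]
  simp only [Pser, coeff_mk, PowerSeries.coeff_C_mul]
  rw [Polynomial.smul_eq_C_mul, Polynomial.smul_eq_C_mul]
  simp only [← Polynomial.C_1, ← Polynomial.C_eq_natCast, ← map_add, ← map_mul]
  rw [mul_assoc, mul_comm (Polynomial.X ^ (n+1)), ← mul_assoc, ← map_mul, fac_inv_succ n]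
  ring

private lemma derivFun_pow {R : Type*} [CommRing R] (f : PowerSeries R) (m : ℕ) :
    PowerSeries.derivativeFun (f^(m+1))
      = ((m+1 : ℕ) : PowerSeries R) * f^m * PowerSeries.derivativeFun f := by
  induction m with
  | zero => simp
  | succ m ih =>
    rw [pow_succ, PowerSeries.derivativeFun_mul, ih]
    push_cast
    ring_nf

private lemma derivFun_X {R : Type*} [CommRing R] :
    PowerSeries.derivativeFun (PowerSeries.X : PowerSeries R) = 1 := by
  have : (PowerSeries.X : PowerSeries R) = ((Polynomial.X : R[X]) : PowerSeries R) := by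
    simp [Polynomial.coe_X]
  rw [this, dF_coe]
  simp

private lemma Bser_mul : Bser * Eser = PowerSeries.X * (Eser + 1) := by
  have h := congrArg (PowerSeries.map (Polynomial.C : ℚ →+* Polynomial ℚ))
    (bernoulli'PowerSeries_mul_exp_sub_one ℚ)
  rw [map_mul, map_sub, map_one, map_mul, PowerSeries.map_X] at h
  rw [Bser, Eser_add_one, ← h]
  congr 2
  rw [eq_sub_iff_add_eq, Eser_add_one]

private lemma Eser_ne_zero : Eser ≠ 0 := by
  intro h
  have := congrArg (PowerSeries.coeff 1) h
  simp [Eser] at this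

/-- Lu's recurrence for the classical higher order Bernoulli polynomials:
`B_{n+1}^{(r)}(x) = (x - r/2)·B_n^{(r)}(x) - r·∑_{k=0}^{n-1} C(n,k)·(B_{n-k+1}(1)/(n-k+1))·B_k^{(r)}(x)`,
where `B_m(1)` is the `m`-th Bernoulli polynomial evaluated at `1`.
Here `Br m = B_m^{(r)}(x)` is the family of polynomials whose exponential generating function
`G(t)` satisfies `G(t)·(e^t - 1)^r = t^r · e^{xt}` in `ℚ[x]⟦t⟧`. -/
theorem higher_order_bernoulli_recurrence
    (r n : ℕ) (hr : 1 ≤ r) (hn : 1 ≤ n)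
    (Br : ℕ → Polynomial ℚ)
    (hBr : PowerSeries.mk (fun m => ((m.factorial : ℚ))⁻¹ • Br m)
          * (PowerSeries.mk (fun j => if j = 0 then 0
              else Polynomial.C ((j.factorial : ℚ))⁻¹)) ^ r
        = (PowerSeries.X : PowerSeries (Polynomial ℚ)) ^ r
            * PowerSeries.mk (fun m => ((m.factorial : ℚ))⁻¹ • (Polynomial.X : Polynomial ℚ) ^ m)) :
    Br (n + 1)
      = (Polynomial.X - Polynomial.C ((r : ℚ) / 2)) * Br n
        - Polynomial.C (r : ℚ) *
            ∑ k ∈ Finset.range n,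
              Polynomial.C ((n.choose k : ℚ)
                  * ((Polynomial.bernoulli (n - k + 1)).eval 1 / ((n : ℚ) - (k : ℚ) + 1)))
                * Br k := by
  obtain ⟨s, rfl⟩ : ∃ s, r = s + 1 := ⟨r - 1, (Nat.succ_pred_eq_of_pos hr).symm⟩
  have hBr' : PowerSeries.mk (fun m => ((m.factorial : ℚ))⁻¹ • Br m) * Eser ^ (s+1)
      = (PowerSeries.X : PowerSeries (Polynomial ℚ)) ^ (s+1) * Pser := hBr
  set G := PowerSeries.mk (fun m => ((m.factorial : ℚ))⁻¹ • Br m) with hG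
  -- the key differential identity
  have key : PowerSeries.X * PowerSeries.derivativeFun G
      = (PowerSeries.C Polynomial.X * PowerSeries.X
          + ((s+1 : ℕ) : PowerSeries (Polynomial ℚ))
          - ((s+1 : ℕ) : PowerSeries (Polynomial ℚ)) * Bser) * G := by
    have hd := congrArg PowerSeries.derivativeFun hBr'
    rw [PowerSeries.derivativeFun_mul, PowerSeries.derivativeFun_mul, derivFun_pow,
      derivFun_pow, deriv_Eser, deriv_Pser, derivFun_X] at hd
    simp only [smul_eq_mul] at hd
    apply mul_right_cancel₀ (pow_ne_zero (s+2) Eser_ne_zero)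
    linear_combination (PowerSeries.X * Eser) * hd
      + (-(PowerSeries.C Polynomial.X) * PowerSeries.X * Eser
          - ((s+1 : ℕ) : PowerSeries (Polynomial ℚ)) * Eser) * hBr'
      + (((s+1 : ℕ) : PowerSeries (Polynomial ℚ)) * G * Eser ^ (s+1)) * Bser_mul
  -- extract the (n+1)-st coefficient
  have hc := congrArg (PowerSeries.coeff (n+1)) key
  rw [PowerSeries.coeff_succ_X_mul, coeff_dF] at hc
  rw [sub_mul, add_mul, map_sub, map_add] at hc
  rw [mul_assoc, PowerSeries.coeff_C_mul, PowerSeries.coeff_succ_X_mul] at hc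
  rw [show ((s+1 : ℕ) : PowerSeries (Polynomial ℚ))
        = PowerSeries.C ((s+1:ℕ) : Polynomial ℚ) from
      (map_natCast (PowerSeries.C) (s+1)).symm,
    PowerSeries.coeff_C_mul, mul_assoc, PowerSeries.coeff_C_mul] at hc
  rw [PowerSeries.coeff_mul, Finset.Nat.sum_antidiagonal_eq_sum_range_succ
    (fun i j => (PowerSeries.coeff i Bser)
      * (PowerSeries.coeff j G))] at hc
  rw [Finset.sum_range_succ', Finset.sum_range_succ'] at hc
  simp only [hG, PowerSeries.coeff_mk, Bser, PowerSeries.coeff_map, bernoulli'PowerSeries,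
    Algebra.algebraMap_self, RingHom.id_apply, zero_add, bernoulli'_one, bernoulli'_zero,
    Nat.factorial_one, Nat.factorial_zero, Nat.cast_one, Nat.sub_zero, Nat.add_sub_cancel,
    Nat.cast_ofNat, div_one, map_one, one_mul] at hc
  simp only [Polynomial.smul_eq_C_mul, ← Polynomial.C_eq_natCast] at hc
  -- scalar helper identities
  have h1 : Polynomial.C ((((n+1).factorial : ℕ) : ℚ))⁻¹ * (Polynomial.C ((n:ℚ)) + 1)
      = Polynomial.C (((n.factorial : ℕ) : ℚ))⁻¹ := by
    rw [← Polynomial.C_1, ← map_add, ← map_mul]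
    congr 1
    exact fac_inv_succ n
  have h3 : Polynomial.C ((((s:ℕ)+1 : ℕ) : ℚ)) * Polynomial.C ((1:ℚ)/2)
      = Polynomial.C ((((s:ℕ)+1 : ℕ) : ℚ)/2) := by
    rw [← map_mul]
    congr 1
    ring
  have h2 : Polynomial.C (((n.factorial : ℕ) : ℚ))⁻¹ *
        (Polynomial.C (((s+1 : ℕ)) : ℚ) *
          ∑ k ∈ Finset.range n,
            Polynomial.C ((n.choose k : ℚ)
                * ((Polynomial.bernoulli (n - k + 1)).eval 1 / ((n : ℚ) - (k : ℚ) + 1)))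
              * Br k)
      = Polynomial.C (((s+1 : ℕ)) : ℚ) *
          ∑ x ∈ Finset.range n,
            Polynomial.C (bernoulli' (x + 1 + 1) / (((x + 1 + 1).factorial : ℕ) : ℚ)) *
              (Polynomial.C ((((n + 1 - (x + 1 + 1)).factorial : ℕ) : ℚ))⁻¹
                * Br (n + 1 - (x + 1 + 1))) := by
    rw [← Finset.sum_range_reflect (fun x =>
      Polynomial.C (bernoulli' (x + 1 + 1) / (((x + 1 + 1).factorial : ℕ) : ℚ)) *
        (Polynomial.C ((((n + 1 - (x + 1 + 1)).factorial : ℕ) : ℚ))⁻¹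
          * Br (n + 1 - (x + 1 + 1)))) n]
    rw [Finset.mul_sum, Finset.mul_sum, Finset.mul_sum]
    refine Finset.sum_congr rfl fun k hk => ?_
    have hk' : k < n := Finset.mem_range.mp hk
    simp only [show n - 1 - k + 1 + 1 = n + 1 - k from by omega,
      show n + 1 - (n + 1 - k) = k from by omega]
    rw [Polynomial.bernoulli_eval_one]
    simp only [← mul_assoc, ← map_mul]
    congr 1
    rw [show ((n : ℚ) - (k : ℚ) + 1) = ((n + 1 - k : ℕ) : ℚ) from by
      rw [Nat.cast_sub (by omega : k ≤ n + 1)]; push_cast; ring]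
    rw [show n - k + 1 = n + 1 - k from by omega]
    rw [Nat.cast_choose ℚ (le_of_lt hk')]
    rw [show n + 1 - k = (n - k) + 1 from by omega, Nat.factorial_succ]
    have f1 : ((n.factorial : ℕ) : ℚ) ≠ 0 := Nat.cast_ne_zero.mpr n.factorial_ne_zero
    have f2 : ((k.factorial : ℕ) : ℚ) ≠ 0 := Nat.cast_ne_zero.mpr k.factorial_ne_zero
    have f3 : (((n-k).factorial : ℕ) : ℚ) ≠ 0 := Nat.cast_ne_zero.mpr (n-k).factorial_ne_zero
    have f4 : (((n-k : ℕ) : ℚ) + 1) ≠ 0 := by positivity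
    push_cast
    field_simp
  -- final assembly
  apply mul_left_cancel₀
    (show Polynomial.C (((n.factorial : ℕ) : ℚ))⁻¹ ≠ 0 by
      simp [Nat.factorial_ne_zero])
  linear_combination hc - Br (n+1) * h1 + h2
    - (Polynomial.C (((n.factorial : ℕ) : ℚ))⁻¹ * Br n) * h3
end

section
/- Let n ≥ 2 be an integer. Then the Bernoulli polynomials satisfy the recurrence B_n(x) = (x − 1/2) · B_{n−1}(x) − (1/n) · ∑_{k=0}^{n−2} C(n, k) · B_{n−k} · B_k(x) as an identity of polynomials in ℚ[x], where B_{n−k} denotes the (n−k)-th Bernoulli number. -/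
open Finset Polynomial

noncomputable def antideriv (p : ℚ[X]) : ℚ[X] :=
  p.sum fun j a => Polynomial.C (a / (j + 1)) * Polynomial.X ^ (j + 1)

lemma antideriv_add (p q : ℚ[X]) : antideriv (p + q) = antideriv p + antideriv q := by
  unfold antideriv
  apply Polynomial.sum_add_index
  · intro i; simp
  · intro i a b; rw [add_div, map_add, add_mul]

lemma antideriv_zero : antideriv 0 = 0 := by
  unfold antideriv
  exact Polynomial.sum_zero_index _

noncomputable def antiderivL : ℚ[X] →ₗ[ℚ] ℚ[X] :=
  AddMonoidHom.toRatLinearMap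
    { toFun := antideriv, map_zero' := antideriv_zero, map_add' := antideriv_add }

noncomputable def II : ℚ[X] →ₗ[ℚ] ℚ := (Polynomial.leval 1).comp antiderivL

lemma derivative_antideriv (p : ℚ[X]) : derivative (antideriv p) = p := by
  unfold antideriv
  rw [Polynomial.sum_def, map_sum]
  conv_rhs => rw [← Polynomial.sum_C_mul_X_pow_eq p, Polynomial.sum_def]
  apply Finset.sum_congr rfl
  intro j _
  rw [derivative_C_mul, derivative_X_pow, Nat.add_sub_cancel, ← mul_assoc, ← map_mul]
  push_cast
  rw [div_mul_cancel₀]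
  positivity

lemma eval_zero_antideriv (p : ℚ[X]) : (antideriv p).eval 0 = 0 := by
  unfold antideriv
  rw [Polynomial.sum_def, Polynomial.eval_finset_sum]
  apply Finset.sum_eq_zero
  intro j _
  simp

lemma II_derivative (p : ℚ[X]) : II (derivative p) = p.eval 1 - p.eval 0 := by
  have hd : derivative (antideriv (derivative p) - p) = 0 := by
    rw [derivative_sub, derivative_antideriv, sub_self]
  have h := Polynomial.eq_C_of_derivative_eq_zero hd
  have h0 := congrArg (Polynomial.eval 0) h
  have h1 := congrArg (Polynomial.eval 1) h
  rw [eval_sub, eval_zero_antideriv, eval_C] at h0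
  rw [eval_sub, eval_C] at h1
  have : II (derivative p) = (antideriv (derivative p)).eval 1 := rfl
  rw [this]
  linarith

lemma II_C (a : ℚ) : II (Polynomial.C a) = a := by
  have : II (Polynomial.C a) = (antideriv (Polynomial.C a)).eval 1 := rfl
  rw [this]
  unfold antideriv
  rw [Polynomial.sum_C_index (by simp)]
  simp

lemma II_one : II 1 = 1 := by
  rw [← Polynomial.C_1, II_C]

lemma II_C_mul (a : ℚ) (p : ℚ[X]) : II (Polynomial.C a * p) = a * II p := by
  rw [← smul_eq_C_mul, map_smul, smul_eq_mul]

lemma II_bernoulli {k : ℕ} (hk : 1 ≤ k) : II (Polynomial.bernoulli k) = 0 := by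
  have hC : ((k : ℚ[X]) + 1) = Polynomial.C ((k : ℚ) + 1) := by rw [map_add, map_natCast, map_one]
  have h : Polynomial.bernoulli k
      = Polynomial.C (((k : ℚ) + 1)⁻¹) * derivative (Polynomial.bernoulli (k + 1)) := by
    rw [Polynomial.derivative_bernoulli_add_one, hC, ← mul_assoc, ← map_mul,
      inv_mul_cancel₀ (by positivity), map_one, one_mul]
  rw [h, II_C_mul, II_derivative, Polynomial.bernoulli_eval_one, Polynomial.bernoulli_eval_zero,
    ← bernoulli_eq_bernoulli'_of_ne_one (by omega), sub_self, mul_zero]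

lemma II_X_mul_bernoulli {m : ℕ} (hm : 1 ≤ m) :
    II (Polynomial.X * Polynomial.bernoulli m)
      = _root_.bernoulli (m + 1) * ((m : ℚ) + 1)⁻¹ := by
  have hC : ((m : ℚ[X]) + 1) = Polynomial.C ((m : ℚ) + 1) := by rw [map_add, map_natCast, map_one]
  have hder : derivative (Polynomial.X * Polynomial.bernoulli (m + 1))
      = Polynomial.bernoulli (m + 1)
        + Polynomial.X * (Polynomial.C ((m : ℚ) + 1) * Polynomial.bernoulli m) := by
    rw [derivative_mul, derivative_X, one_mul, Polynomial.derivative_bernoulli_add_one, hC]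
  have h : Polynomial.X * Polynomial.bernoulli m
      = Polynomial.C (((m : ℚ) + 1)⁻¹) *
          (derivative (Polynomial.X * Polynomial.bernoulli (m + 1))
            - Polynomial.bernoulli (m + 1)) := by
    rw [hder, add_sub_cancel_left]
    have : Polynomial.C (((m : ℚ) + 1)⁻¹) *
        (Polynomial.X * (Polynomial.C ((m : ℚ) + 1) * Polynomial.bernoulli m))
        = (Polynomial.C (((m : ℚ) + 1)⁻¹) * Polynomial.C ((m : ℚ) + 1)) *
            (Polynomial.X * Polynomial.bernoulli m) := by ring
    rw [this, ← map_mul, inv_mul_cancel₀ (by positivity), map_one, one_mul]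
  rw [h, II_C_mul, map_sub, II_derivative, II_bernoulli (by omega)]
  rw [eval_mul, eval_mul, eval_X, eval_X, one_mul, zero_mul,
    Polynomial.bernoulli_eval_one, ← bernoulli_eq_bernoulli'_of_ne_one (by omega)]
  ring

lemma bpoly_one : Polynomial.bernoulli 1 = Polynomial.X - Polynomial.C (1/2 : ℚ) := by
  apply Polynomial.funext; intro x
  simp [Polynomial.bernoulli_def, Finset.sum_range_succ]
  ring

lemma bpoly_two : Polynomial.bernoulli 2
    = Polynomial.X ^ 2 - Polynomial.X + Polynomial.C (1/6 : ℚ) := by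
  have h2 : _root_.bernoulli 2 = 1/6 := by
    rw [bernoulli_eq_bernoulli'_of_ne_one (by omega), bernoulli'_two]
  apply Polynomial.funext; intro x
  simp [Polynomial.bernoulli_def, Finset.sum_range_succ, h2]
  ring

lemma key (m : ℕ) :
    (∑ k ∈ Finset.range (m + 1),
        Polynomial.C (((m + 2).choose k : ℚ) * _root_.bernoulli (m + 2 - k))
          * Polynomial.bernoulli k)
      = Polynomial.C ((m : ℚ) + 2) *
          ((Polynomial.X - Polynomial.C ((1 : ℚ) / 2)) * Polynomial.bernoulli (m + 1)
            - Polynomial.bernoulli (m + 2)) := by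
  induction m with
  | zero =>
      have h2 : _root_.bernoulli 2 = 1/6 := by
        rw [bernoulli_eq_bernoulli'_of_ne_one (by omega), bernoulli'_two]
      apply Polynomial.funext; intro x
      simp [Finset.sum_range_one, bpoly_one, bpoly_two, h2]
      ring
  | succ m ih =>
      rw [show ((m + 1 : ℕ) : ℚ) + 2 = (m : ℚ) + 3 from by push_cast; ring]
      show (∑ k ∈ Finset.range (m + 2),
          Polynomial.C (((m + 3).choose k : ℚ) * _root_.bernoulli (m + 3 - k))
            * Polynomial.bernoulli k)
        = Polynomial.C ((m : ℚ) + 3) *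
            ((Polynomial.X - Polynomial.C ((1 : ℚ) / 2)) * Polynomial.bernoulli (m + 2)
              - Polynomial.bernoulli (m + 3))
      set L := ∑ k ∈ Finset.range (m + 2),
          Polynomial.C (((m + 3).choose k : ℚ) * _root_.bernoulli (m + 3 - k))
            * Polynomial.bernoulli k with hL
      set R := Polynomial.C ((m : ℚ) + 3) *
            ((Polynomial.X - Polynomial.C ((1 : ℚ) / 2)) * Polynomial.bernoulli (m + 2)
              - Polynomial.bernoulli (m + 3)) with hR
      have c1 : ((m + 1 : ℕ) : ℚ[X]) + 1 = Polynomial.C ((m : ℚ) + 2) := by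
        apply Polynomial.funext; intro x; simp; push_cast; ring
      have c2 : ((m + 2 : ℕ) : ℚ[X]) + 1 = Polynomial.C ((m : ℚ) + 3) := by
        apply Polynomial.funext; intro x; simp; push_cast; ring
      have hLd : derivative L
          = Polynomial.C ((m : ℚ) + 3) * (Polynomial.C ((m : ℚ) + 2) *
              ((Polynomial.X - Polynomial.C ((1 : ℚ) / 2)) * Polynomial.bernoulli (m + 1)
                - Polynomial.bernoulli (m + 2))) := by
        rw [hL, derivative_sum]
        simp only [derivative_C_mul, Polynomial.derivative_bernoulli]
        rw [Finset.sum_range_succ']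
        have hstep : ∀ i, Polynomial.C (((m + 3).choose (i + 1) : ℚ)
              * _root_.bernoulli (m + 3 - (i + 1)))
              * (((i + 1 : ℕ) : ℚ[X]) * Polynomial.bernoulli (i + 1 - 1))
            = Polynomial.C ((m : ℚ) + 3) *
                (Polynomial.C (((m + 2).choose i : ℚ) * _root_.bernoulli (m + 2 - i))
                  * Polynomial.bernoulli i) := by
          intro i
          have hn : (((m + 3).choose (i + 1) : ℚ) * _root_.bernoulli (m + 2 - i))
                * ((i + 1 : ℕ) : ℚ)
              = ((m : ℚ) + 3) * (((m + 2).choose i : ℚ) * _root_.bernoulli (m + 2 - i)) := by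
            have h := Nat.add_one_mul_choose_eq (m + 2) i
            have h' : ((m + 3 : ℕ) : ℚ) * ((m + 2).choose i : ℚ)
                = ((m + 3).choose (i + 1) : ℚ) * ((i + 1 : ℕ) : ℚ) := by
              exact_mod_cast congrArg (Nat.cast : ℕ → ℚ) h
            push_cast at h' ⊢
            linear_combination (-(_root_.bernoulli (m + 2 - i))) * h'
          have hsub : m + 3 - (i + 1) = m + 2 - i := by omega
          rw [hsub, Nat.add_sub_cancel,
            ← map_natCast (Polynomial.C : ℚ →+* ℚ[X]) (i + 1)]
          rw [show Polynomial.C (((m + 3).choose (i + 1) : ℚ) * _root_.bernoulli (m + 2 - i))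
                * (Polynomial.C ((i + 1 : ℕ) : ℚ) * Polynomial.bernoulli i)
              = Polynomial.C ((((m + 3).choose (i + 1) : ℚ) * _root_.bernoulli (m + 2 - i))
                  * ((i + 1 : ℕ) : ℚ)) * Polynomial.bernoulli i from by
            simp only [map_mul]; ring]
          rw [hn, map_mul, mul_assoc]
        simp only [hstep]
        rw [← Finset.mul_sum, ih]
        simp
      have hRd : derivative R
          = Polynomial.C ((m : ℚ) + 3) * (Polynomial.C ((m : ℚ) + 2) *
              ((Polynomial.X - Polynomial.C ((1 : ℚ) / 2)) * Polynomial.bernoulli (m + 1)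
                - Polynomial.bernoulli (m + 2))) := by
        rw [hR, derivative_C_mul, derivative_sub, derivative_mul, derivative_sub,
          derivative_X, derivative_C, sub_zero, one_mul,
          show Polynomial.bernoulli (m + 2) = Polynomial.bernoulli ((m + 1) + 1) from rfl,
          show Polynomial.bernoulli (m + 3) = Polynomial.bernoulli ((m + 2) + 1) from rfl,
          Polynomial.derivative_bernoulli_add_one, Polynomial.derivative_bernoulli_add_one,
          c1, c2]
        rw [show Polynomial.C ((m : ℚ) + 3) = Polynomial.C ((m : ℚ) + 2) + 1 from by
          rw [show ((m : ℚ) + 3) = ((m : ℚ) + 2) + 1 from by ring, map_add, map_one]]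
        ring
      have hIIL : II L = _root_.bernoulli (m + 3) := by
        rw [hL, map_sum, Finset.sum_range_succ']
        have h1 : ∀ i ∈ Finset.range (m + 1),
            II (Polynomial.C (((m + 3).choose (i + 1) : ℚ) * _root_.bernoulli (m + 3 - (i + 1)))
              * Polynomial.bernoulli (i + 1)) = 0 := by
          intro i _; rw [II_C_mul, II_bernoulli (by omega), mul_zero]
        rw [Finset.sum_congr rfl h1, Finset.sum_const_zero, zero_add,
          Polynomial.bernoulli_zero, mul_one, II_C]
        simp
      have hIIR : II R = _root_.bernoulli (m + 3) := by
        rw [hR, II_C_mul, sub_mul, map_sub, map_sub,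
          show Polynomial.bernoulli (m + 3) = Polynomial.bernoulli ((m + 2) + 1) from rfl,
          II_X_mul_bernoulli (by omega), II_C_mul,
          II_bernoulli (by omega : 1 ≤ m + 2), II_bernoulli (by omega : 1 ≤ (m + 2) + 1)]
        push_cast
        have h3 : (m : ℚ) + 3 ≠ 0 := by positivity
        field_simp
        ring
      have hder : derivative (L - R) = 0 := by rw [derivative_sub, hLd, hRd, sub_self]
      have hc := Polynomial.eq_C_of_derivative_eq_zero hder
      have h0 : II (L - R) = 0 := by rw [map_sub, hIIL, hIIR, sub_self]
      rw [hc, II_C] at h0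
      have : L - R = 0 := by rw [hc, h0, map_zero]
      exact sub_eq_zero.mp this

/-- He–Ricci: the Bernoulli polynomials satisfy the recurrence
`B_n(x) = (x - 1/2)·B_{n-1}(x) - (1/n)·∑_{k=0}^{n-2} C(n,k)·B_{n-k}·B_k(x)` for `n ≥ 2`,
where `B_{n-k}` is the `(n-k)`-th Bernoulli number. -/
theorem bernoulli_polynomial_recurrence (n : ℕ) (hn : 2 ≤ n) :
    Polynomial.bernoulli n
      = (Polynomial.X - Polynomial.C ((1 : ℚ) / 2)) * Polynomial.bernoulli (n - 1)
        - Polynomial.C ((n : ℚ))⁻¹ *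
            ∑ k ∈ Finset.range (n - 1),
              Polynomial.C ((n.choose k : ℚ) * _root_.bernoulli (n - k))
                * Polynomial.bernoulli k := by
  obtain ⟨m, rfl⟩ : ∃ m, n = m + 2 := ⟨n - 2, by omega⟩
  rw [show m + 2 - 1 = m + 1 from rfl, key m,
    show ((m + 2 : ℕ) : ℚ) = (m : ℚ) + 2 from by push_cast; ring,
    ← mul_assoc, ← map_mul, inv_mul_cancel₀ (by positivity : (m : ℚ) + 2 ≠ 0), map_one, one_mul]
  ring
end

section
/- Let N ≥ 1 be an integer and let F_N(t) ∈ ℚ⟦t⟧ be the unique formal power series with F_N(t)·(e^t − T_{N−1}(t)) = t^N/N!, where T_{N−1}(t) = ∑_{j=0}^{N−1} t^j/j! and e^t = ∑_{j≥0} t^j/j! in ℚ⟦t⟧. Then t · F_N′(t) = N·F_N(t) − t·F_N(t) − N·F_N(t)², where F_N′ denotes the formal derivative of F_N. -/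
open PowerSeries

/-- Lemma 1(i): for the exponential generating function `F = F_N(t)` of the hypergeometric
Bernoulli numbers, i.e. the unique power series with `F·(e^t - T_{N-1}(t)) = t^N/N!`,
one has `t·F' = N·F - t·F - N·F²`, where `F'` is the formal derivative. -/
theorem hypergeometric_bernoulli_egf_derivative
    (N : ℕ) (hN : 1 ≤ N) (F : PowerSeries ℚ)
    (hF : F * (PowerSeries.mk fun j => if N ≤ j then ((j.factorial : ℚ))⁻¹ else 0)
        = PowerSeries.mk fun j => if j = N then ((N.factorial : ℚ))⁻¹ else 0) :
    PowerSeries.X * (d⁄dX ℚ F)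
      = (N : ℚ) • F - PowerSeries.X * F - (N : ℚ) • (F ^ 2) := by
  obtain ⟨M, rfl⟩ : ∃ M, N = M + 1 := ⟨N - 1, by omega⟩
  set G : PowerSeries ℚ := PowerSeries.mk fun j => if M + 1 ≤ j then ((j.factorial : ℚ))⁻¹ else 0
    with hGdef
  set c : ℚ := (((M + 1).factorial : ℚ))⁻¹ with hc
  have hcne : c ≠ 0 := by
    rw [hc]
    exact inv_ne_zero (Nat.cast_ne_zero.mpr (M + 1).factorial_ne_zero)
  have hMne : (M.factorial : ℚ) ≠ 0 := Nat.cast_ne_zero.mpr M.factorial_ne_zero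
  -- the RHS of hF equals C c * X^(M+1)
  have hH : (PowerSeries.mk fun j => if j = M + 1 then (((M + 1).factorial : ℚ))⁻¹ else 0)
      = C c * X ^ (M + 1) := by
    ext n
    simp [coeff_X_pow, hc, mul_ite]
  rw [hH] at hF
  -- derivative of G
  have hGder : d⁄dX ℚ G = G + (C ((M : ℚ) + 1)) * ((C c) * X ^ M) := by
    ext n
    rw [coeff_derivative]
    simp only [hGdef, coeff_mk, map_add, add_mul, coeff_C_mul, coeff_X_pow, mul_ite, mul_one,
      mul_zero, one_mul]
    rcases lt_trichotomy n M with h | h | h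
    · simp [show ¬ M + 1 ≤ n + 1 by omega, show ¬ M + 1 ≤ n by omega, show ¬ n = M by omega]
    · simp only [show M + 1 ≤ n + 1 by omega, show ¬ M + 1 ≤ n by omega, if_pos h, if_true,
        if_false, zero_add]
      subst h
      rw [hc, Nat.factorial_succ]
      push_cast
      rw [mul_inv]
      have h1 : ((n : ℚ) + 1) ≠ 0 := by positivity
      have hnne : (n.factorial : ℚ) ≠ 0 := Nat.cast_ne_zero.mpr n.factorial_ne_zero
      field_simp
    · simp only [show M + 1 ≤ n + 1 by omega, show M + 1 ≤ n by omega,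
        show ¬ n = M by omega, if_true, if_false, add_zero]
      rw [Nat.factorial_succ]
      push_cast
      rw [mul_inv]
      have hnne : (n.factorial : ℚ) ≠ 0 := Nat.cast_ne_zero.mpr n.factorial_ne_zero
      have h1 : ((n : ℚ) + 1) ≠ 0 := by positivity
      field_simp
  -- derivative of C c * X^(M+1)
  have hHder : d⁄dX ℚ (C c * X ^ (M + 1) : PowerSeries ℚ)
      = (C ((M : ℚ) + 1)) * ((C c) * X ^ M) := by
    ext n
    rw [coeff_derivative]
    simp only [mul_assoc, map_add, add_mul, coeff_C_mul, coeff_X_pow, mul_ite, mul_one,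
      mul_zero, one_mul]
    rcases eq_or_ne n M with h | h
    · simp only [show n + 1 = M + 1 by omega, if_pos h, if_true]
      subst h
      ring
    · simp [show ¬ n + 1 = M + 1 by omega, h]
  -- differentiate hF
  have h1 : d⁄dX ℚ F * G + F * d⁄dX ℚ G = d⁄dX ℚ (C c * X ^ (M + 1) : PowerSeries ℚ) := by
    rw [← hF, Derivation.leibniz, smul_eq_mul, smul_eq_mul]
    ring
  rw [hGder, hHder] at h1
  -- cancel the nonzero factor C c * X^(M+1)
  have hne : (C c * X ^ (M + 1) : PowerSeries ℚ) ≠ 0 :=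
    mul_ne_zero (by simpa using hcne) (pow_ne_zero _ X_ne_zero)
  apply mul_left_cancel₀ hne
  rw [smul_eq_C_mul, smul_eq_C_mul]
  push_cast
  linear_combination (X * F) * h1 - (X * d⁄dX ℚ F + X * F) * hF
end

section
/- Let N ≥ 1 and r ≥ 1 be integers. In ℚ[x]⟦t⟧ let F_{r,N}(t,x) = F_N(t)^r · E(t), where F_N(t) ∈ ℚ⟦t⟧ ⊆ ℚ[x]⟦t⟧ is the unique power series with F_N(t)·(e^t − T_{N−1}(t)) = t^N/N!, and E(t) = ∑_{n≥0} x^n t^n/n!. Then t · ∂_t F_{r,N}(t,x) = rN·F_{r,N}(t,x) + (x − r)·t·F_{r,N}(t,x) − rN·F_{r+1,N}(t,x), where ∂_t denotes the formal derivative in t and F_{r+1,N}(t,x) = F_N(t)^{r+1}·E(t). -/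
open PowerSeries

private lemma smulC (q : ℚ) (g : PowerSeries (Polynomial ℚ)) :
    q • g = PowerSeries.C (R := Polynomial ℚ) (Polynomial.C q) * g := by
  ext n
  simp [PowerSeries.coeff_smul, Polynomial.smul_eq_C_mul]

private lemma derivative_map' (f : PowerSeries ℚ) :
    d⁄dX (Polynomial ℚ) (PowerSeries.map (Polynomial.C : ℚ →+* Polynomial ℚ) f)
      = PowerSeries.map (Polynomial.C : ℚ →+* Polynomial ℚ) (d⁄dX ℚ f) := by
  ext n
  simp [PowerSeries.coeff_derivative, PowerSeries.coeff_map]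


private lemma dmul (f g : PowerSeries (Polynomial ℚ)) :
    d⁄dX (Polynomial ℚ) (f * g)
      = f * d⁄dX (Polynomial ℚ) g + g * d⁄dX (Polynomial ℚ) f := by
  show derivativeFun (f * g) = f * derivativeFun g + g * derivativeFun f
  rw [derivativeFun_mul]; simp [smul_eq_mul]

private lemma dpow (f : PowerSeries (Polynomial ℚ)) (s : ℕ) :
    d⁄dX (Polynomial ℚ) (f ^ (s + 1))
      = ((s : PowerSeries (Polynomial ℚ)) + 1) * f ^ s * d⁄dX (Polynomial ℚ) f := by
  induction s with
  | zero => simp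
  | succ k ih =>
    rw [pow_succ, dmul, ih]
    push_cast
    ring

private lemma key_s12 (N : ℕ) (hN : 1 ≤ N) (F : PowerSeries ℚ)
    (hF : F * (PowerSeries.mk fun j => if N ≤ j then ((j.factorial : ℚ))⁻¹ else 0)
        = PowerSeries.mk fun j => if j = N then ((N.factorial : ℚ))⁻¹ else 0) :
    PowerSeries.X * d⁄dX ℚ F
      = PowerSeries.C (R := ℚ) (N : ℚ) * F - PowerSeries.X * F
        - PowerSeries.C (R := ℚ) (N : ℚ) * F ^ 2 := by
  set G : PowerSeries ℚ := PowerSeries.mk fun j => if N ≤ j then ((j.factorial : ℚ))⁻¹ else 0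
    with hG
  have hG0 : G ≠ 0 := by
    intro h
    have h2 : PowerSeries.coeff (R := ℚ) N G = 0 := by rw [h]; simp
    rw [hG] at h2
    simp [Nat.factorial_ne_zero] at h2
  have hXdG : PowerSeries.X * d⁄dX ℚ G
      = PowerSeries.X * G + PowerSeries.C (R := ℚ) (N : ℚ) * (F * G) := by
    rw [hF]
    ext n
    cases n with
    | zero =>
        simp [show ¬ (0 = N) by omega, show ¬ (N ≤ 0) by omega]
    | succ m =>
      rw [map_add, PowerSeries.coeff_succ_X_mul, PowerSeries.coeff_succ_X_mul,
        PowerSeries.coeff_derivative, PowerSeries.coeff_C_mul]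
      simp only [hG, PowerSeries.coeff_mk]
      rcases lt_trichotomy (m + 1) N with h | h | h
      · rw [if_neg (by omega), if_neg (by omega), if_neg (by omega)]; ring
      · subst h
        rw [if_pos (by omega), if_neg (by omega), if_pos rfl]
        push_cast
        ring
      · rw [if_pos (by omega), if_pos (by omega), if_neg (by omega)]
        rw [Nat.factorial_succ]
        push_cast
        rw [mul_inv]
        have : ((m : ℚ) + 1) ≠ 0 := by positivity
        field_simp
        ring
  have hXdRHS : PowerSeries.X * d⁄dX ℚ (F * G)
      = PowerSeries.C (R := ℚ) (N : ℚ) * (F * G) := by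
    rw [hF]
    ext n
    cases n with
    | zero => simp [show ¬ (0 = N) by omega]
    | succ m =>
      rw [PowerSeries.coeff_succ_X_mul, PowerSeries.coeff_derivative, PowerSeries.coeff_C_mul]
      simp only [PowerSeries.coeff_mk]
      by_cases h : m + 1 = N
      · subst h
        rw [if_pos rfl]
        push_cast
        ring
      · rw [if_neg h]; ring
  have hleib : d⁄dX ℚ (F * G) = F * d⁄dX ℚ G + G * d⁄dX ℚ F := by
    rw [Derivation.leibniz]; simp [smul_eq_mul]
  have h1 : PowerSeries.X * (F * d⁄dX ℚ G + G * d⁄dX ℚ F)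
      = PowerSeries.C (R := ℚ) (N : ℚ) * (F * G) := by
    rw [← hleib, hXdRHS]
  have main : (PowerSeries.X * d⁄dX ℚ F) * G
      = (PowerSeries.C (R := ℚ) (N : ℚ) * F - PowerSeries.X * F
          - PowerSeries.C (R := ℚ) (N : ℚ) * F ^ 2) * G := by
    linear_combination h1 - F * hXdG
  exact mul_right_cancel₀ hG0 main

/-- Lemma 1(ii): in `ℚ[x]⟦t⟧`, with `F_{r,N}(t,x) = F_N(t)^r · e^{xt}` (the exponential
generating function of the higher order hypergeometric Bernoulli polynomials, where
`F_N(t) ∈ ℚ⟦t⟧` is the unique power series with `F_N(t)·(e^t - T_{N-1}(t)) = t^N/N!`),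
one has `t·∂ₜF_{r,N}(t,x) = rN·F_{r,N}(t,x) + (x - r)·t·F_{r,N}(t,x) - rN·F_{r+1,N}(t,x)`. -/
theorem higher_order_hypergeometric_egf_derivative
    (N r : ℕ) (hN : 1 ≤ N) (hr : 1 ≤ r) (F : PowerSeries ℚ)
    (hF : F * (PowerSeries.mk fun j => if N ≤ j then ((j.factorial : ℚ))⁻¹ else 0)
        = PowerSeries.mk fun j => if j = N then ((N.factorial : ℚ))⁻¹ else 0) :
    PowerSeries.X *
        (d⁄dX (Polynomial ℚ)
          ((PowerSeries.map (Polynomial.C : ℚ →+* Polynomial ℚ) F) ^ r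
            * PowerSeries.mk (fun m => ((m.factorial : ℚ))⁻¹ • (Polynomial.X : Polynomial ℚ) ^ m)))
      = ((r : ℚ) * (N : ℚ)) •
            ((PowerSeries.map (Polynomial.C : ℚ →+* Polynomial ℚ) F) ^ r
              * PowerSeries.mk (fun m => ((m.factorial : ℚ))⁻¹ • (Polynomial.X : Polynomial ℚ) ^ m))
        + (PowerSeries.C (R := Polynomial ℚ) (Polynomial.X - Polynomial.C (r : ℚ)))
            * (PowerSeries.X *
                ((PowerSeries.map (Polynomial.C : ℚ →+* Polynomial ℚ) F) ^ r
                  * PowerSeries.mk (fun m => ((m.factorial : ℚ))⁻¹ • (Polynomial.X : Polynomial ℚ) ^ m)))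
        - ((r : ℚ) * (N : ℚ)) •
            ((PowerSeries.map (Polynomial.C : ℚ →+* Polynomial ℚ) F) ^ (r + 1)
              * PowerSeries.mk (fun m => ((m.factorial : ℚ))⁻¹ • (Polynomial.X : Polynomial ℚ) ^ m)) := by
  obtain ⟨s, rfl⟩ : ∃ s, r = s + 1 := ⟨r - 1, (Nat.succ_pred_eq_of_pos hr).symm⟩
  set A : PowerSeries (Polynomial ℚ) := PowerSeries.map (Polynomial.C : ℚ →+* Polynomial ℚ) F
    with hA
  set E : PowerSeries (Polynomial ℚ) :=
    PowerSeries.mk (fun m => ((m.factorial : ℚ))⁻¹ • (Polynomial.X : Polynomial ℚ) ^ m) with hE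
  have hXdE : PowerSeries.X * d⁄dX (Polynomial ℚ) E
      = PowerSeries.C (R := Polynomial ℚ) Polynomial.X * (PowerSeries.X * E) := by
    ext n
    cases n with
    | zero => simp
    | succ m =>
      rw [PowerSeries.coeff_succ_X_mul, PowerSeries.coeff_derivative, PowerSeries.coeff_C_mul,
        PowerSeries.coeff_succ_X_mul]
      simp only [hE, PowerSeries.coeff_mk]
      have hc : ((m : Polynomial ℚ) + 1) = Polynomial.C ((m : ℚ) + 1) := by
        simp
      have h1 : ((m : ℚ) + 1) ≠ 0 := by positivity
      have hs2 : ((m : ℚ) + 1) * (((m + 1).factorial : ℚ))⁻¹ = ((m.factorial : ℚ))⁻¹ := by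
        rw [Nat.factorial_succ]
        push_cast
        rw [mul_inv, ← mul_assoc, mul_inv_cancel₀ h1, one_mul]
      rw [smul_mul_assoc, hc, mul_comm _ (Polynomial.C _),
        ← Polynomial.smul_eq_C_mul, smul_smul, mul_smul_comm, ← pow_succ',
        mul_comm (((m + 1).factorial : ℚ))⁻¹ ((m : ℚ) + 1), hs2]
  have hXdA : PowerSeries.X * d⁄dX (Polynomial ℚ) A
      = PowerSeries.C (R := Polynomial ℚ) (Polynomial.C (N : ℚ)) * A - PowerSeries.X * A
        - PowerSeries.C (R := Polynomial ℚ) (Polynomial.C (N : ℚ)) * A ^ 2 := by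
    have h := congrArg (PowerSeries.map (Polynomial.C : ℚ →+* Polynomial ℚ)) (key_s12 N hN F hF)
    rw [map_mul, PowerSeries.map_X, map_sub, map_sub, map_mul, map_mul, map_mul,
      PowerSeries.map_X, map_pow, PowerSeries.map_C] at h
    rw [hA, derivative_map']
    exact h
  have hstep : PowerSeries.X * d⁄dX (Polynomial ℚ) (A ^ (s + 1) * E)
      = A ^ (s + 1) * (PowerSeries.X * d⁄dX (Polynomial ℚ) E)
        + ((s : PowerSeries (Polynomial ℚ)) + 1)
            * (A ^ s * E * (PowerSeries.X * d⁄dX (Polynomial ℚ) A)) := by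
    rw [dmul, dpow]
    ring
  rw [hstep, hXdE, hXdA, smulC, smulC]
  have hs : ((s : PowerSeries (Polynomial ℚ)) + 1)
      = PowerSeries.C (R := Polynomial ℚ) (Polynomial.C ((s : ℚ) + 1)) := by
    simp
  rw [hs]
  rw [map_sub, map_mul]
  push_cast
  simp only [map_mul]
  ring
end
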